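/- arXiv:0906.1126 — 8 statements merged into one kernel-verified Lean document; each statement's English description precedes it below -/
import Mathlib

section
/- For all integers m ≥ 12 and n ≥ 18, the chromatic number of the square of the toroidal grid T_{m,n} = C_m □ C_n satisfies χ(T_{m,n}²) ≤ 7. -/
open SimpleGraph

/-- The square of a simple graph `G`: distinct vertices are adjacent iff they are
adjacent in `G` or have a common neighbor in `G` (i.e. are at distance at most 2). -/
def SimpleGraph.square {V : Type*} (G : SimpleGraph V) : SimpleGraph V where
  Adj u v := u ≠ v ∧ (G.Adj u v ∨ ∃ w, G.Adj u w ∧ G.Adj w v)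
  symm := ⟨fun u v => by
    rintro ⟨h, h' | ⟨w, hw1, hw2⟩⟩
    exacts [⟨h.symm, Or.inl h'.symm⟩, ⟨h.symm, Or.inr ⟨w, hw2.symm, hw1.symm⟩⟩]⟩
  loopless := ⟨fun v => by simp⟩

/-- The toroidal grid `T_{m,n} = C_m □ C_n`. -/
def toroidalGrid (m n : ℕ) : SimpleGraph (Fin m × Fin n) :=
  SimpleGraph.cycleGraph m □ SimpleGraph.cycleGraph n

/-- The independence number of a graph: the maximum size of an independent set,
i.e. the clique number of the complement graph. -/
noncomputable def SimpleGraph.indepNumCliqueCompl {V : Type*} (G : SimpleGraph V) : ℕ :=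
  Gᶜ.cliqueNum

def tbl : List (List ℕ) := [[1,0,5,6,3,1,0,2,1,0,4,1,0,5,2,0,6,3],[2,3,1,4,0,2,5,6,4,3,6,2,3,4,1,3,5,0],[4,5,0,2,6,4,3,1,2,5,1,4,5,6,0,4,1,6],[0,2,6,1,5,0,2,5,0,4,3,0,2,1,5,2,3,5],[6,4,3,0,2,6,4,3,6,2,5,6,4,3,6,1,4,2],[1,0,5,6,3,1,0,2,5,0,4,1,0,5,2,0,6,3],[2,3,1,4,0,2,5,6,4,1,6,2,3,6,4,3,1,0],[4,6,2,3,5,4,1,0,3,2,5,4,1,0,5,6,2,5],[3,0,4,6,1,3,6,2,5,6,1,3,6,2,3,4,0,1],[2,5,1,0,4,2,5,1,4,3,0,2,5,1,0,5,3,4],[6,4,3,2,5,6,4,3,6,2,5,6,4,3,6,1,2,5],[3,0,5,6,1,3,0,2,5,1,4,3,0,5,2,3,0,1],[2,6,1,3,4,2,5,1,4,3,0,2,6,4,1,6,5,4],[1,5,4,0,6,1,3,6,0,2,6,1,5,2,3,4,2,6],[4,3,2,1,5,4,0,5,3,1,5,4,3,0,5,1,0,5],[2,1,0,6,3,2,6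,4,2,6,3,2,1,6,4,2,6,3],[0,5,3,2,4,0,5,1,0,4,1,0,5,2,0,5,1,4],[6,2,4,0,5,6,4,3,6,2,5,6,4,3,6,4,2,5]]

def chi (x y : Fin 18) : Fin 7 :=
  ⟨((tbl.getD x.val []).getD y.val 0) % 7, Nat.mod_lt _ (by norm_num)⟩

/-- step relation on states of the band automaton -/
def stepP (a b : ℕ) : Prop :=
  if a = 4 ∨ a = 10 ∨ a = 17 then b = 0 ∨ b = 5 ∨ b = 11 else b = a + 1

instance (a b : ℕ) : Decidable (stepP a b) := by unfold stepP; infer_instance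

def k5 (r : ℕ) : ℕ := if r = 3 then 3 else if r = 4 then 2 else if r = 5 then 1 else 0
def k7 (r : ℕ) : ℕ := if r = 1 then 1 else if r = 2 then 2 else 0

def vals (m i : ℕ) : ℕ :=
  if i < 5 * k5 (m % 6) then i % 5
  else if i < 5 * k5 (m % 6) + 7 * k7 (m % 6) then 11 + (i - 5 * k5 (m % 6)) % 7
  else 5 + (i - (5 * k5 (m % 6) + 7 * k7 (m % 6))) % 6

lemma vals_lt (m i : ℕ) : vals m i < 18 := by
  unfold vals; split_ifs <;> omega

def stF (m i : ℕ) : Fin 18 := ⟨vals m i, vals_lt m i⟩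

set_option maxHeartbeats 2000000 in
lemma D1 : ∀ x x' : Fin 18, stepP x.val x'.val → ∀ y, chi x y ≠ chi x' y := by decide

set_option maxHeartbeats 2000000 in
lemma D2 : ∀ x x' : Fin 18, stepP x.val x'.val → ∀ x'', stepP x'.val x''.val →
    ∀ y, chi x y ≠ chi x'' y := by decide

set_option maxHeartbeats 2000000 in
lemma D3 : ∀ y y' : Fin 18, stepP y.val y'.val → ∀ x, chi x y ≠ chi x y' := by decide

set_option maxHeartbeats 2000000 in
lemma D4 : ∀ y y' : Fin 18, stepP y.val y'.val → ∀ y'', stepP y'.val y''.val →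
    ∀ x, chi x y ≠ chi x y'' := by decide

set_option maxHeartbeats 2000000 in
lemma D5 : ∀ x x' : Fin 18, stepP x.val x'.val → ∀ y y', stepP y.val y'.val →
    chi x y ≠ chi x' y' := by decide

set_option maxHeartbeats 2000000 in
lemma D6 : ∀ x x' : Fin 18, stepP x.val x'.val → ∀ y y', stepP y.val y'.val →
    chi x y' ≠ chi x' y := by decide

lemma vals_step (m : ℕ) (hm : 12 ≤ m) (i : ℕ) (hi : i < m) :
    stepP (vals m i) (vals m ((i + 1) % m)) := by
  have h6 : m % 6 = 0 ∨ m % 6 = 1 ∨ m % 6 = 2 ∨ m % 6 = 3 ∨ m % 6 = 4 ∨ m % 6 = 5 := by omega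
  have hwrap : (i + 1) % m = i + 1 ∨ (i + 1 = m ∧ (i + 1) % m = 0) := by
    rcases Nat.lt_or_ge (i + 1) m with h | h
    · exact Or.inl (Nat.mod_eq_of_lt h)
    · have : i + 1 = m := by omega
      exact Or.inr ⟨this, by rw [this, Nat.mod_self]⟩
  rcases hwrap with hw | ⟨hw, hw0⟩
  · rcases h6 with hr | hr | hr | hr | hr | hr <;>
      simp only [hw, vals, hr, k5, k7] <;> norm_num <;>
      · unfold stepP; split_ifs <;> omega
  · rcases h6 with hr | hr | hr | hr | hr | hr <;>
      simp only [hw0, vals, hr, k5, k7] <;> norm_num <;>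
      · unfold stepP; split_ifs <;> omega

lemma fin_val_add_one {k : ℕ} [NeZero k] (hk : 2 ≤ k) (a : Fin k) :
    (a + 1).val = (a.val + 1) % k := by
  have h1 : (a + 1).val = (a.val + (1 : Fin k).val) % k := by rw [Fin.add_def]
  rw [h1, Fin.val_one', Nat.mod_eq_of_lt (by omega : 1 < k)]

lemma cyc_adj {k : ℕ} [NeZero k] (hk : 2 ≤ k) {u v : Fin k}
    (h : (SimpleGraph.cycleGraph k).Adj u v) : v = u + 1 ∨ u = v + 1 := by
  rw [SimpleGraph.cycleGraph_adj'] at h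
  have hone : (1 : Fin k).val = 1 := by
    rw [Fin.val_one', Nat.mod_eq_of_lt (by omega : 1 < k)]
  rcases h with h | h
  · exact Or.inr ((sub_eq_iff_eq_add.mp (Fin.ext (by rw [h, hone]))).trans (add_comm 1 v))
  · exact Or.inl ((sub_eq_iff_eq_add.mp (Fin.ext (by rw [h, hone]))).trans (add_comm 1 u))

theorem stmt1 (m n : ℕ) (hm : 12 ≤ m) (hn : 18 ≤ n) :
    (toroidalGrid m n).square.chromaticNumber ≤ 7 := by
  haveI : NeZero m := ⟨by omega⟩
  haveI : NeZero n := ⟨by omega⟩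
  have hm2 : 2 ≤ m := by omega
  have hn2 : 2 ≤ n := by omega
  have hn12 : 12 ≤ n := by omega
  -- step facts
  have hsm : ∀ a : Fin m, stepP (stF m a.val).val (stF m (a + 1).val).val := by
    intro a
    have := fin_val_add_one hm2 a
    rw [show (stF m (a+1).val).val = vals m (a+1).val from rfl, this]
    exact vals_step m hm a.val a.isLt
  have hsn : ∀ a : Fin n, stepP (stF n a.val).val (stF n (a + 1).val).val := by
    intro a
    have := fin_val_add_one hn2 a
    rw [show (stF n (a+1).val).val = vals n (a+1).val from rfl, this]
    exact vals_step n hn12 a.val a.isLt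
  have key : ∀ u v : Fin m × Fin n, (toroidalGrid m n).square.Adj u v →
      chi (stF m u.1.val) (stF n u.2.val) ≠ chi (stF m v.1.val) (stF n v.2.val) := by
    rintro u v ⟨hne, hadj | ⟨w, huw, hwv⟩⟩
    · rw [toroidalGrid, SimpleGraph.boxProd_adj] at hadj
      rcases hadj with ⟨h1, h2⟩ | ⟨h1, h2⟩
      · rcases cyc_adj hm2 h1 with h | h
        · rw [h2, h]; exact D1 _ _ (hsm u.1) _
        · rw [h2, h]; exact (D1 _ _ (hsm v.1) _).symm
      · rcases cyc_adj hn2 h1 with h | h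
        · rw [h2, h]; exact D3 _ _ (hsn u.2) _
        · rw [h2, h]; exact (D3 _ _ (hsn v.2) _).symm
    · rw [toroidalGrid, SimpleGraph.boxProd_adj] at huw hwv
      rcases huw with ⟨h1, e1⟩ | ⟨h1, e1⟩ <;> rcases hwv with ⟨h2, e2⟩ | ⟨h2, e2⟩
      · -- both first coordinate
        have e : u.2 = v.2 := e1.trans e2
        rcases cyc_adj hm2 h1 with ha | ha <;> rcases cyc_adj hm2 h2 with hb | hb
        · rw [e, show v.1 = u.1 + 1 + 1 by rw [hb, ha]]
          exact D2 _ _ (hsm u.1) _ (hsm (u.1 + 1)) _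
        · exact absurd (Prod.ext (by rw [← add_left_inj 1, ← ha, ← hb]) e) hne
        · exact absurd (Prod.ext (by rw [ha, hb]) e) hne
        · rw [e, show u.1 = v.1 + 1 + 1 by rw [ha, hb]]
          exact (D2 _ _ (hsm v.1) _ (hsm (v.1 + 1)) _).symm
      · -- first then second : diagonal
        rcases cyc_adj hm2 h1 with ha | ha <;> rcases cyc_adj hn2 h2 with hb | hb
        · rw [show v.1 = u.1 + 1 by rw [← e2, ha], show v.2 = u.2 + 1 by rw [hb, ← e1]]
          exact D5 _ _ (hsm u.1) _ _ (hsn u.2)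
        · rw [show v.1 = u.1 + 1 by rw [← e2, ha], show u.2 = v.2 + 1 by rw [e1, hb]]
          exact D6 _ _ (hsm u.1) _ _ (hsn v.2)
        · rw [show u.1 = v.1 + 1 by rw [ha, e2], show v.2 = u.2 + 1 by rw [hb, ← e1]]
          exact (D6 _ _ (hsm v.1) _ _ (hsn u.2)).symm
        · rw [show u.1 = v.1 + 1 by rw [ha, e2], show u.2 = v.2 + 1 by rw [e1, hb]]
          exact (D5 _ _ (hsm v.1) _ _ (hsn v.2)).symm
      · -- second then first : diagonal
        rcases cyc_adj hn2 h1 with ha | ha <;> rcases cyc_adj hm2 h2 with hb | hb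
        · rw [show v.1 = u.1 + 1 by rw [hb, ← e1], show v.2 = u.2 + 1 by rw [← e2, ha]]
          exact D5 _ _ (hsm u.1) _ _ (hsn u.2)
        · rw [show u.1 = v.1 + 1 by rw [e1, hb], show v.2 = u.2 + 1 by rw [← e2, ha]]
          exact (D6 _ _ (hsm v.1) _ _ (hsn u.2)).symm
        · rw [show v.1 = u.1 + 1 by rw [hb, ← e1], show u.2 = v.2 + 1 by rw [ha, e2]]
          exact D6 _ _ (hsm u.1) _ _ (hsn v.2)
        · rw [show u.1 = v.1 + 1 by rw [e1, hb], show u.2 = v.2 + 1 by rw [ha, e2]]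
          exact (D5 _ _ (hsm v.1) _ _ (hsn v.2)).symm
      · -- both second coordinate
        have e : u.1 = v.1 := e1.trans e2
        rcases cyc_adj hn2 h1 with ha | ha <;> rcases cyc_adj hn2 h2 with hb | hb
        · rw [e, show v.2 = u.2 + 1 + 1 by rw [hb, ha]]
          exact D4 _ _ (hsn u.2) _ (hsn (u.2 + 1)) _
        · exact absurd (Prod.ext e (by rw [← add_left_inj 1, ← ha, ← hb])) hne
        · exact absurd (Prod.ext e (by rw [ha, hb])) hne
        · rw [e, show u.2 = v.2 + 1 + 1 by rw [ha, hb]]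
          exact (D4 _ _ (hsn v.2) _ (hsn (v.2 + 1)) _).symm
  have hcol : (toroidalGrid m n).square.Colorable 7 :=
    ⟨SimpleGraph.Coloring.mk (fun v => chi (stF m v.1.val) (stF n v.2.val))
      (fun {u v} h => key u v h)⟩
  exact_mod_cast hcol.chromaticNumber_le
end

section
/- For every integer n ≥ 3, the chromatic number of the square of T_{3,n} = C_3 □ C_n equals: 6 if n is even; 7 if n is odd and n ≥ 7; 8 if n = 5; and 9 if n = 3. -/
open SimpleGraph

/-- The independence number of a graph: the maximum size of an independent set,
i.e. the clique number of the complement graph. -/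
noncomputable def SimpleGraph.indepNum' {V : Type*} (G : SimpleGraph V) : ℕ :=
  Gᶜ.cliqueNum

lemma two_mod {N x : ℕ} (h : x < 2 * N) : (x % N = x ∧ x < N) ∨ x % N + N = x := by
  rcases Nat.lt_or_ge x N with h' | h'
  · exact Or.inl ⟨Nat.mod_eq_of_lt h', h'⟩
  · right
    rw [Nat.mod_eq_sub_mod h', Nat.mod_eq_of_lt (by omega)]
    omega

lemma cyc_adj_val {n : ℕ} (hn : 3 ≤ n) {a b : Fin n} (h : (cycleGraph n).Adj a b) :
    b.val = (a.val + 1) % n ∨ a.val = (b.val + 1) % n := by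
  rw [cycleGraph_adj'] at h
  have ha := a.isLt; have hb := b.isLt
  have h1 := two_mod (N := n) (x := a.val + 1) (by omega)
  have h2 := two_mod (N := n) (x := b.val + 1) (by omega)
  rcases h with h | h
  · rw [Fin.sub_def] at h
    have h3 := two_mod (N := n) (x := n - b.val + a.val) (by omega)
    simp only at h
    omega
  · rw [Fin.sub_def] at h
    have h3 := two_mod (N := n) (x := n - a.val + b.val) (by omega)
    simp only at h
    omega

lemma cyc_adj_of {n : ℕ} (hn : 3 ≤ n) {a b : Fin n} (h : b.val = (a.val + 1) % n) :
    (cycleGraph n).Adj a b := by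
  rw [cycleGraph_adj']
  rw [Fin.sub_def, Fin.sub_def]
  simp only
  have ha := a.isLt; have hb := b.isLt
  have h1 := two_mod (N := n) (x := a.val + 1) (by omega)
  have h2 := two_mod (N := n) (x := n - a.val + b.val) (by omega)
  have h3 := two_mod (N := n) (x := n - b.val + a.val) (by omega)
  omega

lemma c3_adj {a b : Fin 3} (h : a ≠ b) : (cycleGraph 3).Adj a b := by
  revert h; revert a b; decide

lemma sq_adj_same_col {n : ℕ} (hn : 3 ≤ n) {i i' : Fin 3} {j : Fin n} (h : i ≠ i') :
    (toroidalGrid 3 n).square.Adj (i, j) (i', j) :=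
  ⟨by simp [Prod.ext_iff, h], Or.inl (SimpleGraph.boxProd_adj.mpr (Or.inl ⟨c3_adj h, rfl⟩))⟩

lemma sq_adj_next {n : ℕ} (hn : 3 ≤ n) {i i' : Fin 3} {j j' : Fin n}
    (h : j'.val = (j.val + 1) % n) :
    (toroidalGrid 3 n).square.Adj (i, j) (i', j') := by
  have hj := j.isLt
  have h1 := two_mod (N := n) (x := j.val + 1) (by omega)
  have hne : j ≠ j' := by
    intro e; rw [← e] at h; omega
  have hc : (cycleGraph n).Adj j j' := cyc_adj_of hn h
  by_cases hi : i = i'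
  · subst hi
    exact ⟨by simp [Prod.ext_iff, hne], Or.inl (SimpleGraph.boxProd_adj.mpr (Or.inr ⟨hc, rfl⟩))⟩
  · refine ⟨by simp [Prod.ext_iff, hne], Or.inr ⟨(i', j), ?_, ?_⟩⟩
    · exact SimpleGraph.boxProd_adj.mpr (Or.inl ⟨c3_adj hi, rfl⟩)
    · exact SimpleGraph.boxProd_adj.mpr (Or.inr ⟨hc, rfl⟩)

lemma indep_bound {n : ℕ} (hn : 3 ≤ n) (S : Finset (Fin 3 × Fin n))
    (hS : ∀ u ∈ S, ∀ v ∈ S, u ≠ v → ¬ (toroidalGrid 3 n).square.Adj u v) :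
    S.card ≤ n / 2 := by
  classical
  set T := S.image Prod.snd with hT
  have hinj : T.card = S.card := by
    apply Finset.card_image_of_injOn
    intro u hu v hv huv
    by_contra hne
    obtain ⟨i, j⟩ := u; obtain ⟨i', j'⟩ := v
    have hj : j = j' := huv
    subst hj
    exact hS _ hu _ hv hne (sq_adj_same_col hn (fun h => hne (by simp [h])))
  let succ : Fin n → Fin n := fun j => ⟨(j.val + 1) % n, Nat.mod_lt _ (by omega)⟩
  have hsucc_inj : Function.Injective succ := by
    intro a b e
    have ha := a.isLt; have hb := b.isLt
    have h1 := two_mod (N := n) (x := a.val + 1) (by omega)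
    have h2 := two_mod (N := n) (x := b.val + 1) (by omega)
    have : (a.val + 1) % n = (b.val + 1) % n := congrArg Fin.val e
    exact Fin.ext (by omega)
  have hTnext : ∀ j ∈ T, succ j ∉ T := by
    intro j hj hj1
    obtain ⟨u, hu, hu2⟩ := Finset.mem_image.mp hj
    obtain ⟨v, hv, hv2⟩ := Finset.mem_image.mp hj1
    have hval : v.2.val = (u.2.val + 1) % n := by rw [hv2, hu2]
    have hne : u ≠ v := by
      intro e
      rw [e] at hval
      have := v.2.isLt
      have h1 := two_mod (N := n) (x := v.2.val + 1) (by omega)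
      omega
    obtain ⟨i, j0⟩ := u; obtain ⟨i', j0'⟩ := v
    exact hS _ hu _ hv hne (sq_adj_next hn hval)
  have hdisj : Disjoint T (T.image succ) := by
    rw [Finset.disjoint_right]
    intro j hj' hj
    obtain ⟨j0, hj0, hj0e⟩ := Finset.mem_image.mp hj'
    exact hTnext j0 hj0 (hj0e ▸ hj)
  have hcard_img : (T.image succ).card = T.card := Finset.card_image_of_injective _ hsucc_inj
  have hunion : (T ∪ T.image succ).card = T.card + (T.image succ).card :=
    Finset.card_union_of_disjoint hdisj
  have hle : (T ∪ T.image succ).card ≤ n := by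
    have := Finset.card_le_univ (T ∪ T.image succ)
    simpa using this
  omega

lemma count_bound {n : ℕ} (hn : 3 ≤ n) {k : ℕ} (h : (toroidalGrid 3 n).square.Colorable k) :
    3 * n ≤ k * (n / 2) := by
  classical
  obtain ⟨C⟩ := h
  have hcard : (Finset.univ : Finset (Fin 3 × Fin n)).card = 3 * n := by simp
  have hsum := Finset.card_eq_sum_card_fiberwise
    (f := fun v : Fin 3 × Fin n => C v) (s := Finset.univ) (t := Finset.univ)
    (fun x _ => Finset.mem_univ _)
  have hfib : ∀ c : Fin k, (Finset.univ.filter (fun v => C v = c)).card ≤ n / 2 := by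
    intro c
    apply indep_bound hn
    intro u hu v hv hne hadj
    have hval := C.valid hadj
    simp only [Finset.mem_filter] at hu hv
    exact hval (hu.2.trans hv.2.symm)
  calc 3 * n = ∑ c : Fin k, (Finset.univ.filter (fun v : Fin 3 × Fin n => C v = c)).card := by
        rw [← hcard, hsum]
    _ ≤ ∑ _c : Fin k, (n / 2) := Finset.sum_le_sum (fun c _ => hfib c)
    _ = k * (n / 2) := by simp [Finset.sum_const, mul_comm]

lemma colorable_of_g {n : ℕ} (hn : 3 ≤ n) {k : ℕ} (g : ℕ → ℕ → ℕ)
    (hb : ∀ i j, i < 3 → j < n → g i j < k)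
    (h1 : ∀ i i' j, i < 3 → i' < 3 → j < n → i ≠ i' → g i j ≠ g i' j)
    (h2 : ∀ i i' j, i < 3 → i' < 3 → j < n → g i j ≠ g i' ((j + 1) % n))
    (h3 : ∀ i j, i < 3 → j < n → g i j ≠ g i ((j + 2) % n)) :
    (toroidalGrid 3 n).square.Colorable k := by
  refine ⟨Coloring.mk (fun v => ⟨g v.1.val v.2.val, hb _ _ v.1.isLt v.2.isLt⟩) ?_⟩
  rintro ⟨i, j⟩ ⟨i', j'⟩ ⟨hne, hadj⟩ heq
  simp only [Fin.mk.injEq] at heq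
  have hi := i.isLt; have hi' := i'.isLt; have hj := j.isLt; have hj' := j'.isLt
  have hcase : (j = j' ∧ i ≠ i') ∨ (j'.val = (j.val + 1) % n ∨ j.val = (j'.val + 1) % n)
      ∨ (i = i' ∧ (j'.val = (j.val + 2) % n ∨ j.val = (j'.val + 2) % n)) := by
    rcases hadj with h | ⟨⟨a, b⟩, hw1, hw2⟩
    · rcases SimpleGraph.boxProd_adj.mp h with ⟨h', he⟩ | ⟨h', he⟩
      · exact Or.inl ⟨he, h'.ne⟩
      · exact Or.inr (Or.inl (cyc_adj_val hn h'))
    · rcases SimpleGraph.boxProd_adj.mp hw1 with ⟨ha1, hb1⟩ | ⟨hb1, ha1⟩ <;>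
        rcases SimpleGraph.boxProd_adj.mp hw2 with ⟨ha2, hb2⟩ | ⟨hb2, ha2⟩
      · -- row, row : same column
        refine Or.inl ⟨hb1.trans hb2, fun e => hne ?_⟩
        simp only at hb1 hb2 e
        rw [e, hb1.trans hb2]
      · -- row, col : adjacent columns
        simp only at ha1 hb1 ha2 hb2
        rw [← hb1] at hb2
        exact Or.inr (Or.inl (cyc_adj_val hn hb2))
      · -- col, row : adjacent columns
        simp only at ha1 hb1 ha2 hb2
        rw [hb2] at hb1
        exact Or.inr (Or.inl (cyc_adj_val hn hb1))
      · -- col, col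
        simp only at ha1 hb1 ha2 hb2
        have hii : i = i' := ha1.trans ha2
        refine Or.inr (Or.inr ⟨hii, ?_⟩)
        have hx := cyc_adj_val hn hb1
        have hy := cyc_adj_val hn hb2
        have hjj : j.val ≠ j'.val := by
          intro e
          exact hne (by rw [hii, Fin.ext e])
        have hbb := b.isLt
        have m1 := two_mod (N := n) (x := j.val + 1) (by omega)
        have m2 := two_mod (N := n) (x := j'.val + 1) (by omega)
        have m3 := two_mod (N := n) (x := b.val + 1) (by omega)
        have m4 := two_mod (N := n) (x := j.val + 2) (by omega)
        have m5 := two_mod (N := n) (x := j'.val + 2) (by omega)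
        omega
  rcases hcase with ⟨he, hii⟩ | hcs | ⟨he, hcs⟩
  · exact h1 i.val i'.val j.val hi hi' hj (fun e => hii (Fin.ext e)) (by rw [← he] at heq; exact heq)
  · rcases hcs with h' | h'
    · rw [h'] at heq
      exact h2 i.val i'.val j.val hi hi' hj heq
    · rw [h'] at heq
      exact h2 i'.val i.val j'.val hi' hi hj' heq.symm
  · rw [← he] at heq
    rcases hcs with h' | h'
    · rw [h'] at heq
      exact h3 i.val j.val hi hj heq
    · rw [h'] at heq
      exact h3 i.val j'.val hi hj' heq.symm

def eFun (m k : ℕ) : ℕ := if k = m - 1 then 2 else k % 2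

lemma eFun_lt (m k : ℕ) : eFun m k < 3 := by
  simp only [eFun]; split_ifs <;> omega

lemma eFun_ne {m k k' : ℕ} (hm : 2 ≤ m) (hk : k < m)
    (h : k' = k + 1 ∨ (k = m - 1 ∧ k' = 0)) : eFun m k ≠ eFun m k' := by
  simp only [eFun]; split_ifs <;> omega

def g6 (n i j : ℕ) : ℕ := 3 * (j % 2) + (i + eFun (n / 2) (j / 2)) % 3

lemma g6_colorable {n : ℕ} (hn : 3 ≤ n) (hev : n % 2 = 0) :
    (toroidalGrid 3 n).square.Colorable 6 := by
  apply colorable_of_g hn (g6 n)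
  · intro i j hi hj
    simp only [g6]; omega
  · intro i i' j hi hi' hj hii
    simp only [g6]
    have e1 := eFun_lt (n / 2) (j / 2)
    omega
  · intro i i' j hi hi' hj
    simp only [g6]
    have m1 := two_mod (N := n) (x := j + 1) (by omega)
    omega
  · intro i j hi hj
    simp only [g6]
    have m1 := two_mod (N := n) (x := j + 2) (by omega)
    have e1 := eFun_lt (n / 2) (j / 2)
    have e2 := eFun_lt (n / 2) ((j + 2) % n / 2)
    have hne : eFun (n / 2) (j / 2) ≠ eFun (n / 2) ((j + 2) % n / 2) := by
      apply eFun_ne (by omega) (by omega)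
      omega
    omega

def rFun (n j : ℕ) : ℕ := if (n - 1 - j) % 4 ≤ 1 then 2 else 0

lemma rFun_cases (n j : ℕ) : rFun n j = 0 ∨ rFun n j = 2 := by
  simp only [rFun]; split_ifs <;> omega

lemma rFun_step {n j : ℕ} (h : j + 2 < n) : rFun n j ≠ rFun n (j + 2) := by
  simp only [rFun]; split_ifs <;> omega

def g7 (n i j : ℕ) : ℕ :=
  if j < 7 then (3 * j + i) % 7 else (if j % 2 = 1 then 0 else 3) + (i + rFun n j) % 3

lemma g7_colorable {n : ℕ} (hn : 7 ≤ n) (hodd : n % 2 = 1) :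
    (toroidalGrid 3 n).square.Colorable 7 := by
  apply colorable_of_g (by omega) (g7 n)
  · intro i j hi hj
    simp only [g7]; split_ifs <;> omega
  · intro i i' j hi hi' hj hii
    simp only [g7]
    split_ifs <;> omega
  · intro i i' j hi hi' hj
    rcases Nat.lt_or_ge (j + 1) n with hlt | hge
    · rw [Nat.mod_eq_of_lt hlt]
      have ra := rFun_cases n j
      have rb := rFun_cases n (j + 1)
      simp only [g7]
      split_ifs <;> omega
    · have hj1 : j = n - 1 := by omega
      have hA : (j + 1) % n = 0 := by
        rw [hj1, Nat.sub_add_cancel (by omega), Nat.mod_self]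
      rw [hA]
      have ra := rFun_cases n j
      rcases (by omega : (n = 7 ∧ j = 6) ∨ 9 ≤ n) with ⟨hn7, hj6⟩ | hbig
      · subst hj6
        simp only [g7]
        split_ifs <;> omega
      · simp only [g7]
        split_ifs <;> omega
  · intro i j hi hj
    rcases Nat.lt_or_ge (j + 2) n with hlt | hge
    · rw [Nat.mod_eq_of_lt hlt]
      have ra := rFun_cases n j
      have rb := rFun_cases n (j + 2)
      have hst := rFun_step hlt
      simp only [g7]
      split_ifs <;> omega
    · have m1 := two_mod (N := n) (x := j + 2) (by omega)
      rcases (by omega : j = n - 2 ∨ j = n - 1) with h | h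
      · have hA : (j + 2) % n = 0 := by omega
        have hr : rFun n j = 2 := by
          simp only [rFun, if_pos (show (n - 1 - j) % 4 ≤ 1 by omega)]
        rw [hA]
        simp only [g7]
        split_ifs <;> omega
      · have hA : (j + 2) % n = 1 := by omega
        have hr : rFun n j = 2 := by
          simp only [rFun, if_pos (show (n - 1 - j) % 4 ≤ 1 by omega)]
        rw [hA]
        simp only [g7]
        split_ifs <;> omega

lemma g5_colorable : (toroidalGrid 3 5).square.Colorable 8 := by
  apply colorable_of_g (by norm_num) (fun i j => (i + 3 * j) % 8)
  · intro i j hi hj; omega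
  · intro i i' j hi hi' hj hii; omega
  · intro i i' j hi hi' hj; interval_cases j <;> omega
  · intro i j hi hj; interval_cases j <;> omega

lemma g3_colorable : (toroidalGrid 3 3).square.Colorable 9 := by
  apply colorable_of_g (by norm_num) (fun i j => i + 3 * j)
  · intro i j hi hj; omega
  · intro i i' j hi hi' hj hii; omega
  · intro i i' j hi hi' hj; omega
  · intro i j hi hj; omega

lemma lower_bound {n : ℕ} (hn : 3 ≤ n) {t : ℕ}
    (h : ∀ m : ℕ, (toroidalGrid 3 n).square.Colorable m → t ≤ m) :
    (t : ℕ∞) ≤ (toroidalGrid 3 n).square.chromaticNumber := by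
  rw [SimpleGraph.chromaticNumber_eq_biInf]
  refine le_iInf₂ fun m hm => ?_
  exact_mod_cast h m hm

theorem stmt2 (n : ℕ) (hn : 3 ≤ n) :
    (toroidalGrid 3 n).square.chromaticNumber =
      if Even n then 6 else if n = 3 then 9 else if n = 5 then 8 else 7 := by
  by_cases hev : Even n
  · rw [if_pos hev]
    have he : n % 2 = 0 := Nat.even_iff.mp hev
    apply le_antisymm
    · exact_mod_cast (g6_colorable hn he).chromaticNumber_le
    · have := lower_bound hn (t := 6) (fun m hm => by
        have hc := count_bound hn hm
        by_contra hlt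
        push_neg at hlt
        have := Nat.mul_le_mul_right (n / 2) (show m ≤ 5 by omega)
        omega)
      exact_mod_cast this
  · rw [if_neg hev]
    have ho : n % 2 = 1 := Nat.odd_iff.mp (Nat.not_even_iff_odd.mp hev)
    by_cases h3 : n = 3
    · subst h3
      rw [if_pos rfl]
      apply le_antisymm
      · exact_mod_cast g3_colorable.chromaticNumber_le
      · have := lower_bound hn (t := 9) (fun m hm => by
          have hc := count_bound hn hm
          omega)
        exact_mod_cast this
    · rw [if_neg h3]
      by_cases h5 : n = 5
      · subst h5
        rw [if_pos rfl]
        apply le_antisymm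
        · exact_mod_cast g5_colorable.chromaticNumber_le
        · have := lower_bound hn (t := 8) (fun m hm => by
            have hc := count_bound hn hm
            omega)
          exact_mod_cast this
      · rw [if_neg h5]
        have h7 : 7 ≤ n := by omega
        apply le_antisymm
        · exact_mod_cast (g7_colorable h7 ho).chromaticNumber_le
        · have := lower_bound hn (t := 7) (fun m hm => by
            have hc := count_bound hn hm
            by_contra hlt
            push_neg at hlt
            have := Nat.mul_le_mul_right (n / 2) (show m ≤ 6 by omega)
            omega)
          exact_mod_cast this
end

section
/- For all integers k ≥ 1 and n ≥ 3, the chromatic number of the square of T_{3k,n} = C_{3k} □ C_n satisfies: χ(T_{3k,n}²) ≤ 6 if n is even; χ(T_{3k,n}²) ≤ 7 if n is odd and n ≥ 7; χ(T_{3k,n}²) ≤ 8 if n = 5; and χ(T_{3k,n}²) ≤ 9 if n = 3. -/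
open SimpleGraph

namespace Stmt3Aux

lemma val_eq_sub_add {m : ℕ} (a b : Fin m) : a.val = ((a - b).val + b.val) % m := by
  have hs : (a - b).val = (m - b.val + a.val) % m := by rw [Fin.sub_def]
  rw [hs, Nat.mod_add_mod]
  have h1 : m - b.val + a.val + b.val = a.val + m := by have := b.isLt; omega
  rw [h1, Nat.add_mod_right, Nat.mod_eq_of_lt a.isLt]

lemma row_rel {m : ℕ} {a b : Fin m} {c : ℕ} (h : (a - b).val = c) :
    a.val = (c + b.val) % m := by
  rw [val_eq_sub_add a b, h, add_comm]

lemma rowNe {k : ℕ} (i i' : Fin (3 * k))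
    (h : (i - i').val = 1 ∨ (i' - i).val = 1 ∨ (i - i').val = 2 ∨ (i' - i).val = 2) :
    i.val % 3 ≠ i'.val % 3 := by
  have key : ∀ (a b : Fin (3 * k)) (c : ℕ), (a - b).val = c → a.val % 3 = (c + b.val) % 3 := by
    intro a b c hsub
    rw [row_rel hsub, Nat.mod_mod_of_dvd _ ⟨k, rfl⟩]
  rcases h with h | h | h | h
  · have := key _ _ _ h; omega
  · have := key _ _ _ h; omega
  · have := key _ _ _ h; omega
  · have := key _ _ _ h; omega

lemma sq_adj {m n : ℕ} (hm : 3 ≤ m) (hn : 3 ≤ n) (u v : Fin m × Fin n)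
    (h : (toroidalGrid m n).square.Adj u v) :
    (u.2 = v.2 ∧ ((u.1 - v.1).val = 1 ∨ (v.1 - u.1).val = 1 ∨
        (u.1 - v.1).val = 2 ∨ (v.1 - u.1).val = 2))
    ∨ ((u.2 - v.2).val = 1 ∨ (v.2 - u.2).val = 1)
    ∨ (u.1 = v.1 ∧ ((u.2 - v.2).val = 2 ∨ (v.2 - u.2).val = 2)) := by
  haveI : NeZero m := ⟨by omega⟩
  haveI : NeZero n := ⟨by omega⟩
  obtain ⟨hne, hbox | ⟨w, h1, h2⟩⟩ := h
  · simp only [toroidalGrid, SimpleGraph.boxProd_adj] at hbox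
    rcases hbox with ⟨hadj, hj⟩ | ⟨hadj, hi⟩
    · rw [SimpleGraph.cycleGraph_adj'] at hadj
      exact Or.inl ⟨hj, by tauto⟩
    · rw [SimpleGraph.cycleGraph_adj'] at hadj
      exact Or.inr (Or.inl hadj)
  · simp only [toroidalGrid, SimpleGraph.boxProd_adj] at h1 h2
    rcases h1 with ⟨ha1, hb1⟩ | ⟨ha1, hb1⟩ <;> rcases h2 with ⟨ha2, hb2⟩ | ⟨ha2, hb2⟩
    · -- two row steps
      rw [SimpleGraph.cycleGraph_adj'] at ha1 ha2
      refine Or.inl ⟨hb1.trans hb2, ?_⟩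
      rcases ha1 with c1 | c1 <;> rcases ha2 with c2 | c2
      · right; right; left
        have hh : u.1 - v.1 = (u.1 - w.1) + (w.1 - v.1) := (sub_add_sub_cancel _ _ _).symm
        rw [hh, Fin.val_add, c1, c2, Nat.mod_eq_of_lt (by omega)]
      · exfalso
        have : u.1 = v.1 := sub_left_inj.mp (Fin.val_injective (c1.trans c2.symm))
        exact hne (Prod.ext this (hb1.trans hb2))
      · exfalso
        have : u.1 = v.1 := sub_right_inj.mp (Fin.val_injective (c1.trans c2.symm))
        exact hne (Prod.ext this (hb1.trans hb2))
      · right; right; right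
        have hh : v.1 - u.1 = (v.1 - w.1) + (w.1 - u.1) := (sub_add_sub_cancel _ _ _).symm
        rw [hh, Fin.val_add, c2, c1, Nat.mod_eq_of_lt (by omega)]
    · -- row step then column step
      rw [SimpleGraph.cycleGraph_adj'] at ha2
      right; left; rw [hb1]; exact ha2
    · -- column step then row step
      rw [SimpleGraph.cycleGraph_adj'] at ha1
      right; left; rw [← hb2]; exact ha1
    · -- two column steps
      rw [SimpleGraph.cycleGraph_adj'] at ha1 ha2
      refine Or.inr (Or.inr ⟨hb1.trans hb2, ?_⟩)
      rcases ha1 with c1 | c1 <;> rcases ha2 with c2 | c2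
      · left
        have hh : u.2 - v.2 = (u.2 - w.2) + (w.2 - v.2) := (sub_add_sub_cancel _ _ _).symm
        rw [hh, Fin.val_add, c1, c2, Nat.mod_eq_of_lt (by omega)]
      · exfalso
        exact hne (Prod.ext (hb1.trans hb2)
          (sub_left_inj.mp (Fin.val_injective (c1.trans c2.symm))))
      · exfalso
        exact hne (Prod.ext (hb1.trans hb2)
          (sub_right_inj.mp (Fin.val_injective (c1.trans c2.symm))))
      · right
        have hh : v.2 - u.2 = (v.2 - w.2) + (w.2 - u.2) := (sub_add_sub_cancel _ _ _).symm
        rw [hh, Fin.val_add, c2, c1, Nat.mod_eq_of_lt (by omega)]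

/-- Shift sequence for the even case. -/
def sfun (t : ℕ) : ℕ := if t = 0 then 0 else if t % 2 = 1 then 1 else 2

lemma sfun_lt (t : ℕ) : sfun t < 3 := by unfold sfun; split_ifs <;> omega

/-- parity flips along a cycle step when n is even -/
lemma even_col1 {n : ℕ} (hn2 : n % 2 = 0) (hn : 3 ≤ n) {x : ℕ} (hx : x < n) :
    ((1 + x) % n) % 2 ≠ x % 2 := by
  rcases Nat.lt_or_ge (1 + x) n with h | h
  · rw [Nat.mod_eq_of_lt h]; omega
  · have h1 : 1 + x = n := by omega
    rw [h1, Nat.mod_self]; omega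

lemma even_col2 {n : ℕ} (hn2 : n % 2 = 0) (hn : 3 ≤ n) {x : ℕ} (hx : x < n) :
    sfun (((2 + x) % n) / 2) ≠ sfun (x / 2) ∧ ((2 + x) % n) % 2 = x % 2 := by
  rcases Nat.lt_or_ge (2 + x) n with h | h
  · rw [Nat.mod_eq_of_lt h]
    unfold sfun; split_ifs <;> omega
  · have hmod : (2 + x) % n = 2 + x - n := by
      rw [Nat.mod_eq_sub_mod h, Nat.mod_eq_of_lt (by omega)]
    rw [hmod]
    unfold sfun; split_ifs <;> omega

/-- Column translate for the odd case (7 colors). -/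
def tco (n j : ℕ) : ℕ :=
  if n = 9 then 4 * j % 7
  else if j < n - 7 then 3 * (j % 2) else 3 * (j - (n - 7)) % 7

/-- Row-shift for the odd case. -/
def dco (n j : ℕ) : ℕ :=
  if n = 9 then j % 2
  else if 2 ≤ j ∧ j < n - 7 then 1 + (j / 2) % 2 else 0

lemma tco_lt (n j : ℕ) : tco n j < 7 := by unfold tco; split_ifs <;> omega

lemma dco_lt (n j : ℕ) : dco n j < 3 := by unfold dco; split_ifs <;> omega

set_option maxHeartbeats 1000000 in
lemma odd_col1 {n : ℕ} (hn2 : n % 2 = 1) (hn : 7 ≤ n) {x : ℕ} (hx : x < n) :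
    tco n ((1 + x) % n) % 7 = (tco n x + 3) % 7 ∨
    tco n ((1 + x) % n) % 7 = (tco n x + 4) % 7 := by
  obtain ⟨z, rfl⟩ : ∃ z, n = 2 * z + 1 := ⟨n / 2, by omega⟩
  obtain ⟨y, hy⟩ : ∃ y, x = 2 * y ∨ x = 2 * y + 1 := ⟨x / 2, by omega⟩
  rcases Nat.lt_or_ge (1 + x) (2 * z + 1) with h | h
  · rw [Nat.mod_eq_of_lt h]
    rcases hy with rfl | rfl <;> (unfold tco; split_ifs <;> omega)
  · have h1 : 1 + x = 2 * z + 1 := by omega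
    rw [h1, Nat.mod_self]
    rcases hy with rfl | rfl <;> (unfold tco; split_ifs <;> omega)

set_option maxHeartbeats 1000000 in
lemma odd_col2 {n : ℕ} (hn2 : n % 2 = 1) (hn : 7 ≤ n) {x : ℕ} (hx : x < n) :
    ((tco n ((2 + x) % n) % 7 = (tco n x + 6) % 7 ∨
      tco n ((2 + x) % n) % 7 = (tco n x + 1) % 7) ∧ dco n ((2 + x) % n) = dco n x) ∨
    (tco n ((2 + x) % n) % 7 = tco n x % 7 ∧ dco n ((2 + x) % n) % 3 ≠ dco n x % 3) := by
  obtain ⟨z, rfl⟩ : ∃ z, n = 2 * z + 1 := ⟨n / 2, by omega⟩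
  obtain ⟨y, hy⟩ : ∃ y, x = 2 * y ∨ x = 2 * y + 1 := ⟨x / 2, by omega⟩
  rcases Nat.lt_or_ge (2 + x) (2 * z + 1) with h | h
  · rw [Nat.mod_eq_of_lt h]
    rcases hy with rfl | rfl <;> (unfold tco dco; split_ifs <;> omega)
  · have hmod : (2 + x) % (2 * z + 1) = 2 + x - (2 * z + 1) := by
      rw [Nat.mod_eq_sub_mod h, Nat.mod_eq_of_lt (by omega)]
    rw [hmod]
    have hx2 : x = 2 * z - 1 ∨ x = 2 * z := by omega
    clear hy
    rcases hx2 with rfl | rfl <;> (unfold tco dco; split_ifs <;> omega)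

end Stmt3Aux

open Stmt3Aux
theorem stmt3 (k n : ℕ) (hk : 1 ≤ k) (hn : 3 ≤ n) :
    (Even n → (toroidalGrid (3 * k) n).square.chromaticNumber ≤ 6) ∧
    (Odd n → 7 ≤ n → (toroidalGrid (3 * k) n).square.chromaticNumber ≤ 7) ∧
    (n = 5 → (toroidalGrid (3 * k) n).square.chromaticNumber ≤ 8) ∧
    (n = 3 → (toroidalGrid (3 * k) n).square.chromaticNumber ≤ 9) := by
  have hm3 : 3 ≤ 3 * k := by omega
  refine ⟨?_, ?_, ?_, ?_⟩
  · -- n even : 6 colors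
    intro hev
    have hn2 : n % 2 = 0 := Nat.even_iff.mp hev
    have hcol : (toroidalGrid (3 * k) n).square.Colorable 6 := by
      refine ⟨SimpleGraph.Coloring.mk
        (fun p => ⟨3 * (p.2.val % 2) + (p.1.val + sfun (p.2.val / 2)) % 3, by
          have := sfun_lt (p.2.val / 2); omega⟩) ?_⟩
      intro u v hadj hc
      have hval : 3 * (u.2.val % 2) + (u.1.val + sfun (u.2.val / 2)) % 3
          = 3 * (v.2.val % 2) + (v.1.val + sfun (v.2.val / 2)) % 3 := congrArg Fin.val hc
      have s1 := sfun_lt (u.2.val / 2)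
      have s2 := sfun_lt (v.2.val / 2)
      rcases sq_adj hm3 hn u v hadj with ⟨hj, hrow⟩ | hc1 | ⟨hi, hc2⟩
      · have hr := rowNe u.1 v.1 hrow
        rw [hj] at hval
        omega
      · rcases hc1 with h | h
        · have hx := row_rel h
          have hp := even_col1 hn2 hn v.2.isLt
          rw [← hx] at hp
          omega
        · have hx := row_rel h
          have hp := even_col1 hn2 hn u.2.isLt
          rw [← hx] at hp
          omega
      · have hi' : u.1.val = v.1.val := congrArg Fin.val hi
        rcases hc2 with h | h
        · have hx := row_rel h
          have hp := even_col2 hn2 hn v.2.isLt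
          rw [← hx] at hp
          omega
        · have hx := row_rel h
          have hp := even_col2 hn2 hn u.2.isLt
          rw [← hx] at hp
          omega
    exact_mod_cast hcol.chromaticNumber_le
  · -- n odd, 7 ≤ n : 7 colors
    intro hodd h7
    have hn2 : n % 2 = 1 := Nat.odd_iff.mp hodd
    have hcol : (toroidalGrid (3 * k) n).square.Colorable 7 := by
      refine ⟨SimpleGraph.Coloring.mk
        (fun p => ⟨(tco n p.2.val + (p.1.val + dco n p.2.val) % 3) % 7, by omega⟩) ?_⟩
      intro u v hadj hc
      have hval : (tco n u.2.val + (u.1.val + dco n u.2.val) % 3) % 7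
          = (tco n v.2.val + (v.1.val + dco n v.2.val) % 3) % 7 := congrArg Fin.val hc
      have t1 := tco_lt n u.2.val
      have t2 := tco_lt n v.2.val
      have d1 := dco_lt n u.2.val
      have d2 := dco_lt n v.2.val
      rcases sq_adj hm3 hn u v hadj with ⟨hj, hrow⟩ | hc1 | ⟨hi, hc2⟩
      · have hr := rowNe u.1 v.1 hrow
        rw [hj] at hval
        omega
      · rcases hc1 with h | h
        · have hx := row_rel h
          have hp := odd_col1 hn2 h7 v.2.isLt
          rw [← hx] at hp
          omega
        · have hx := row_rel h
          have hp := odd_col1 hn2 h7 u.2.isLt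
          rw [← hx] at hp
          omega
      · have hi' : u.1.val = v.1.val := congrArg Fin.val hi
        rcases hc2 with h | h
        · have hx := row_rel h
          have hp := odd_col2 hn2 h7 v.2.isLt
          rw [← hx] at hp
          omega
        · have hx := row_rel h
          have hp := odd_col2 hn2 h7 u.2.isLt
          rw [← hx] at hp
          omega
    exact_mod_cast hcol.chromaticNumber_le
  · -- n = 5 : 8 colors
    rintro rfl
    have hcol : (toroidalGrid (3 * k) 5).square.Colorable 8 := by
      refine ⟨SimpleGraph.Coloring.mk
        (fun p => ⟨(3 * p.2.val + p.1.val % 3) % 8, by omega⟩) ?_⟩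
      intro u v hadj hc
      have hval : (3 * u.2.val + u.1.val % 3) % 8
          = (3 * v.2.val + v.1.val % 3) % 8 := congrArg Fin.val hc
      have j1 := u.2.isLt
      have j2 := v.2.isLt
      rcases sq_adj hm3 (by norm_num) u v hadj with ⟨hj, hrow⟩ | hc1 | ⟨hi, hc2⟩
      · have hr := rowNe u.1 v.1 hrow
        rw [hj] at hval
        omega
      · rcases hc1 with h | h
        · have hx := row_rel h
          have h5 : v.2.val = 0 ∨ v.2.val = 1 ∨ v.2.val = 2 ∨ v.2.val = 3 ∨ v.2.val = 4 := by
            omega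
          rcases h5 with h5 | h5 | h5 | h5 | h5 <;> rw [h5] at hx hval <;> omega
        · have hx := row_rel h
          have h5 : u.2.val = 0 ∨ u.2.val = 1 ∨ u.2.val = 2 ∨ u.2.val = 3 ∨ u.2.val = 4 := by
            omega
          rcases h5 with h5 | h5 | h5 | h5 | h5 <;> rw [h5] at hx hval <;> omega
      · have hi' : u.1.val = v.1.val := congrArg Fin.val hi
        rcases hc2 with h | h
        · have hx := row_rel h
          have h5 : v.2.val = 0 ∨ v.2.val = 1 ∨ v.2.val = 2 ∨ v.2.val = 3 ∨ v.2.val = 4 := by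
            omega
          rcases h5 with h5 | h5 | h5 | h5 | h5 <;> rw [h5] at hx hval <;> omega
        · have hx := row_rel h
          have h5 : u.2.val = 0 ∨ u.2.val = 1 ∨ u.2.val = 2 ∨ u.2.val = 3 ∨ u.2.val = 4 := by
            omega
          rcases h5 with h5 | h5 | h5 | h5 | h5 <;> rw [h5] at hx hval <;> omega
    exact_mod_cast hcol.chromaticNumber_le
  · -- n = 3 : 9 colors
    rintro rfl
    have hcol : (toroidalGrid (3 * k) 3).square.Colorable 9 := by
      refine ⟨SimpleGraph.Coloring.mk
        (fun p => ⟨3 * p.2.val + p.1.val % 3, by have := p.2.isLt; omega⟩) ?_⟩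
      intro u v hadj hc
      have hval : 3 * u.2.val + u.1.val % 3
          = 3 * v.2.val + v.1.val % 3 := congrArg Fin.val hc
      have j1 := u.2.isLt
      have j2 := v.2.isLt
      rcases sq_adj hm3 (by norm_num) u v hadj with ⟨hj, hrow⟩ | hc1 | ⟨hi, hc2⟩
      · have hr := rowNe u.1 v.1 hrow
        rw [hj] at hval
        omega
      · rcases hc1 with h | h
        · have hx := row_rel h; omega
        · have hx := row_rel h; omega
      · have hi' : u.1.val = v.1.val := congrArg Fin.val hi
        rcases hc2 with h | h
        · have hx := row_rel h; omega
        · have hx := row_rel h; omega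
    exact_mod_cast hcol.chromaticNumber_le
end

section
/- For every integer n ≥ 3, the chromatic number of the square of T_{4,n} = C_4 □ C_n equals: 6 if n ≡ 0 (mod 3); 8 if n = 4; and 7 otherwise. -/
open SimpleGraph

/-- The independence number of a graph: the maximum size of an independent set,
i.e. the clique number of the complement graph. -/
noncomputable def SimpleGraph.indepNumOrig {V : Type*} (G : SimpleGraph V) : ℕ :=
  Gᶜ.cliqueNum

namespace Aux4

open Fin.CommRing

lemma fin4_ne_self_add_two : ∀ i : Fin 4, i ≠ i + 2 := by decide

lemma fin4_adj_ne : ∀ i k : Fin 4, (i - k = 1 ∨ k - i = 1) → k ≠ i + 2 := by decide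

lemma adj_cases {m : ℕ} {i i' : Fin 4} {j j' : Fin (m+3)}
    (h : (toroidalGrid 4 (m+3)).square.Adj (i, j) (i', j')) :
    (j' = j ∧ i' ≠ i) ∨ ((j' - j = 1 ∨ j - j' = 1) ∧ i' ≠ i + 2) ∨
      ((j' - j = 2 ∨ j - j' = 2) ∧ i' = i) := by
  obtain ⟨hne, hadj | ⟨⟨k, l⟩, h1, h2⟩⟩ := h
  · rw [toroidalGrid, boxProd_adj] at hadj
    dsimp only at hadj
    rcases hadj with ⟨_, rfl⟩ | ⟨hc, rfl⟩
    · exact Or.inl ⟨rfl, fun hii => hne (by rw [hii])⟩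
    · rw [cycleGraph_adj] at hc
      exact Or.inr (Or.inl ⟨hc.symm, fin4_ne_self_add_two i⟩)
  · rw [toroidalGrid, boxProd_adj] at h1 h2
    dsimp only at h1 h2
    rcases h1 with ⟨hik, rfl⟩ | ⟨hc1, rfl⟩
    · rcases h2 with ⟨hki', hlj'⟩ | ⟨hc2, rfl⟩
      · exact Or.inl ⟨hlj'.symm, fun hii => hne (by rw [hii, hlj'])⟩
      · rw [cycleGraph_adj] at hik hc2
        exact Or.inr (Or.inl ⟨hc2.symm, fin4_adj_ne _ _ hik⟩)
    · rcases h2 with ⟨hki', rfl⟩ | ⟨hc2, rfl⟩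
      · rw [cycleGraph_adj] at hki' hc1
        exact Or.inr (Or.inl ⟨hc1.symm, fin4_adj_ne _ _ hki'⟩)
      · rw [cycleGraph_adj] at hc1 hc2
        refine Or.inr (Or.inr ⟨?_, rfl⟩)
        rcases hc1 with hc1 | hc1 <;> rcases hc2 with hc2 | hc2
        · -- j - l = 1, l - j' = 1 : j - j' = 2
          right
          calc j - j' = (j - l) + (l - j') := by ring
          _ = 2 := by rw [hc1, hc2]; norm_num
        · -- j - l = 1, j' - l = 1 : j' = j
          exact absurd (sub_left_inj.mp (hc2.trans hc1.symm)) (fun h => hne (by rw [h]))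
        · -- l - j = 1, l - j' = 1 : j' = j
          exact absurd (sub_right_inj.mp (hc2.trans hc1.symm)) (fun h => hne (by rw [h]))
        · left
          calc j' - j = (j' - l) + (l - j) := by ring
          _ = 2 := by rw [hc1, hc2]; norm_num

lemma fin4_col_path : ∀ i i' : Fin 4, i ≠ i' →
    ((cycleGraph 4).Adj i i' ∨ ((cycleGraph 4).Adj i (i+1) ∧ (cycleGraph 4).Adj (i+1) i')) := by
  decide

lemma fin4_cases_ne2 : ∀ i i' : Fin 4, i' ≠ i + 2 → (i' = i ∨ (cycleGraph 4).Adj i i') := by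
  decide

lemma adj_col {m : ℕ} {i i' : Fin 4} {j : Fin (m+3)} (h : i ≠ i') :
    (toroidalGrid 4 (m+3)).square.Adj (i, j) (i', j) := by
  refine ⟨fun hp => h (congrArg Prod.fst hp), ?_⟩
  rcases fin4_col_path i i' h with hadj | ⟨h1, h2⟩
  · exact Or.inl (by rw [toroidalGrid, boxProd_adj]; exact Or.inl ⟨hadj, rfl⟩)
  · exact Or.inr ⟨(i+1, j), by rw [toroidalGrid, boxProd_adj]; exact Or.inl ⟨h1, rfl⟩,
      by rw [toroidalGrid, boxProd_adj]; exact Or.inl ⟨h2, rfl⟩⟩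

lemma adj_next {m : ℕ} {i i' : Fin 4} {j j' : Fin (m+3)} (h : j' - j = 1) (hii : i' ≠ i + 2) :
    (toroidalGrid 4 (m+3)).square.Adj (i, j) (i', j') := by
  have hjj : j' ≠ j := by
    intro he; rw [he, sub_self] at h
    exact absurd (Fin.ext_iff.mp h.symm) (by simp)
  have hcn : (cycleGraph (m+3)).Adj j j' := by rw [cycleGraph_adj]; exact Or.inr h
  refine ⟨fun hp => hjj (congrArg Prod.snd hp).symm, ?_⟩
  rcases fin4_cases_ne2 i i' hii with rfl | hadj
  · exact Or.inl (by rw [toroidalGrid, boxProd_adj]; exact Or.inr ⟨hcn, rfl⟩)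
  · exact Or.inr ⟨(i', j), by rw [toroidalGrid, boxProd_adj]; exact Or.inl ⟨hadj, rfl⟩,
      by rw [toroidalGrid, boxProd_adj]; exact Or.inr ⟨hcn, rfl⟩⟩

lemma adj_two {m : ℕ} {i : Fin 4} {j : Fin (m+3)} :
    (toroidalGrid 4 (m+3)).square.Adj (i, j) (i, j + 2) := by
  have h2 : (j + 2 : Fin (m+3)) ≠ j := by
    intro he
    rw [add_eq_left] at he
    exact absurd (Fin.ext_iff.mp he) (by simp [Fin.val_two, Nat.mod_eq_of_lt (show 2 < m + 3 by omega)])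
  refine ⟨fun hp => h2 (congrArg Prod.snd hp).symm, Or.inr ⟨(i, j+1), ?_, ?_⟩⟩
  · rw [toroidalGrid, boxProd_adj]
    exact Or.inr ⟨by rw [cycleGraph_adj]; right; ring, rfl⟩
  · rw [toroidalGrid, boxProd_adj]
    exact Or.inr ⟨by rw [cycleGraph_adj]; right; ring, rfl⟩

lemma fin_one_ne_zero {m : ℕ} : (1 : Fin (m+3)) ≠ 0 := by
  simp [Fin.ext_iff]

lemma fin_two_ne_zero {m : ℕ} : (2 : Fin (m+3)) ≠ 0 := by
  simp [Fin.ext_iff, Fin.val_two, Nat.mod_eq_of_lt (show 2 < m + 3 by omega)]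

lemma fin_one_ne_two {m : ℕ} : (1 : Fin (m+3)) ≠ 2 := by
  simp [Fin.ext_iff, Fin.val_one, Fin.val_two, Nat.mod_eq_of_lt (show 2 < m + 3 by omega)]

lemma fin4_add_two_add_two : ∀ x : Fin 4, x + 2 + 2 = x := by decide

section Lower

variable {m k : ℕ} (C : (toroidalGrid 4 (m+3)).square.Coloring (Fin k)) (c0 : Fin k)

lemma samecol {u v : Fin 4 × Fin (m+3)} (hu : C u = c0) (hv : C v = c0)
    (huv : u ≠ v) (hcol : u.2 = v.2) : False := by
  have hrow : u.1 ≠ v.1 := fun h => huv (Prod.ext h hcol)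
  have hadj := adj_col (m := m) (j := u.2) hrow
  rw [Prod.mk.eta, hcol, Prod.mk.eta] at hadj
  exact C.valid hadj (hu.trans hv.symm)

lemma chain {j0 : Fin (m+3)} {u v w : Fin 4 × Fin (m+3)}
    (hu : C u = c0) (hv : C v = c0) (hw : C w = c0)
    (h1 : u.2 = j0) (h2 : v.2 = j0 + 1) (h3 : w.2 = j0 + 2) : False := by
  have hv1 : v.1 = u.1 + 2 := by
    by_contra hne
    have hadj := adj_next (i := u.1) (i' := v.1) (j := u.2) (j' := v.2)
      (by rw [h1, h2]; ring) hne
    rw [Prod.mk.eta, Prod.mk.eta] at hadj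
    exact C.valid hadj (hu.trans hv.symm)
  have hw1 : w.1 = v.1 + 2 := by
    by_contra hne
    have hadj := adj_next (i := v.1) (i' := w.1) (j := v.2) (j' := w.2)
      (by rw [h2, h3]; ring) hne
    rw [Prod.mk.eta, Prod.mk.eta] at hadj
    exact C.valid hadj (hv.trans hw.symm)
  have hwu : w.1 = u.1 := by rw [hw1, hv1]; exact fin4_add_two_add_two u.1
  have hadj := adj_two (m := m) (i := u.1) (j := u.2)
  have hcol : u.2 + 2 = w.2 := by rw [h1, h3]
  rw [hcol, Prod.mk.eta, ← hwu, Prod.mk.eta] at hadj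
  exact C.valid hadj (hu.trans hw.symm)

lemma triple_bound (j0 : Fin (m+3)) :
    (Finset.univ.filter (fun v : Fin 4 × Fin (m+3) =>
      C v = c0 ∧ (v.2 = j0 ∨ v.2 = j0 + 1 ∨ v.2 = j0 + 2))).card ≤ 2 := by
  by_contra hlt
  push_neg at hlt
  rw [Finset.two_lt_card_iff] at hlt
  obtain ⟨a, b, c, ha, hb, hc, hab, hac, hbc⟩ := hlt
  simp only [Finset.mem_filter, Finset.mem_univ, true_and] at ha hb hc
  obtain ⟨hCa, hcola⟩ := ha
  obtain ⟨hCb, hcolb⟩ := hb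
  obtain ⟨hCc, hcolc⟩ := hc
  rcases hcola with h1|h1|h1 <;> rcases hcolb with h2|h2|h2 <;> rcases hcolc with h3|h3|h3 <;>
  first
    | exact samecol C c0 hCa hCb hab (h1.trans h2.symm)
    | exact samecol C c0 hCa hCc hac (h1.trans h3.symm)
    | exact samecol C c0 hCb hCc hbc (h2.trans h3.symm)
    | exact chain C c0 hCa hCb hCc h1 h2 h3
    | exact chain C c0 hCa hCc hCb h1 h3 h2
    | exact chain C c0 hCb hCa hCc h2 h1 h3
    | exact chain C c0 hCb hCc hCa h2 h3 h1
    | exact chain C c0 hCc hCa hCb h3 h1 h2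
    | exact chain C c0 hCc hCb hCa h3 h2 h1

end Lower

section Count

variable {m k : ℕ} (C : (toroidalGrid 4 (m+3)).square.Coloring (Fin k)) (c0 : Fin k)

lemma inner_count (x : Fin (m+3)) :
    (Finset.univ.filter (fun j0 : Fin (m+3) => x = j0 ∨ x = j0 + 1 ∨ x = j0 + 2)).card = 3 := by
  have hset : (Finset.univ.filter (fun j0 : Fin (m+3) => x = j0 ∨ x = j0 + 1 ∨ x = j0 + 2))
      = {x, x - 1, x - 2} := by
    ext j0
    simp only [Finset.mem_filter, Finset.mem_univ, true_and, Finset.mem_insert,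
      Finset.mem_singleton]
    constructor
    · rintro (h|h|h)
      · exact Or.inl h.symm
      · exact Or.inr (Or.inl (by rw [h]; ring))
      · exact Or.inr (Or.inr (by rw [h]; ring))
    · rintro (rfl|rfl|rfl)
      · exact Or.inl rfl
      · exact Or.inr (Or.inl (by ring))
      · exact Or.inr (Or.inr (by ring))
  have d1 : x ≠ x - 1 := by
    intro h; nth_rewrite 1 [← sub_zero x] at h
    exact fin_one_ne_zero (sub_right_inj.mp h).symm
  have d2 : x ≠ x - 2 := by
    intro h; nth_rewrite 1 [← sub_zero x] at h
    exact fin_two_ne_zero (sub_right_inj.mp h).symm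
  have d3 : x - 1 ≠ x - 2 := fun h => fin_one_ne_two (sub_right_inj.mp h)
  rw [hset, Finset.card_insert_of_notMem (by simp [d1, d2]),
    Finset.card_insert_of_notMem (by simp [d3]), Finset.card_singleton]

lemma class_bound :
    3 * (Finset.univ.filter (fun v : Fin 4 × Fin (m+3) => C v = c0)).card ≤ 2 * (m + 3) := by
  have hsum : ∑ j0 : Fin (m+3), (Finset.univ.filter (fun v : Fin 4 × Fin (m+3) =>
      C v = c0 ∧ (v.2 = j0 ∨ v.2 = j0 + 1 ∨ v.2 = j0 + 2))).card
      = 3 * (Finset.univ.filter (fun v : Fin 4 × Fin (m+3) => C v = c0)).card := by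
    have hff : ∀ j0 : Fin (m+3), (Finset.univ.filter (fun v : Fin 4 × Fin (m+3) =>
        C v = c0 ∧ (v.2 = j0 ∨ v.2 = j0 + 1 ∨ v.2 = j0 + 2)))
        = (Finset.univ.filter (fun v : Fin 4 × Fin (m+3) => C v = c0)).filter
          (fun v => v.2 = j0 ∨ v.2 = j0 + 1 ∨ v.2 = j0 + 2) := by
      intro j0; rw [Finset.filter_filter]
    calc ∑ j0 : Fin (m+3), (Finset.univ.filter (fun v : Fin 4 × Fin (m+3) =>
          C v = c0 ∧ (v.2 = j0 ∨ v.2 = j0 + 1 ∨ v.2 = j0 + 2))).card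
        = ∑ j0 : Fin (m+3), ∑ v ∈ Finset.univ.filter (fun v : Fin 4 × Fin (m+3) => C v = c0),
            (if v.2 = j0 ∨ v.2 = j0 + 1 ∨ v.2 = j0 + 2 then 1 else 0) := by
          refine Finset.sum_congr rfl fun j0 _ => ?_
          rw [hff j0, Finset.card_filter]
      _ = ∑ v ∈ Finset.univ.filter (fun v : Fin 4 × Fin (m+3) => C v = c0),
            ∑ j0 : Fin (m+3), (if v.2 = j0 ∨ v.2 = j0 + 1 ∨ v.2 = j0 + 2 then 1 else 0) :=
          Finset.sum_comm
      _ = ∑ v ∈ Finset.univ.filter (fun v : Fin 4 × Fin (m+3) => C v = c0), 3 := by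
          refine Finset.sum_congr rfl fun v _ => ?_
          rw [← Finset.card_filter]
          exact inner_count v.2
      _ = 3 * (Finset.univ.filter (fun v : Fin 4 × Fin (m+3) => C v = c0)).card := by
          rw [Finset.sum_const, smul_eq_mul, mul_comm]
  rw [← hsum]
  calc ∑ j0 : Fin (m+3), (Finset.univ.filter (fun v : Fin 4 × Fin (m+3) =>
        C v = c0 ∧ (v.2 = j0 ∨ v.2 = j0 + 1 ∨ v.2 = j0 + 2))).card
      ≤ ∑ _j0 : Fin (m+3), 2 := Finset.sum_le_sum fun j0 _ => triple_bound C c0 j0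
    _ = 2 * (m + 3) := by rw [Finset.sum_const, smul_eq_mul, Finset.card_univ,
        Fintype.card_fin, mul_comm]

lemma count_le (hc : (toroidalGrid 4 (m+3)).square.Colorable k) :
    4 * (m + 3) ≤ k * (2 * (m + 3) / 3) := by
  obtain ⟨C⟩ := hc
  have htot : (Finset.univ : Finset (Fin 4 × Fin (m+3))).card
      = ∑ c0 : Fin k, (Finset.univ.filter (fun v : Fin 4 × Fin (m+3) => C v = c0)).card :=
    Finset.card_eq_sum_card_fiberwise (fun v _ => Finset.mem_univ (C v))
  have hcard : (Finset.univ : Finset (Fin 4 × Fin (m+3))).card = 4 * (m + 3) := by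
    simp [Fintype.card_prod]
  have hbound : ∀ c0 : Fin k,
      (Finset.univ.filter (fun v : Fin 4 × Fin (m+3) => C v = c0)).card ≤ 2 * (m + 3) / 3 := by
    intro c0
    have := class_bound C c0
    omega
  calc 4 * (m + 3) = ∑ c0 : Fin k, (Finset.univ.filter
        (fun v : Fin 4 × Fin (m+3) => C v = c0)).card := by rw [← hcard, htot]
    _ ≤ ∑ _c0 : Fin k, (2 * (m + 3) / 3) := Finset.sum_le_sum fun c0 _ => hbound c0
    _ = k * (2 * (m + 3) / 3) := by rw [Finset.sum_const, smul_eq_mul, Finset.card_univ,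
        Fintype.card_fin]

end Count

def strongP {κ : Type} (A B : Fin 4 → κ) : Prop := ∀ i i' : Fin 4, i' ≠ i + 2 → B i' ≠ A i

def weakP {κ : Type} (A B : Fin 4 → κ) : Prop := ∀ i : Fin 4, A i ≠ B i

instance {κ : Type} [DecidableEq κ] (A B : Fin 4 → κ) : Decidable (strongP A B) := by
  unfold strongP; infer_instance

instance {κ : Type} [DecidableEq κ] (A B : Fin 4 → κ) : Decidable (weakP A B) := by
  unfold weakP; infer_instance

lemma fin4_swap_ne2 : ∀ i i' : Fin 4, i' ≠ i + 2 → i ≠ i' + 2 := by decide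

lemma colorable_of_pattern {m : ℕ} {κ : Type} [Fintype κ] [DecidableEq κ]
    (f : ℕ → Fin 4 → κ)
    (H1 : ∀ j, j < m + 3 → Function.Injective (f j))
    (H2 : ∀ j, j + 1 < m + 3 → strongP (f j) (f (j+1)))
    (H2' : strongP (f (m+2)) (f 0))
    (H3 : ∀ j, j + 2 < m + 3 → weakP (f j) (f (j+2)))
    (H3a : weakP (f (m+1)) (f 0)) (H3b : weakP (f (m+2)) (f 1)) :
    (toroidalGrid 4 (m+3)).square.Colorable (Fintype.card κ) := by
  refine (Coloring.mk (fun v : Fin 4 × Fin (m+3) => f v.2.val v.1) ?_).colorable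
  rintro ⟨i, j⟩ ⟨i', j'⟩ hadj
  dsimp only
  have hlt : j.val < m + 3 := j.isLt
  have hlt' : j'.val < m + 3 := j'.isLt
  have hm1 : (m + 2 + 1) % (m + 3) = 0 := by
    rw [show m+2+1 = m+3 from rfl, Nat.mod_self]
  have hm2 : (m + 1 + 2) % (m + 3) = 0 := by
    rw [show m+1+2 = m+3 from rfl, Nat.mod_self]
  have hm3 : (m + 2 + 2) % (m + 3) = 1 := by
    rw [show m+2+2 = (m+3)+1 from rfl, Nat.add_mod_left]
    exact Nat.mod_eq_of_lt (by omega)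
  rcases adj_cases hadj with ⟨hjeq, hii⟩ | ⟨hjj, hii⟩ | ⟨hjj, hieq⟩
  · rw [hjeq]
    exact fun h => hii (H1 j.val j.isLt h).symm
  · rcases hjj with hjj | hjj
    · have hj' : j' = j + 1 := by rw [sub_eq_iff_eq_add] at hjj; rw [hjj]; ring
      have hval : j'.val = (j.val + 1) % (m + 3) := by rw [hj', Fin.add_def, Fin.val_one]
      rcases Nat.lt_or_ge (j.val + 1) (m + 3) with h | h
      · have hv : j'.val = j.val + 1 := by rw [hval, Nat.mod_eq_of_lt h]
        rw [hv]
        exact (H2 j.val h i i' hii).symm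
      · have h1 : j.val = m + 2 := by omega
        have h2 : j'.val = 0 := by rw [hval, h1, hm1]
        rw [h1, h2]
        exact (H2' i i' hii).symm
    · have hj : j = j' + 1 := by rw [sub_eq_iff_eq_add] at hjj; rw [hjj]; ring
      have hval : j.val = (j'.val + 1) % (m + 3) := by rw [hj, Fin.add_def, Fin.val_one]
      have hii' : i ≠ i' + 2 := fin4_swap_ne2 i i' hii
      rcases Nat.lt_or_ge (j'.val + 1) (m + 3) with h | h
      · have hv : j.val = j'.val + 1 := by rw [hval, Nat.mod_eq_of_lt h]
        rw [hv]
        exact H2 j'.val h i' i hii'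
      · have h1 : j'.val = m + 2 := by omega
        have h2 : j.val = 0 := by rw [hval, h1, hm1]
        rw [h1, h2]
        exact H2' i' i hii'
  · rw [hieq]
    rcases hjj with hjj | hjj
    · have hj' : j' = j + 2 := by rw [sub_eq_iff_eq_add] at hjj; rw [hjj]; ring
      have hval : j'.val = (j.val + 2) % (m + 3) := by rw [hj', Fin.add_def, Fin.val_two]
      rcases Nat.lt_or_ge (j.val + 2) (m + 3) with h | h
      · have hv : j'.val = j.val + 2 := by rw [hval, Nat.mod_eq_of_lt h]
        rw [hv]
        exact H3 j.val h i
      · rcases (by omega : j.val = m + 1 ∨ j.val = m + 2) with h1 | h1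
        · have h2 : j'.val = 0 := by rw [hval, h1, hm2]
          rw [h1, h2]
          exact H3a i
        · have h2 : j'.val = 1 := by rw [hval, h1, hm3]
          rw [h1, h2]
          exact H3b i
    · have hj : j = j' + 2 := by rw [sub_eq_iff_eq_add] at hjj; rw [hjj]; ring
      have hval : j.val = (j'.val + 2) % (m + 3) := by rw [hj, Fin.add_def, Fin.val_two]
      rcases Nat.lt_or_ge (j'.val + 2) (m + 3) with h | h
      · have hv : j.val = j'.val + 2 := by rw [hval, Nat.mod_eq_of_lt h]
        rw [hv]
        exact (H3 j'.val h i).symm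
      · rcases (by omega : j'.val = m + 1 ∨ j'.val = m + 2) with h1 | h1
        · have h2 : j.val = 0 := by rw [hval, h1, hm2]
          rw [h1, h2]
          exact (H3a i).symm
        · have h2 : j.val = 1 := by rw [hval, h1, hm3]
          rw [h1, h2]
          exact (H3b i).symm

/-! Color tables -/

def tabP : ℕ → Fin 4 → Fin 6
  | 0 => ![0, 1, 2, 3]
  | 1 => ![2, 3, 4, 5]
  | _ => ![4, 5, 0, 1]

def tabC : ℕ → Fin 4 → Fin 7
  | 0 => ![0, 1, 2, 3]
  | 1 => ![2, 3, 4, 5]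
  | _ => ![4, 5, 0, 1]

def tabD : ℕ → Fin 4 → Fin 7
  | 0 => ![0, 1, 2, 3]
  | 1 => ![2, 3, 4, 5]
  | 2 => ![1, 5, 6, 0]
  | 3 => ![3, 2, 1, 4]
  | _ => ![5, 4, 0, 6]

def tabE : ℕ → Fin 4 → Fin 7
  | 0 => ![0, 1, 2, 3]
  | 1 => ![2, 3, 4, 5]
  | 2 => ![1, 5, 0, 6]
  | 3 => ![0, 6, 1, 4]
  | 4 => ![3, 4, 2, 5]
  | 5 => ![2, 0, 3, 6]
  | _ => ![4, 6, 5, 1]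

def tabA : ℕ → Fin 4 → Fin 8
  | 0 => ![0, 1, 2, 3]
  | 1 => ![4, 5, 6, 7]
  | 2 => ![2, 3, 0, 1]
  | _ => ![6, 7, 4, 5]

def fP (j : ℕ) : Fin 4 → Fin 6 := tabP (j % 3)

lemma colorableP {m : ℕ} (h3 : (m + 3) % 3 = 0) :
    (toroidalGrid 4 (m+3)).square.Colorable 6 := by
  have := colorable_of_pattern (m := m) fP
    (fun j _ => by
      unfold fP
      rcases (by omega : j % 3 = 0 ∨ j % 3 = 1 ∨ j % 3 = 2) with h|h|h <;> rw [h] <;> decide)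
    (fun j _ => by
      unfold fP
      rcases (by omega : j % 3 = 0 ∧ (j+1) % 3 = 1 ∨ j % 3 = 1 ∧ (j+1) % 3 = 2 ∨
        j % 3 = 2 ∧ (j+1) % 3 = 0) with ⟨h, h'⟩|⟨h, h'⟩|⟨h, h'⟩ <;> rw [h, h'] <;> decide)
    (by unfold fP
        rw [(by omega : (m + 2) % 3 = 2), (by omega : 0 % 3 = 0)]
        decide)
    (fun j _ => by
      unfold fP
      rcases (by omega : j % 3 = 0 ∧ (j+2) % 3 = 2 ∨ j % 3 = 1 ∧ (j+2) % 3 = 0 ∨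
        j % 3 = 2 ∧ (j+2) % 3 = 1) with ⟨h, h'⟩|⟨h, h'⟩|⟨h, h'⟩ <;> rw [h, h'] <;> decide)
    (by unfold fP
        rw [(by omega : (m + 1) % 3 = 1), (by omega : 0 % 3 = 0)]
        decide)
    (by unfold fP
        rw [(by omega : (m + 2) % 3 = 2), (by omega : 1 % 3 = 1)]
        decide)
  simpa using this

def fA (j : ℕ) : Fin 4 → Fin 8 := tabA (j % 4)

lemma colorableA : (toroidalGrid 4 4).square.Colorable 8 := by
  have := colorable_of_pattern (m := 1) fA
    (fun j hj => by
      unfold fA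
      rcases (by omega : j % 4 = 0 ∨ j % 4 = 1 ∨ j % 4 = 2 ∨ j % 4 = 3) with h|h|h|h <;>
        rw [h] <;> decide)
    (fun j hj => by
      unfold fA
      rcases (by omega : j = 0 ∨ j = 1 ∨ j = 2) with h|h|h <;> subst h <;> decide)
    (by unfold fA; decide)
    (fun j hj => by
      unfold fA
      rcases (by omega : j = 0 ∨ j = 1) with h|h <;> subst h <;> decide)
    (by unfold fA; decide)
    (by unfold fA; decide)
  simpa using this

def fC (j : ℕ) : Fin 4 → Fin 7 := if j < 5 then tabD j else tabC ((j + 1) % 3)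

lemma colorableC {m : ℕ} (h3 : (m + 3) % 3 = 2) :
    (toroidalGrid 4 (m+3)).square.Colorable 7 := by
  have hn5 : 5 ≤ m + 3 := by omega
  have := colorable_of_pattern (m := m) fC
    (fun j hj => by
      unfold fC
      split
      · rename_i h
        interval_cases j <;> decide
      · rcases (by omega : (j+1) % 3 = 0 ∨ (j+1) % 3 = 1 ∨ (j+1) % 3 = 2) with h|h|h <;>
          rw [h] <;> decide)
    (fun j hj => by
      unfold fC
      rcases (by omega : j < 4 ∨ j = 4 ∨ 5 ≤ j) with h|h|h
      · rw [if_pos (by omega), if_pos (by omega)]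
        interval_cases j <;> decide
      · subst h
        rw [if_pos (by omega), if_neg (by omega)]
        norm_num
        decide
      · rw [if_neg (by omega), if_neg (by omega)]
        rcases (by omega : (j+1) % 3 = 0 ∧ (j+2) % 3 = 1 ∨ (j+1) % 3 = 1 ∧ (j+2) % 3 = 2 ∨
          (j+1) % 3 = 2 ∧ (j+2) % 3 = 0) with ⟨h1, h2⟩|⟨h1, h2⟩|⟨h1, h2⟩ <;> rw [h1, h2] <;>
          decide)
    (by unfold fC
        rcases (by omega : m + 2 = 4 ∨ (7 ≤ m + 2 ∧ (m + 3) % 3 = 2)) with h|⟨h, h'⟩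
        · rw [h, if_pos (by omega), if_pos (by omega)]
          decide
        · rw [if_neg (by omega), if_pos (by omega)]
          rw [(by omega : (m + 2 + 1) % 3 = 2)]
          decide)
    (fun j hj => by
      unfold fC
      rcases (by omega : j < 3 ∨ j = 3 ∨ j = 4 ∨ 5 ≤ j) with h|h|h|h
      · rw [if_pos (by omega), if_pos (by omega)]
        interval_cases j <;> decide
      · subst h
        rw [if_pos (by omega), if_neg (by omega)]
        norm_num
        decide
      · subst h
        rw [if_pos (by omega), if_neg (by omega)]
        norm_num
        decide
      · rw [if_neg (by omega), if_neg (by omega)]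
        rcases (by omega : (j+1) % 3 = 0 ∧ (j+3) % 3 = 2 ∨ (j+1) % 3 = 1 ∧ (j+3) % 3 = 0 ∨
          (j+1) % 3 = 2 ∧ (j+3) % 3 = 1) with ⟨h1, h2⟩|⟨h1, h2⟩|⟨h1, h2⟩ <;> rw [h1, h2] <;>
          decide)
    (by unfold fC
        rcases (by omega : m + 1 = 3 ∨ (6 ≤ m + 1 ∧ (m + 3) % 3 = 2)) with h|⟨h, h'⟩
        · rw [h, if_pos (by omega), if_pos (by omega)]
          decide
        · rw [if_neg (by omega), if_pos (by omega)]
          rw [(by omega : (m + 1 + 1) % 3 = 1)]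
          decide)
    (by unfold fC
        rcases (by omega : m + 2 = 4 ∨ (7 ≤ m + 2 ∧ (m + 3) % 3 = 2)) with h|⟨h, h'⟩
        · rw [h, if_pos (by omega), if_pos (by omega)]
          decide
        · rw [if_neg (by omega), if_pos (by omega)]
          rw [(by omega : (m + 2 + 1) % 3 = 2)]
          decide)
  simpa using this

def fB (j : ℕ) : Fin 4 → Fin 7 := if j < 7 then tabE j else tabC ((j + 2) % 3)

lemma colorableB {m : ℕ} (h3 : (m + 3) % 3 = 1) (h7 : 7 ≤ m + 3) :
    (toroidalGrid 4 (m+3)).square.Colorable 7 := by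
  have := colorable_of_pattern (m := m) fB
    (fun j hj => by
      unfold fB
      split
      · rename_i h
        interval_cases j <;> decide
      · rcases (by omega : (j+2) % 3 = 0 ∨ (j+2) % 3 = 1 ∨ (j+2) % 3 = 2) with h|h|h <;>
          rw [h] <;> decide)
    (fun j hj => by
      unfold fB
      rcases (by omega : j < 6 ∨ j = 6 ∨ 7 ≤ j) with h|h|h
      · rw [if_pos (by omega), if_pos (by omega)]
        interval_cases j <;> decide
      · subst h
        rw [if_pos (by omega), if_neg (by omega)]
        norm_num
        decide
      · rw [if_neg (by omega), if_neg (by omega)]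
        rcases (by omega : (j+2) % 3 = 0 ∧ (j+3) % 3 = 1 ∨ (j+2) % 3 = 1 ∧ (j+3) % 3 = 2 ∨
          (j+2) % 3 = 2 ∧ (j+3) % 3 = 0) with ⟨h1, h2⟩|⟨h1, h2⟩|⟨h1, h2⟩ <;> rw [h1, h2] <;>
          decide)
    (by unfold fB
        rcases (by omega : m + 2 = 6 ∨ (9 ≤ m + 2 ∧ (m + 3) % 3 = 1)) with h|⟨h, h'⟩
        · rw [h, if_pos (by omega), if_pos (by omega)]
          decide
        · rw [if_neg (by omega), if_pos (by omega)]
          rw [(by omega : (m + 2 + 2) % 3 = 2)]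
          decide)
    (fun j hj => by
      unfold fB
      rcases (by omega : j < 5 ∨ j = 5 ∨ j = 6 ∨ 7 ≤ j) with h|h|h|h
      · rw [if_pos (by omega), if_pos (by omega)]
        interval_cases j <;> decide
      · subst h
        rw [if_pos (by omega), if_neg (by omega)]
        norm_num
        decide
      · subst h
        rw [if_pos (by omega), if_neg (by omega)]
        norm_num
        decide
      · rw [if_neg (by omega), if_neg (by omega)]
        rcases (by omega : (j+2) % 3 = 0 ∧ (j+4) % 3 = 2 ∨ (j+2) % 3 = 1 ∧ (j+4) % 3 = 0 ∨
          (j+2) % 3 = 2 ∧ (j+4) % 3 = 1) with ⟨h1, h2⟩|⟨h1, h2⟩|⟨h1, h2⟩ <;> rw [h1, h2] <;>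
          decide)
    (by unfold fB
        rcases (by omega : m + 1 = 5 ∨ (8 ≤ m + 1 ∧ (m + 3) % 3 = 1)) with h|⟨h, h'⟩
        · rw [h, if_pos (by omega), if_pos (by omega)]
          decide
        · rw [if_neg (by omega), if_pos (by omega)]
          rw [(by omega : (m + 1 + 2) % 3 = 1)]
          decide)
    (by unfold fB
        rcases (by omega : m + 2 = 6 ∨ (9 ≤ m + 2 ∧ (m + 3) % 3 = 1)) with h|⟨h, h'⟩
        · rw [h, if_pos (by omega), if_pos (by omega)]
          decide
        · rw [if_neg (by omega), if_pos (by omega)]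
          rw [(by omega : (m + 2 + 2) % 3 = 2)]
          decide)
  simpa using this

lemma lower_bound {m k : ℕ} (h : (toroidalGrid 4 (m+3)).square.chromaticNumber < (k : ℕ) + 1) :
    (toroidalGrid 4 (m+3)).square.Colorable k := by
  have h' : (toroidalGrid 4 (m+3)).square.chromaticNumber < (k : ℕ∞) + 1 := h
  rw [ENat.lt_add_one_iff (ENat.coe_ne_top k)] at h'
  exact chromaticNumber_le_iff_colorable.mp h'

end Aux4

theorem stmt4 (n : ℕ) (hn : 3 ≤ n) :
    (toroidalGrid 4 n).square.chromaticNumber =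
      if n % 3 = 0 then 6 else if n = 4 then 8 else 7 := by
  obtain ⟨m, rfl⟩ : ∃ m, n = m + 3 := ⟨n - 3, by omega⟩
  by_cases h3 : (m + 3) % 3 = 0
  · rw [if_pos h3]
    refine le_antisymm (le_trans (Aux4.colorableP h3).chromaticNumber_le (by norm_num)) ?_
    by_contra hlt
    push_neg at hlt
    have hcol : (toroidalGrid 4 (m+3)).square.Colorable 5 :=
      Aux4.lower_bound (by exact_mod_cast hlt)
    have := Aux4.count_le hcol
    omega
  · rw [if_neg h3]
    by_cases h4 : m + 3 = 4
    · rw [if_pos h4]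
      obtain rfl : m = 1 := by omega
      refine le_antisymm (le_trans Aux4.colorableA.chromaticNumber_le (by norm_num)) ?_
      by_contra hlt
      push_neg at hlt
      have hcol : (toroidalGrid 4 (1+3)).square.Colorable 7 :=
        Aux4.lower_bound (by exact_mod_cast hlt)
      have := Aux4.count_le hcol
      omega
    · rw [if_neg h4]
      have hup : (toroidalGrid 4 (m+3)).square.Colorable 7 := by
        rcases (by omega : (m + 3) % 3 = 1 ∨ (m + 3) % 3 = 2) with h|h
        · exact Aux4.colorableB h (by omega)
        · exact Aux4.colorableC h
      refine le_antisymm (le_trans hup.chromaticNumber_le (by norm_num)) ?_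
      by_contra hlt
      push_neg at hlt
      have hcol : (toroidalGrid 4 (m+3)).square.Colorable 6 :=
        Aux4.lower_bound (by exact_mod_cast hlt)
      have := Aux4.count_le hcol
      omega
end

section
/- For all integers k ≥ 1 and n ≥ 3, the chromatic number of the square of T_{4k,n} = C_{4k} □ C_n satisfies: χ(T_{4k,n}²) ≤ 6 if n ≡ 0 (mod 3); χ(T_{4k,n}²) ≤ 8 if n = 4; and χ(T_{4k,n}²) ≤ 7 otherwise. -/
open SimpleGraph

/-! ### Auxiliary definitions for the coloring constructions -/

/-- One step around a cycle of length `m`, on values. -/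
def S (m a b : ℕ) : Prop := (a + 1) % m = b ∨ (b + 1) % m = a

/-- Horizontal distance exactly 1 around a cycle of length `n` (value form). -/
abbrev HD1 (n a b : ℕ) : Prop :=
  b = a + 1 ∨ a = b + 1 ∨ (a + 1 = n ∧ b = 0) ∨ (b + 1 = n ∧ a = 0)

/-- Horizontal distance exactly 2 around a cycle of length `n` (value form). -/
abbrev HD2 (n a b : ℕ) : Prop :=
  b = a + 2 ∨ a = b + 2 ∨ a + 2 = b + n ∨ b + 2 = a + n

/-- Column table for the 6-coloring (case `3 ∣ n`). -/
def T6 : List (List ℕ) := [[0,1,2,3],[2,3,4,5],[4,5,0,1]]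

def t6v (p a : ℕ) : ℕ := (T6.getD p []).getD a 0

/-- Column table for the 8-coloring (case `n = 4`). -/
def T8 : List (List ℕ) := [[0,1,2,3],[2,3,0,1],[4,5,6,7],[6,7,4,5]]

def t8v (p a : ℕ) : ℕ := (T8.getD p []).getD a 0

/-- Column table for the 7-coloring (letters `0..11`):
letters 0,1,2 are the periodic columns `A,B,C`; letters 3–7 the length-5 patch;
letters 8–11 the length-4 patch. -/
def T7 : List (List ℕ) :=
  [[0,1,2,3],[2,3,0,4],[5,4,6,1],
   [0,1,2,3],[2,3,4,5],[4,0,1,6],[3,2,5,0],[5,4,6,1],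
   [6,0,5,2],[1,2,4,3],[5,3,0,6],[4,6,5,1]]

def t7v (p a : ℕ) : ℕ := (T7.getD p []).getD a 0

/-- The letter (column type) used in column `j` for the 7-coloring of `C_m □ C_n`. -/
def letter (n j : ℕ) : ℕ :=
  if n % 3 = 2 then (if j < 5 then 3 + j else (j - 5) % 3)
  else (if j < 4 then 8 + j else (j - 4) % 3)

abbrev pred1 (p q : ℕ) : Prop :=
  (p = 0 ∧ q = 1) ∨ (p = 0 ∧ q = 2) ∨ (p = 0 ∧ q = 7) ∨ (p = 0 ∧ q = 11) ∨ (p = 1 ∧ q = 0) ∨ (p = 1 ∧ q = 2) ∨ (p = 2 ∧ q = 0) ∨ (p = 2 ∧ q = 1) ∨ (p = 2 ∧ q = 3) ∨ (p = 2 ∧ q = 8) ∨ (p = 3 ∧ q = 2) ∨ (p = 3 ∧ q = 4) ∨ (p = 3 ∧ q = 7) ∨ (p = 4 ∧ q = 3) ∨ (p = 4 ∧ q = 5) ∨ (p = 5 ∧ q = 4) ∨ (p = 5 ∧ q = 6) ∨ (p = 6 ∧ q = 5) ∨ (p = 6 ∧ q = 7) ∨ (p = 7 ∧ q = 0) ∨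 (p = 7 ∧ q = 3) ∨ (p = 7 ∧ q = 6) ∨ (p = 8 ∧ q = 2) ∨ (p = 8 ∧ q = 9) ∨ (p = 9 ∧ q = 8) ∨ (p = 9 ∧ q = 10) ∨ (p = 10 ∧ q = 9) ∨ (p = 10 ∧ q = 11) ∨ (p = 11 ∧ q = 0) ∨ (p = 11 ∧ q = 10)

abbrev pred2 (p q : ℕ) : Prop :=
  (p = 0 ∧ q = 1) ∨ (p = 0 ∧ q = 2) ∨ (p = 0 ∧ q = 6) ∨ (p = 0 ∧ q = 10) ∨ (p = 1 ∧ q = 0) ∨ (p = 1 ∧ q = 2) ∨ (p = 1 ∧ q = 3) ∨ (p = 1 ∧ q = 7) ∨ (p = 1 ∧ q = 8) ∨ (p = 1 ∧ q = 11) ∨ (p = 2 ∧ q = 0) ∨ (p = 2 ∧ q = 1) ∨ (p = 2 ∧ q = 4) ∨ (p = 2 ∧ q = 9) ∨ (p = 3 ∧ q = 1) ∨ (p = 3 ∧ q = 5) ∨ (p = 3 ∧ q = 6) ∨ (p = 4 ∧ q = 2) ∨ (p = 4 ∧ q = 6) ∨ (p = 4 ∧ q = 7) ∨ (p = 5 ∧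 q = 3) ∨ (p = 5 ∧ q = 7) ∨ (p = 6 ∧ q = 0) ∨ (p = 6 ∧ q = 3) ∨ (p = 6 ∧ q = 4) ∨ (p = 7 ∧ q = 1) ∨ (p = 7 ∧ q = 4) ∨ (p = 7 ∧ q = 5) ∨ (p = 8 ∧ q = 1) ∨ (p = 8 ∧ q = 10) ∨ (p = 9 ∧ q = 2) ∨ (p = 9 ∧ q = 11) ∨ (p = 10 ∧ q = 0) ∨ (p = 10 ∧ q = 8) ∨ (p = 11 ∧ q = 1) ∨ (p = 11 ∧ q = 9)


lemma S_elim {m a b : ℕ} (ha : a < m) (hb : b < m) (h : S m a b) :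
    b = a + 1 ∨ (a + 1 = m ∧ b = 0) ∨ a = b + 1 ∨ (b + 1 = m ∧ a = 0) := by
  rcases h with h | h
  · rcases Nat.lt_or_ge (a + 1) m with h1 | h1
    · rw [Nat.mod_eq_of_lt h1] at h; omega
    · have h2 : a + 1 = m := by omega
      rw [h2, Nat.mod_self] at h; omega
  · rcases Nat.lt_or_ge (b + 1) m with h1 | h1
    · rw [Nat.mod_eq_of_lt h1] at h; omega
    · have h2 : b + 1 = m := by omega
      rw [h2, Nat.mod_self] at h; omega

lemma subval {m a b : ℕ} (ha : a < m) (hb : b < m) (h : (m - b + a) % m = 1) :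
    (b + 1) % m = a := by
  rcases Nat.lt_or_ge (m - b + a) m with h1 | h1
  · rw [Nat.mod_eq_of_lt h1] at h
    have h2 : b + 1 = m := by omega
    rw [h2, Nat.mod_self]; omega
  · rw [Nat.mod_eq_sub_mod h1, Nat.mod_eq_of_lt (by omega)] at h
    rw [Nat.mod_eq_of_lt (by omega)]; omega

lemma cycS {m : ℕ} {x y : Fin m} (h : (SimpleGraph.cycleGraph m).Adj x y) :
    S m x.val y.val := by
  rw [cycleGraph_adj', Fin.sub_def, Fin.sub_def] at h
  rcases h with h | h
  · exact Or.inr (subval x.isLt y.isLt h)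
  · exact Or.inl (subval y.isLt x.isLt h)

lemma stepPair {m n : ℕ} {x y : Fin m × Fin n} (h : (toroidalGrid m n).Adj x y) :
    (S m x.1.val y.1.val ∧ x.2 = y.2) ∨ (x.1 = y.1 ∧ S n x.2.val y.2.val) := by
  unfold toroidalGrid at h
  rcases boxProd_adj.mp h with ⟨h1, h2⟩ | ⟨h1, h2⟩
  · exact Or.inl ⟨cycS h1, h2⟩
  · exact Or.inr ⟨h2, cycS h1⟩

lemma reduceAdj {m n : ℕ} (hm : 4 ≤ m) (hm4 : m % 4 = 0) (hn : 3 ≤ n)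
    {u v : Fin m × Fin n} (h : (toroidalGrid m n).square.Adj u v) :
    (u.2.val = v.2.val ∧ u.1.val % 4 ≠ v.1.val % 4)
    ∨ (HD1 n u.2.val v.2.val ∧
        (v.1.val % 4 = (u.1.val % 4 + 1) % 4 ∨ u.1.val % 4 = (v.1.val % 4 + 1) % 4 ∨
          u.1.val % 4 = v.1.val % 4))
    ∨ (u.1.val % 4 = v.1.val % 4 ∧ HD2 n u.2.val v.2.val) := by
  obtain ⟨hne, h1 | ⟨w, hw1, hw2⟩⟩ := h
  · rcases stepPair h1 with ⟨hS, he⟩ | ⟨he, hS⟩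
    · have h2 := S_elim u.1.isLt v.1.isLt hS
      exact Or.inl ⟨congrArg Fin.val he, by omega⟩
    · have h2 := S_elim u.2.isLt v.2.isLt hS
      refine Or.inr (Or.inl ⟨by unfold HD1; omega, Or.inr (Or.inr (by rw [he]))⟩)
  · rcases stepPair hw1 with ⟨hS1, he1⟩ | ⟨he1, hS1⟩ <;>
      rcases stepPair hw2 with ⟨hS2, he2⟩ | ⟨he2, hS2⟩
    · -- vertical + vertical
      have hj : u.2 = v.2 := he1.trans he2
      have h1 := S_elim u.1.isLt w.1.isLt hS1
      have h2 := S_elim w.1.isLt v.1.isLt hS2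
      have hne1 : u.1.val ≠ v.1.val := by
        intro hh
        exact hne (Prod.ext_iff.mpr ⟨Fin.val_injective hh, hj⟩)
      have hb1 := u.1.isLt; have hb2 := w.1.isLt; have hb3 := v.1.isLt
      exact Or.inl ⟨congrArg Fin.val hj, by omega⟩
    · -- vertical + horizontal
      have h1 := S_elim u.1.isLt w.1.isLt hS1
      have h2 := S_elim w.2.isLt v.2.isLt hS2
      have hiv : w.1.val = v.1.val := congrArg Fin.val he2
      have hju : u.2.val = w.2.val := congrArg Fin.val he1
      have hb1 := u.1.isLt; have hb2 := w.1.isLt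
      refine Or.inr (Or.inl ⟨by unfold HD1; omega, by omega⟩)
    · -- horizontal + vertical
      have h1 := S_elim u.2.isLt w.2.isLt hS1
      have h2 := S_elim w.1.isLt v.1.isLt hS2
      have hiu : u.1.val = w.1.val := congrArg Fin.val he1
      have hjv : w.2.val = v.2.val := congrArg Fin.val he2
      have hb1 := w.1.isLt; have hb2 := v.1.isLt
      refine Or.inr (Or.inl ⟨by unfold HD1; omega, by omega⟩)
    · -- horizontal + horizontal
      have hi : u.1 = v.1 := he1.trans he2
      have h1 := S_elim u.2.isLt w.2.isLt hS1
      have h2 := S_elim w.2.isLt v.2.isLt hS2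
      have hne2 : u.2.val ≠ v.2.val := by
        intro hh
        exact hne (Prod.ext_iff.mpr ⟨hi, Fin.val_injective hh⟩)
      have hb1 := u.2.isLt; have hb2 := w.2.isLt; have hb3 := v.2.isLt
      exact Or.inr (Or.inr ⟨by rw [hi], by unfold HD2; omega⟩)

lemma tb6 : ∀ p, p < 3 → ∀ a, a < 4 → t6v p a < 6 := by decide
lemma tb8 : ∀ p, p < 4 → ∀ a, a < 4 → t8v p a < 8 := by decide
lemma tb7 : ∀ p, p < 12 → ∀ a, a < 4 → t7v p a < 7 := by decide

lemma dec6F : ∀ p q : Fin 3, ∀ a b : Fin 4,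
    (((p : ℕ) = q ∧ (a : ℕ) ≠ b)
      ∨ (((q : ℕ) = (p + 1) % 3 ∨ (p : ℕ) = (q + 1) % 3) ∧
          ((b : ℕ) = (a + 1) % 4 ∨ (a : ℕ) = (b + 1) % 4 ∨ (a : ℕ) = b))
      ∨ ((a : ℕ) = b ∧ ((q : ℕ) = (p + 2) % 3 ∨ (p : ℕ) = (q + 2) % 3))) →
    t6v p a ≠ t6v q b := by decide

lemma dec6 : ∀ p, p < 3 → ∀ q, q < 3 → ∀ a, a < 4 → ∀ b, b < 4 →
    ((p = q ∧ a ≠ b)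
      ∨ ((q = (p + 1) % 3 ∨ p = (q + 1) % 3) ∧ (b = (a + 1) % 4 ∨ a = (b + 1) % 4 ∨ a = b))
      ∨ (a = b ∧ (q = (p + 2) % 3 ∨ p = (q + 2) % 3))) →
    t6v p a ≠ t6v q b :=
  fun p hp q hq a ha b hb h => dec6F ⟨p, hp⟩ ⟨q, hq⟩ ⟨a, ha⟩ ⟨b, hb⟩ h

lemma core1 {n i i' j j' : ℕ} (hn3 : n % 3 = 0) (hn : 3 ≤ n) (hj : j < n) (hj' : j' < n)
    (h : (j = j' ∧ i % 4 ≠ i' % 4)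
       ∨ (HD1 n j j' ∧ (i' % 4 = (i % 4 + 1) % 4 ∨ i % 4 = (i' % 4 + 1) % 4 ∨ i % 4 = i' % 4))
       ∨ (i % 4 = i' % 4 ∧ HD2 n j j')) :
    t6v (j % 3) (i % 4) ≠ t6v (j' % 3) (i' % 4) := by
  apply dec6 _ (Nat.mod_lt _ (by omega)) _ (Nat.mod_lt _ (by omega)) _
    (Nat.mod_lt _ (by omega)) _ (Nat.mod_lt _ (by omega))
  unfold HD1 HD2 at h; omega

lemma dec8F : ∀ j j' a b : Fin 4,
    (((j : ℕ) = j' ∧ (a : ℕ) ≠ b)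
      ∨ (HD1 4 j j' ∧ ((b : ℕ) = (a + 1) % 4 ∨ (a : ℕ) = (b + 1) % 4 ∨ (a : ℕ) = b))
      ∨ ((a : ℕ) = b ∧ HD2 4 j j')) →
    t8v j a ≠ t8v j' b := by decide

lemma dec8 : ∀ j, j < 4 → ∀ j', j' < 4 → ∀ a, a < 4 → ∀ b, b < 4 →
    ((j = j' ∧ a ≠ b)
      ∨ (HD1 4 j j' ∧ (b = (a + 1) % 4 ∨ a = (b + 1) % 4 ∨ a = b))
      ∨ (a = b ∧ HD2 4 j j')) →
    t8v j a ≠ t8v j' b :=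
  fun j hj j' hj' a ha b hb h => dec8F ⟨j, hj⟩ ⟨j', hj'⟩ ⟨a, ha⟩ ⟨b, hb⟩ h

lemma letter_lt {n j : ℕ} : letter n j < 12 := by
  unfold letter; split_ifs <;> omega

lemma letterH1 {n j j' : ℕ} (h0 : n % 3 ≠ 0) (h4 : n ≠ 4) (hn : 3 ≤ n)
    (hj : j < n) (hj' : j' < n) (h : HD1 n j j') :
    pred1 (letter n j) (letter n j') := by
  have hcase : n % 3 = 1 ∨ n % 3 = 2 := by omega
  rcases hcase with h2 | h2
  · -- n % 3 = 1, so n ≥ 7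
    have hn7 : 7 ≤ n := by omega
    have e_lo : ∀ t, t < 4 → letter n t = 8 + t := fun t ht => by
      unfold letter; rw [if_neg (by omega), if_pos ht]
    have e_hi : ∀ t, 4 ≤ t → letter n t = (t - 4) % 3 := fun t ht => by
      unfold letter; rw [if_neg (by omega), if_neg (by omega)]
    unfold HD1 at h
    rcases h with h | h | ⟨h, h'⟩ | ⟨h, h'⟩
    · subst h
      rcases Nat.lt_or_ge j 3 with hj3 | hj3
      · rw [e_lo j (by omega), e_lo (j+1) (by omega)]
        interval_cases j <;> decide
      · rcases Nat.lt_or_ge j 4 with hj4 | hj4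
        · have hj3' : j = 3 := by omega
          subst hj3'
          rw [e_lo 3 (by omega), e_hi 4 (by omega)]; decide
        · rw [e_hi j hj4, e_hi (j+1) (by omega)]
          have e : j + 1 - 4 = j - 3 := by omega
          rw [e]
          have hr : (j-4)%3 = 0 ∧ (j-3)%3 = 1 ∨ (j-4)%3 = 1 ∧ (j-3)%3 = 2 ∨
              (j-4)%3 = 2 ∧ (j-3)%3 = 0 := by omega
          rcases hr with ⟨ha, hb⟩ | ⟨ha, hb⟩ | ⟨ha, hb⟩ <;> rw [ha, hb] <;> decide
    · subst h
      rcases Nat.lt_or_ge j' 3 with hj3 | hj3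
      · rw [e_lo j' (by omega), e_lo (j'+1) (by omega)]
        interval_cases j' <;> decide
      · rcases Nat.lt_or_ge j' 4 with hj4 | hj4
        · have hj3' : j' = 3 := by omega
          subst hj3'
          rw [e_lo 3 (by omega), e_hi 4 (by omega)]; decide
        · rw [e_hi j' hj4, e_hi (j'+1) (by omega)]
          have e : j' + 1 - 4 = j' - 3 := by omega
          rw [e]
          have hr : (j'-4)%3 = 0 ∧ (j'-3)%3 = 1 ∨ (j'-4)%3 = 1 ∧ (j'-3)%3 = 2 ∨
              (j'-4)%3 = 2 ∧ (j'-3)%3 = 0 := by omega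
          rcases hr with ⟨ha, hb⟩ | ⟨ha, hb⟩ | ⟨ha, hb⟩ <;> rw [ha, hb] <;> decide
    · subst h'
      rw [e_lo 0 (by omega), e_hi j (by omega)]
      have : (j - 4) % 3 = 2 := by omega
      rw [this]; decide
    · subst h'
      rw [e_lo 0 (by omega), e_hi j' (by omega)]
      have : (j' - 4) % 3 = 2 := by omega
      rw [this]; decide
  · -- n % 3 = 2, so n ≥ 5
    have hn5 : 5 ≤ n := by omega
    have e_lo : ∀ t, t < 5 → letter n t = 3 + t := fun t ht => by
      unfold letter; rw [if_pos h2, if_pos ht]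
    have e_hi : ∀ t, 5 ≤ t → letter n t = (t - 5) % 3 := fun t ht => by
      unfold letter; rw [if_pos h2, if_neg (by omega)]
    unfold HD1 at h
    rcases h with h | h | ⟨h, h'⟩ | ⟨h, h'⟩
    · subst h
      rcases Nat.lt_or_ge j 4 with hj4 | hj4
      · rw [e_lo j (by omega), e_lo (j+1) (by omega)]
        interval_cases j <;> decide
      · rcases Nat.lt_or_ge j 5 with hj5 | hj5
        · have hj4' : j = 4 := by omega
          subst hj4'
          rw [e_lo 4 (by omega), e_hi 5 (by omega)]; decide
        · rw [e_hi j hj5, e_hi (j+1) (by omega)]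
          have e : j + 1 - 5 = j - 4 := by omega
          rw [e]
          have hr : (j-5)%3 = 0 ∧ (j-4)%3 = 1 ∨ (j-5)%3 = 1 ∧ (j-4)%3 = 2 ∨
              (j-5)%3 = 2 ∧ (j-4)%3 = 0 := by omega
          rcases hr with ⟨ha, hb⟩ | ⟨ha, hb⟩ | ⟨ha, hb⟩ <;> rw [ha, hb] <;> decide
    · subst h
      rcases Nat.lt_or_ge j' 4 with hj4 | hj4
      · rw [e_lo j' (by omega), e_lo (j'+1) (by omega)]
        interval_cases j' <;> decide
      · rcases Nat.lt_or_ge j' 5 with hj5 | hj5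
        · have hj4' : j' = 4 := by omega
          subst hj4'
          rw [e_lo 4 (by omega), e_hi 5 (by omega)]; decide
        · rw [e_hi j' hj5, e_hi (j'+1) (by omega)]
          have e : j' + 1 - 5 = j' - 4 := by omega
          rw [e]
          have hr : (j'-5)%3 = 0 ∧ (j'-4)%3 = 1 ∨ (j'-5)%3 = 1 ∧ (j'-4)%3 = 2 ∨
              (j'-5)%3 = 2 ∧ (j'-4)%3 = 0 := by omega
          rcases hr with ⟨ha, hb⟩ | ⟨ha, hb⟩ | ⟨ha, hb⟩ <;> rw [ha, hb] <;> decide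
    · subst h'
      rw [e_lo 0 (by omega)]
      rcases Nat.lt_or_ge j 5 with hj5 | hj5
      · have : j = 4 := by omega
        subst this; rw [e_lo 4 (by omega)]; decide
      · rw [e_hi j hj5]
        have : (j - 5) % 3 = 2 := by omega
        rw [this]; decide
    · subst h'
      rw [e_lo 0 (by omega)]
      rcases Nat.lt_or_ge j' 5 with hj5 | hj5
      · have : j' = 4 := by omega
        subst this; rw [e_lo 4 (by omega)]; decide
      · rw [e_hi j' hj5]
        have : (j' - 5) % 3 = 2 := by omega
        rw [this]; decide

set_option synthInstance.maxSize 4000 in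
lemma letterH2 {n j j' : ℕ} (h0 : n % 3 ≠ 0) (h4 : n ≠ 4) (hn : 3 ≤ n)
    (hj : j < n) (hj' : j' < n) (h : HD2 n j j') :
    pred2 (letter n j) (letter n j') := by
  have hcase : n % 3 = 1 ∨ n % 3 = 2 := by omega
  rcases hcase with h2 | h2
  · have hn7 : 7 ≤ n := by omega
    have e_lo : ∀ t, t < 4 → letter n t = 8 + t := fun t ht => by
      unfold letter; rw [if_neg (by omega), if_pos ht]
    have e_hi : ∀ t, 4 ≤ t → letter n t = (t - 4) % 3 := fun t ht => by
      unfold letter; rw [if_neg (by omega), if_neg (by omega)]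
    unfold HD2 at h
    rcases h with h | h | h | h
    · subst h
      rcases Nat.lt_or_ge j 2 with hj2 | hj2
      · rw [e_lo j (by omega), e_lo (j+2) (by omega)]
        interval_cases j <;> decide
      · rcases Nat.lt_or_ge j 4 with hj4 | hj4
        · rw [e_lo j (by omega), e_hi (j+2) (by omega)]
          have hr : j = 2 ∧ (j+2-4)%3 = 0 ∨ j = 3 ∧ (j+2-4)%3 = 1 := by omega
          rcases hr with ⟨ha, hb⟩ | ⟨ha, hb⟩ <;> subst ha <;> rw [hb] <;> decide
        · rw [e_hi j hj4, e_hi (j+2) (by omega)]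
          have e : j + 2 - 4 = j - 2 := by omega
          rw [e]
          have hr : (j-4)%3 = 0 ∧ (j-2)%3 = 2 ∨ (j-4)%3 = 1 ∧ (j-2)%3 = 0 ∨
              (j-4)%3 = 2 ∧ (j-2)%3 = 1 := by omega
          rcases hr with ⟨ha, hb⟩ | ⟨ha, hb⟩ | ⟨ha, hb⟩ <;> rw [ha, hb] <;> decide
    · subst h
      rcases Nat.lt_or_ge j' 2 with hj2 | hj2
      · rw [e_lo j' (by omega), e_lo (j'+2) (by omega)]
        interval_cases j' <;> decide
      · rcases Nat.lt_or_ge j' 4 with hj4 | hj4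
        · rw [e_lo j' (by omega), e_hi (j'+2) (by omega)]
          have hr : j' = 2 ∧ (j'+2-4)%3 = 0 ∨ j' = 3 ∧ (j'+2-4)%3 = 1 := by omega
          rcases hr with ⟨ha, hb⟩ | ⟨ha, hb⟩ <;> subst ha <;> rw [hb] <;> decide
        · rw [e_hi j' hj4, e_hi (j'+2) (by omega)]
          have e : j' + 2 - 4 = j' - 2 := by omega
          rw [e]
          have hr : (j'-4)%3 = 0 ∧ (j'-2)%3 = 2 ∨ (j'-4)%3 = 1 ∧ (j'-2)%3 = 0 ∨
              (j'-4)%3 = 2 ∧ (j'-2)%3 = 1 := by omega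
          rcases hr with ⟨ha, hb⟩ | ⟨ha, hb⟩ | ⟨ha, hb⟩ <;> rw [ha, hb] <;> decide
    · -- j + 2 = j' + n : (j = n-2, j' = 0) or (j = n-1, j' = 1)
      have hr : (j + 2 = n ∧ j' = 0) ∨ (j + 1 = n ∧ j' = 1) := by omega
      rcases hr with ⟨ha, hb⟩ | ⟨ha, hb⟩ <;> subst hb
      · rw [e_lo 0 (by omega), e_hi j (by omega)]
        have : (j - 4) % 3 = 1 := by omega
        rw [this]; decide
      · rw [e_lo 1 (by omega), e_hi j (by omega)]
        have : (j - 4) % 3 = 2 := by omega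
        rw [this]; decide
    · have hr : (j' + 2 = n ∧ j = 0) ∨ (j' + 1 = n ∧ j = 1) := by omega
      rcases hr with ⟨ha, hb⟩ | ⟨ha, hb⟩ <;> subst hb
      · rw [e_lo 0 (by omega), e_hi j' (by omega)]
        have : (j' - 4) % 3 = 1 := by omega
        rw [this]; decide
      · rw [e_lo 1 (by omega), e_hi j' (by omega)]
        have : (j' - 4) % 3 = 2 := by omega
        rw [this]; decide
  · have hn5 : 5 ≤ n := by omega
    have e_lo : ∀ t, t < 5 → letter n t = 3 + t := fun t ht => by
      unfold letter; rw [if_pos h2, if_pos ht]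
    have e_hi : ∀ t, 5 ≤ t → letter n t = (t - 5) % 3 := fun t ht => by
      unfold letter; rw [if_pos h2, if_neg (by omega)]
    unfold HD2 at h
    rcases h with h | h | h | h
    · subst h
      rcases Nat.lt_or_ge j 3 with hj3 | hj3
      · rw [e_lo j (by omega), e_lo (j+2) (by omega)]
        interval_cases j <;> decide
      · rcases Nat.lt_or_ge j 5 with hj5 | hj5
        · rw [e_lo j (by omega), e_hi (j+2) (by omega)]
          have hr : j = 3 ∧ (j+2-5)%3 = 0 ∨ j = 4 ∧ (j+2-5)%3 = 1 := by omega
          rcases hr with ⟨ha, hb⟩ | ⟨ha, hb⟩ <;> subst ha <;> rw [hb] <;> decide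
        · rw [e_hi j hj5, e_hi (j+2) (by omega)]
          have e : j + 2 - 5 = j - 3 := by omega
          rw [e]
          have hr : (j-5)%3 = 0 ∧ (j-3)%3 = 2 ∨ (j-5)%3 = 1 ∧ (j-3)%3 = 0 ∨
              (j-5)%3 = 2 ∧ (j-3)%3 = 1 := by omega
          rcases hr with ⟨ha, hb⟩ | ⟨ha, hb⟩ | ⟨ha, hb⟩ <;> rw [ha, hb] <;> decide
    · subst h
      rcases Nat.lt_or_ge j' 3 with hj3 | hj3
      · rw [e_lo j' (by omega), e_lo (j'+2) (by omega)]
        interval_cases j' <;> decide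
      · rcases Nat.lt_or_ge j' 5 with hj5 | hj5
        · rw [e_lo j' (by omega), e_hi (j'+2) (by omega)]
          have hr : j' = 3 ∧ (j'+2-5)%3 = 0 ∨ j' = 4 ∧ (j'+2-5)%3 = 1 := by omega
          rcases hr with ⟨ha, hb⟩ | ⟨ha, hb⟩ <;> subst ha <;> rw [hb] <;> decide
        · rw [e_hi j' hj5, e_hi (j'+2) (by omega)]
          have e : j' + 2 - 5 = j' - 3 := by omega
          rw [e]
          have hr : (j'-5)%3 = 0 ∧ (j'-3)%3 = 2 ∨ (j'-5)%3 = 1 ∧ (j'-3)%3 = 0 ∨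
              (j'-5)%3 = 2 ∧ (j'-3)%3 = 1 := by omega
          rcases hr with ⟨ha, hb⟩ | ⟨ha, hb⟩ | ⟨ha, hb⟩ <;> rw [ha, hb] <;> decide
    · have hr : (j + 2 = n ∧ j' = 0) ∨ (j + 1 = n ∧ j' = 1) := by omega
      rcases hr with ⟨ha, hb⟩ | ⟨ha, hb⟩ <;> subst hb
      · rcases Nat.lt_or_ge j 5 with hj5 | hj5
        · have : j = 3 := by omega
          subst this; rw [e_lo 0 (by omega), e_lo 3 (by omega)]; decide
        · rw [e_lo 0 (by omega), e_hi j (by omega)]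
          have : (j - 5) % 3 = 1 := by omega
          rw [this]; decide
      · rcases Nat.lt_or_ge j 5 with hj5 | hj5
        · have : j = 4 := by omega
          subst this; rw [e_lo 1 (by omega), e_lo 4 (by omega)]; decide
        · rw [e_lo 1 (by omega), e_hi j (by omega)]
          have : (j - 5) % 3 = 2 := by omega
          rw [this]; decide
    · have hr : (j' + 2 = n ∧ j = 0) ∨ (j' + 1 = n ∧ j = 1) := by omega
      rcases hr with ⟨ha, hb⟩ | ⟨ha, hb⟩ <;> subst hb
      · rcases Nat.lt_or_ge j' 5 with hj5 | hj5
        · have : j' = 3 := by omega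
          subst this; rw [e_lo 0 (by omega), e_lo 3 (by omega)]; decide
        · rw [e_lo 0 (by omega), e_hi j' (by omega)]
          have : (j' - 5) % 3 = 1 := by omega
          rw [this]; decide
      · rcases Nat.lt_or_ge j' 5 with hj5 | hj5
        · have : j' = 4 := by omega
          subst this; rw [e_lo 1 (by omega), e_lo 4 (by omega)]; decide
        · rw [e_lo 1 (by omega), e_hi j' (by omega)]
          have : (j' - 5) % 3 = 2 := by omega
          rw [this]; decide

lemma dec7aF : ∀ p : Fin 12, ∀ a b : Fin 4, (a : ℕ) ≠ b → t7v p a ≠ t7v p b := by decide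

lemma dec7a : ∀ p, p < 12 → ∀ a, a < 4 → ∀ b, b < 4 → a ≠ b → t7v p a ≠ t7v p b :=
  fun p hp a ha b hb h => dec7aF ⟨p, hp⟩ ⟨a, ha⟩ ⟨b, hb⟩ h

set_option synthInstance.maxSize 4000 in
lemma dec7bF : ∀ p q : Fin 12, ∀ a b : Fin 4, pred1 p q →
    ((b : ℕ) = (a + 1) % 4 ∨ (a : ℕ) = (b + 1) % 4 ∨ (a : ℕ) = b) → t7v p a ≠ t7v q b := by
  decide

lemma dec7b : ∀ p, p < 12 → ∀ q, q < 12 → pred1 p q → ∀ a, a < 4 → ∀ b, b < 4 →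
    (b = (a + 1) % 4 ∨ a = (b + 1) % 4 ∨ a = b) → t7v p a ≠ t7v q b :=
  fun p hp q hq hpq a ha b hb h => dec7bF ⟨p, hp⟩ ⟨q, hq⟩ ⟨a, ha⟩ ⟨b, hb⟩ hpq h

set_option synthInstance.maxSize 4000 in
lemma dec7cF : ∀ p q : Fin 12, ∀ a : Fin 4, pred2 p q → t7v p a ≠ t7v q a := by decide

lemma dec7c : ∀ p, p < 12 → ∀ q, q < 12 → pred2 p q → ∀ a, a < 4 →
    t7v p a ≠ t7v q a :=
  fun p hp q hq hpq a ha => dec7cF ⟨p, hp⟩ ⟨q, hq⟩ ⟨a, ha⟩ hpq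

lemma core3 {n i i' j j' : ℕ} (h0 : n % 3 ≠ 0) (h4 : n ≠ 4) (hn : 3 ≤ n)
    (hj : j < n) (hj' : j' < n)
    (h : (j = j' ∧ i % 4 ≠ i' % 4)
       ∨ (HD1 n j j' ∧ (i' % 4 = (i % 4 + 1) % 4 ∨ i % 4 = (i' % 4 + 1) % 4 ∨ i % 4 = i' % 4))
       ∨ (i % 4 = i' % 4 ∧ HD2 n j j')) :
    t7v (letter n j) (i % 4) ≠ t7v (letter n j') (i' % 4) := by
  rcases h with ⟨hjj, hii⟩ | ⟨hH, hV⟩ | ⟨hii, hH⟩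
  · subst hjj
    exact dec7a _ letter_lt _ (Nat.mod_lt _ (by omega)) _ (Nat.mod_lt _ (by omega)) hii
  · exact dec7b _ letter_lt _ letter_lt (letterH1 h0 h4 hn hj hj' hH) _
      (Nat.mod_lt _ (by omega)) _ (Nat.mod_lt _ (by omega)) hV
  · rw [← hii]
    exact dec7c _ letter_lt _ letter_lt (letterH2 h0 h4 hn hj hj' hH) _
      (Nat.mod_lt _ (by omega))

theorem stmt5 (k n : ℕ) (hk : 1 ≤ k) (hn : 3 ≤ n) :
    (n % 3 = 0 → (toroidalGrid (4 * k) n).square.chromaticNumber ≤ 6) ∧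
    (n = 4 → (toroidalGrid (4 * k) n).square.chromaticNumber ≤ 8) ∧
    (n % 3 ≠ 0 → n ≠ 4 → (toroidalGrid (4 * k) n).square.chromaticNumber ≤ 7) := by
  have hm : 4 ≤ 4 * k := by omega
  have hm4 : 4 * k % 4 = 0 := by omega
  refine ⟨fun h3 => ?_, fun h4 => ?_, fun h3 h4 => ?_⟩
  · have hcol : (toroidalGrid (4 * k) n).square.Colorable 6 := by
      refine ⟨Coloring.mk (fun u => ⟨t6v (u.2.val % 3) (u.1.val % 4),
        tb6 _ (Nat.mod_lt _ (by omega)) _ (Nat.mod_lt _ (by omega))⟩) ?_⟩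
      intro u v hadj
      have hr := reduceAdj hm hm4 hn hadj
      simp only [ne_eq, Fin.mk.injEq]
      exact core1 h3 hn u.2.isLt v.2.isLt hr
    exact_mod_cast hcol.chromaticNumber_le
  · subst h4
    have hcol : (toroidalGrid (4 * k) 4).square.Colorable 8 := by
      refine ⟨Coloring.mk (fun u => ⟨t8v u.2.val (u.1.val % 4),
        tb8 _ u.2.isLt _ (Nat.mod_lt _ (by omega))⟩) ?_⟩
      intro u v hadj
      have hr := reduceAdj hm hm4 hn hadj
      simp only [ne_eq, Fin.mk.injEq]
      exact dec8 _ u.2.isLt _ v.2.isLt _ (Nat.mod_lt _ (by omega)) _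
        (Nat.mod_lt _ (by omega)) hr
    exact_mod_cast hcol.chromaticNumber_le
  · have hcol : (toroidalGrid (4 * k) n).square.Colorable 7 := by
      refine ⟨Coloring.mk (fun u => ⟨t7v (letter n u.2.val) (u.1.val % 4),
        tb7 _ letter_lt _ (Nat.mod_lt _ (by omega))⟩) ?_⟩
      intro u v hadj
      have hr := reduceAdj hm hm4 hn hadj
      simp only [ne_eq, Fin.mk.injEq]
      exact core3 h3 h4 hn u.2.isLt v.2.isLt hr
    exact_mod_cast hcol.chromaticNumber_le
end

section
/- For every integer n ≥ 5, the chromatic number of the square of T_{5,n} = C_5 □ C_n equals: 5 if n ≡ 0 (mod 5); 7 if n = 7; and 6 otherwise. -/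
open SimpleGraph

namespace TGAux

open Fin.CommRing

def validT {α : Type*} [DecidableEq α] (f g h : Fin 5 → α) : Prop :=
  (∀ i i' : Fin 5, i ≠ i' → f i ≠ f i') ∧
  (∀ i i' : Fin 5, (i - i' = 1 ∨ i' - i = 1 ∨ i = i') → f i ≠ g i') ∧
  (∀ i : Fin 5, f i ≠ h i)

instance {α : Type*} [DecidableEq α] (f g h : Fin 5 → α) : Decidable (validT f g h) := by
  unfold validT; infer_instance

lemma cyc_adj {n : ℕ} (hn : 2 ≤ n) [NeZero n] {u v : Fin n} :
    (cycleGraph n).Adj u v ↔ u - v = 1 ∨ v - u = 1 := by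
  rw [cycleGraph_adj']
  have h1 : (1 : Fin n).val = 1 := by rw [Fin.val_one']; exact Nat.mod_eq_of_lt (by omega)
  constructor
  · rintro (h | h)
    exacts [Or.inl (Fin.ext (by rw [h1]; exact h)),
            Or.inr (Fin.ext (by rw [h1]; exact h))]
  · rintro (h | h)
    exacts [Or.inl (by rw [h, h1]), Or.inr (by rw [h, h1])]

def near (a a' : Fin 5) : Prop := a - a' = 1 ∨ a' - a = 1 ∨ a = a'

instance (a a' : Fin 5) : Decidable (near a a') := by unfold near; infer_instance

lemma near_of_adj {x y : Fin 5} (h : (cycleGraph 5).Adj x y) : near x y := by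
  rw [cyc_adj (by omega)] at h
  exact h.elim Or.inl (fun e => Or.inr (Or.inl e))

lemma near_symm {x y : Fin 5} (h : near x y) : near y x := by revert h; revert x y; decide

lemma near_refl (x : Fin 5) : near x x := Or.inr (Or.inr rfl)

lemma square_adj_cases {n : ℕ} (hn : 5 ≤ n) [NeZero n] {a a' : Fin 5} {b b' : Fin n}
    (h : (toroidalGrid 5 n).square.Adj (a, b) (a', b')) :
    (b' = b ∧ a' ≠ a) ∨
    ((b' = b + 1 ∧ near a a') ∨ (b = b' + 1 ∧ near a' a)) ∨
    ((b' = b + 2 ∧ a' = a) ∨ (b = b' + 2 ∧ a' = a)) := by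
  have h2n : 2 ≤ n := by omega
  obtain ⟨hne, hadj | ⟨⟨wa, wb⟩, h1, h2⟩⟩ := h
  · rw [toroidalGrid, boxProd_adj] at hadj
    rcases hadj with ⟨hr, hbb⟩ | ⟨hc, haa⟩
    · dsimp only at hr hbb
      exact Or.inl ⟨hbb.symm, fun e => (Adj.ne hr) e.symm⟩
    · dsimp only at haa hc
      rw [cyc_adj h2n] at hc
      rcases hc with hc | hc
      · exact Or.inr (Or.inl (Or.inr ⟨sub_eq_iff_eq_add'.mp hc, by rw [← haa]; exact near_refl a⟩))
      · exact Or.inr (Or.inl (Or.inl ⟨sub_eq_iff_eq_add'.mp hc, Or.inr (Or.inr haa)⟩))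
  · rw [toroidalGrid, boxProd_adj] at h1 h2
    rcases h1 with ⟨hr1, hb1⟩ | ⟨hc1, ha1⟩
    · rcases h2 with ⟨hr2, hb2⟩ | ⟨hc2, ha2⟩
      · -- row,row
        dsimp only at hr1 hb1 hr2 hb2
        refine Or.inl ⟨(hb1.trans hb2).symm, fun e => hne (Prod.ext e.symm (hb1.trans hb2))⟩
      · -- row then col
        dsimp only at hr1 hb1 hc2 ha2
        have hnear : near a a' := near_of_adj (ha2 ▸ hr1)
        rw [← hb1] at hc2
        rw [cyc_adj h2n] at hc2
        rcases hc2 with hc | hc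
        · exact Or.inr (Or.inl (Or.inr ⟨sub_eq_iff_eq_add'.mp hc, near_symm hnear⟩))
        · exact Or.inr (Or.inl (Or.inl ⟨sub_eq_iff_eq_add'.mp hc, hnear⟩))
    · rcases h2 with ⟨hr2, hb2⟩ | ⟨hc2, ha2⟩
      · -- col then row
        dsimp only at hc1 ha1 hr2 hb2
        have hnear : near a a' := near_of_adj (ha1.symm ▸ hr2)
        rw [hb2] at hc1
        rw [cyc_adj h2n] at hc1
        rcases hc1 with hc | hc
        · exact Or.inr (Or.inl (Or.inr ⟨sub_eq_iff_eq_add'.mp hc, near_symm hnear⟩))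
        · exact Or.inr (Or.inl (Or.inl ⟨sub_eq_iff_eq_add'.mp hc, hnear⟩))
      · -- col,col
        dsimp only at hc1 ha1 hc2 ha2
        have haa : a' = a := (ha1.trans ha2).symm
        rw [cyc_adj h2n] at hc1 hc2
        have hane : b' ≠ b := fun e => hne (Prod.ext (ha1.trans ha2) e.symm)
        rcases hc1 with hc1 | hc1 <;> rcases hc2 with hc2 | hc2 <;>
          rw [sub_eq_iff_eq_add'] at hc1 hc2
        · refine Or.inr (Or.inr (Or.inr ⟨?_, haa⟩))
          rw [hc1, hc2]; ring
        · exact absurd (hc2.trans hc1.symm) hane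
        · exact absurd (add_right_cancel (hc1.symm.trans hc2) : b = b').symm hane
        · refine Or.inr (Or.inr (Or.inl ⟨?_, haa⟩))
          rw [hc2, hc1]; ring

lemma fin_add_one_val' {n : ℕ} (hn : 5 ≤ n) [NeZero n] (b : Fin n) :
    (b + 1).val = (b.val + 1) % n := by
  have h1 : (1 : Fin n).val = 1 := by
    rw [Fin.val_one']; exact Nat.mod_eq_of_lt (by omega)
  rw [Fin.add_def, h1]

lemma fin_two_val {n : ℕ} (hn : 5 ≤ n) [NeZero n] : (2 : Fin n).val = 2 := by
  show 2 % n = 2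
  exact Nat.mod_eq_of_lt (by omega)

lemma fin_add_two_val' {n : ℕ} (hn : 5 ≤ n) [NeZero n] (b : Fin n) :
    (b + 2).val = (b.val + 2) % n := by
  rw [Fin.add_def, fin_two_val hn]

lemma colorable_of_valid {m n : ℕ} (hn : 5 ≤ n) (col : ℕ → Fin 5 → Fin m)
    (hval : ∀ k, k < n → validT (col k) (col ((k + 1) % n)) (col ((k + 2) % n))) :
    (toroidalGrid 5 n).square.Colorable m := by
  haveI : NeZero n := ⟨by omega⟩
  refine ⟨Coloring.mk (fun v => col v.2.val v.1) ?_⟩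
  rintro ⟨a, b⟩ ⟨a', b'⟩ hadj hc
  dsimp only at hc
  rcases square_adj_cases hn hadj with ⟨hbb, hne⟩ |
    (⟨hb, hnear⟩ | ⟨hb, hnear⟩) | (⟨hb, haa⟩ | ⟨hb, haa⟩)
  · rw [hbb] at hc
    exact (hval b.val b.isLt).1 a a' (Ne.symm hne) hc
  · have e : b'.val = (b.val + 1) % n := by rw [hb, fin_add_one_val' hn]
    rw [e] at hc
    exact (hval b.val b.isLt).2.1 a a' hnear hc
  · have e : b.val = (b'.val + 1) % n := by rw [hb, fin_add_one_val' hn]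
    rw [e] at hc
    exact (hval b'.val b'.isLt).2.1 a' a hnear hc.symm
  · have e : b'.val = (b.val + 2) % n := by rw [hb, fin_add_two_val' hn]
    rw [e, haa] at hc
    exact (hval b.val b.isLt).2.2 a hc
  · have e : b.val = (b'.val + 2) % n := by rw [hb, fin_add_two_val' hn]
    rw [e, ← haa] at hc
    exact (hval b'.val b'.isLt).2.2 a' hc.symm

-- constructive adjacency lemmas (for lower bounds)

lemma adj_same_col {n : ℕ} (hn : 5 ≤ n) {a a' : Fin 5} (h : a ≠ a') (b : Fin n) :
    (toroidalGrid 5 n).square.Adj (a, b) (a', b) := by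
  have key : ∀ x y : Fin 5, x ≠ y →
      (cycleGraph 5).Adj x y ∨ ∃ z, (cycleGraph 5).Adj x z ∧ (cycleGraph 5).Adj z y := by
    decide
  refine ⟨fun e => h (congrArg Prod.fst e), ?_⟩
  rcases key a a' h with hadj | ⟨z, h1, h2⟩
  · exact Or.inl (by rw [toroidalGrid, boxProd_adj]; exact Or.inl ⟨hadj, rfl⟩)
  · refine Or.inr ⟨(z, b), ?_, ?_⟩ <;> rw [toroidalGrid, boxProd_adj]
    · exact Or.inl ⟨h1, rfl⟩
    · exact Or.inl ⟨h2, rfl⟩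

lemma adj_col_step {n : ℕ} (hn : 5 ≤ n) {a a' : Fin 5} {b b' : Fin n}
    (hcyc : (cycleGraph n).Adj b b') (hnear : near a a') :
    (toroidalGrid 5 n).square.Adj (a, b) (a', b') := by
  haveI : NeZero n := ⟨by omega⟩
  have h2n : 2 ≤ n := by omega
  refine ⟨fun e => hcyc.ne (congrArg Prod.snd e), ?_⟩
  rcases hnear with e | e | e
  · have h5 : (cycleGraph 5).Adj a a' := (cyc_adj (by omega)).mpr (Or.inl e)
    refine Or.inr ⟨(a', b), ?_, ?_⟩ <;> rw [toroidalGrid, boxProd_adj]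
    · exact Or.inl ⟨h5, rfl⟩
    · exact Or.inr ⟨hcyc, rfl⟩
  · have h5 : (cycleGraph 5).Adj a a' := (cyc_adj (by omega)).mpr (Or.inr e)
    refine Or.inr ⟨(a', b), ?_, ?_⟩ <;> rw [toroidalGrid, boxProd_adj]
    · exact Or.inl ⟨h5, rfl⟩
    · exact Or.inr ⟨hcyc, rfl⟩
  · exact Or.inl (by rw [toroidalGrid, boxProd_adj]; exact Or.inr ⟨hcyc, e⟩)

lemma adj_col_skip {n : ℕ} (hn : 5 ≤ n) {b wb b' : Fin n}
    (h1 : (cycleGraph n).Adj b wb) (h2 : (cycleGraph n).Adj wb b') (hbb : b ≠ b')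
    (a : Fin 5) : (toroidalGrid 5 n).square.Adj (a, b) (a, b') := by
  refine ⟨fun e => hbb (congrArg Prod.snd e), ?_⟩
  refine Or.inr ⟨(a, wb), ?_, ?_⟩ <;> rw [toroidalGrid, boxProd_adj]
  · exact Or.inr ⟨h1, rfl⟩
  · exact Or.inr ⟨h2, rfl⟩

lemma cyc_adj_succ {n : ℕ} (hn : 5 ≤ n) [NeZero n] (b : Fin n) :
    (cycleGraph n).Adj b (b + 1) := by
  haveI : NeZero n := ⟨by omega⟩
  exact (cyc_adj (by omega)).mpr (Or.inr (by ring_nf))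

lemma fin_add_one_ne {n : ℕ} (hn : 5 ≤ n) [NeZero n] (b : Fin n) : b ≠ b + 1 := by
  intro e
  have : (0 : Fin n) = 1 := by
    have := e
    nth_rewrite 1 [← add_zero b] at this
    exact add_left_cancel this
  have h1 : (1 : Fin n).val = 1 := by
    rw [Fin.val_one']; exact Nat.mod_eq_of_lt (by omega)
  rw [Fin.ext_iff, h1] at this
  simp at this

lemma fin_add_two_ne {n : ℕ} (hn : 5 ≤ n) [NeZero n] (b : Fin n) : b ≠ b + 2 := by
  intro e
  have : (0 : Fin n) = 2 := by
    nth_rewrite 1 [← add_zero b] at e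
    exact add_left_cancel e
  rw [Fin.ext_iff, fin_two_val hn] at this
  simp at this

def dcolN (t : ℕ) (i : Fin 5) : ℕ := (2 * i.val + t) % 5

def dcol5 (t : ℕ) (i : Fin 5) : Fin 5 := ⟨dcolN t i, Nat.mod_lt _ (by omega)⟩

def dcol6 (t : ℕ) (i : Fin 5) : Fin 6 :=
  ⟨dcolN t i, by have := Nat.mod_lt (2 * i.val + t) (show 0 < 5 by omega); unfold dcolN; omega⟩

lemma dcol5_mod (t : ℕ) : dcol5 t = dcol5 (t % 5) :=
  funext fun i => Fin.ext (show (2 * i.val + t) % 5 = (2 * i.val + t % 5) % 5 by omega)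

lemma dcol6_mod (t : ℕ) : dcol6 t = dcol6 (t % 5) :=
  funext fun i => Fin.ext (show (2 * i.val + t) % 5 = (2 * i.val + t % 5) % 5 by omega)

lemma diag5_valid (t : ℕ) :
    validT (dcol5 (t % 5)) (dcol5 ((t + 1) % 5)) (dcol5 ((t + 2) % 5)) := by
  have h : ∀ s, s < 5 → validT (dcol5 s) (dcol5 ((s + 1) % 5)) (dcol5 ((s + 2) % 5)) := by decide
  have e1 : (t + 1) % 5 = (t % 5 + 1) % 5 := by omega
  have e2 : (t + 2) % 5 = (t % 5 + 2) % 5 := by omega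
  rw [e1, e2]
  exact h (t % 5) (by omega)

lemma diag6_valid (t : ℕ) :
    validT (dcol6 (t % 5)) (dcol6 ((t + 1) % 5)) (dcol6 ((t + 2) % 5)) := by
  have h : ∀ s, s < 5 → validT (dcol6 s) (dcol6 ((s + 1) % 5)) (dcol6 ((s + 2) % 5)) := by decide
  have e1 : (t + 1) % 5 = (t % 5 + 1) % 5 := by omega
  have e2 : (t + 2) % 5 = (t % 5 + 2) % 5 := by omega
  rw [e1, e2]
  exact h (t % 5) (by omega)

lemma colorable_div5 {n : ℕ} (hn : 5 ≤ n) (h5 : n % 5 = 0) :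
    (toroidalGrid 5 n).square.Colorable 5 := by
  apply colorable_of_valid hn dcol5
  intro k hk
  have hd : 5 ∣ n := Nat.dvd_of_mod_eq_zero h5
  rw [dcol5_mod ((k + 1) % n), dcol5_mod ((k + 2) % n), dcol5_mod k,
    Nat.mod_mod_of_dvd _ hd, Nat.mod_mod_of_dvd _ hd]
  exact diag5_valid k

lemma seam_colorable (n L : ℕ) (hL : 3 ≤ L) (seam : ℕ → Fin 5 → Fin 6)
    (hn : 5 ≤ n) (hmL : L + 5 ≤ n) (hm5 : (n - L) % 5 = 0)
    (h1 : validT (dcol6 3) (dcol6 4) (seam 0))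
    (h2 : validT (dcol6 4) (seam 0) (seam 1))
    (h3 : ∀ t, t + 2 < L → validT (seam t) (seam (t + 1)) (seam (t + 2)))
    (h4 : validT (seam (L - 2)) (seam (L - 1)) (dcol6 0))
    (h5 : validT (seam (L - 1)) (dcol6 0) (dcol6 1)) :
    (toroidalGrid 5 n).square.Colorable 6 := by
  set m := n - L with hm
  apply colorable_of_valid hn (fun j => if j < m then dcol6 j else seam (j - m))
  intro k hk
  have hm1 : 5 ≤ m := by omega
  by_cases c1 : k + 2 < m
  · rw [Nat.mod_eq_of_lt (show k + 1 < n by omega), Nat.mod_eq_of_lt (show k + 2 < n by omega),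
      if_pos (show k < m by omega), if_pos (show k + 1 < m by omega), if_pos c1,
      dcol6_mod k, dcol6_mod (k + 1), dcol6_mod (k + 2)]
    exact diag6_valid k
  · by_cases c2 : k + 2 = m
    · rw [Nat.mod_eq_of_lt (show k + 1 < n by omega), Nat.mod_eq_of_lt (show k + 2 < n by omega),
        if_pos (show k < m by omega), if_pos (show k + 1 < m by omega),
        if_neg (show ¬ k + 2 < m by omega), dcol6_mod k, dcol6_mod (k + 1),
        show k % 5 = 3 by omega, show (k + 1) % 5 = 4 by omega,
        show k + 2 - m = 0 by omega]
      exact h1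
    · by_cases c3 : k + 1 = m
      · rw [Nat.mod_eq_of_lt (show k + 1 < n by omega), Nat.mod_eq_of_lt (show k + 2 < n by omega),
          if_pos (show k < m by omega), if_neg (show ¬ k + 1 < m by omega),
          if_neg (show ¬ k + 2 < m by omega), dcol6_mod k,
          show k % 5 = 4 by omega, show k + 1 - m = 0 by omega, show k + 2 - m = 1 by omega]
        exact h2
      · by_cases c4 : k + 2 < n
        · have hmk : m ≤ k := by omega
          rw [Nat.mod_eq_of_lt (show k + 1 < n by omega), Nat.mod_eq_of_lt c4,
            if_neg (show ¬ k < m by omega), if_neg (show ¬ k + 1 < m by omega),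
            if_neg (show ¬ k + 2 < m by omega),
            show k + 1 - m = (k - m) + 1 by omega, show k + 2 - m = (k - m) + 2 by omega]
          exact h3 (k - m) (by omega)
        · by_cases c5 : k + 2 = n
          · rw [Nat.mod_eq_of_lt (show k + 1 < n by omega), c5, Nat.mod_self,
              if_neg (show ¬ k < m by omega), if_neg (show ¬ k + 1 < m by omega),
              if_pos (show 0 < m by omega),
              show k - m = L - 2 by omega, show k + 1 - m = L - 1 by omega]
            exact h4
          · have c6 : k + 1 = n := by omega
            have e2 : (k + 2) % n = 1 := by
              rw [show k + 2 = n + 1 by omega, Nat.add_mod_left]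
              exact Nat.mod_eq_of_lt (by omega)
            rw [c6, Nat.mod_self, e2,
              if_neg (show ¬ k < m by omega), if_pos (show 0 < m by omega),
              if_pos (show 1 < m by omega), show k - m = L - 1 by omega]
            exact h5

def seamA : ℕ → Fin 5 → Fin 6
  | 0 => ![0,2,4,1,3]
  | 1 => ![1,3,0,2,5]
  | 2 => ![2,5,1,3,4]
  | 3 => ![3,4,2,5,0]
  | 4 => ![5,0,3,4,1]
  | 5 => ![4,1,5,0,2]
  | _ => ![0,2,4,1,3]

def seamB : ℕ → Fin 5 → Fin 6
  | 0 => ![0,2,4,1,3]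
  | 1 => ![1,3,0,2,5]
  | 2 => ![2,5,1,3,4]
  | 3 => ![3,4,2,5,0]
  | 4 => ![5,0,3,4,1]
  | 5 => ![4,1,5,0,2]
  | 6 => ![0,2,4,1,3]
  | 7 => ![1,3,0,2,4]
  | 8 => ![2,4,1,3,0]
  | 9 => ![3,0,2,4,1]
  | 10 => ![4,1,3,0,2]
  | 11 => ![0,2,4,1,3]
  | 12 => ![1,3,0,2,5]
  | 13 => ![2,5,1,3,4]
  | 14 => ![3,4,2,5,0]
  | 15 => ![5,0,3,4,1]
  | 16 => ![4,1,5,0,2]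
  | _ => ![0,2,4,1,3]

def seamC : ℕ → Fin 5 → Fin 6
  | 0 => ![0,2,4,1,3]
  | 1 => ![1,3,0,2,4]
  | 2 => ![2,4,1,3,0]
  | 3 => ![3,0,2,4,5]
  | 4 => ![1,5,3,0,2]
  | 5 => ![0,4,1,5,3]
  | 6 => ![5,3,2,4,1]
  | 7 => ![4,1,5,0,2]
  | _ => ![0,2,4,1,3]

def seamD : ℕ → Fin 5 → Fin 6
  | 0 => ![0,2,4,1,3]
  | 1 => ![1,3,0,2,4]
  | 2 => ![2,4,1,3,0]
  | 3 => ![3,0,2,4,1]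
  | 4 => ![4,1,3,0,5]
  | 5 => ![0,5,4,2,3]
  | 6 => ![2,3,1,5,4]
  | 7 => ![5,0,2,3,1]
  | 8 => ![4,1,5,0,2]
  | _ => ![0,2,4,1,3]

def colL6 : ℕ → Fin 5 → Fin 6
  | 0 => ![0,1,2,3,4]
  | 1 => ![2,3,0,1,5]
  | 2 => ![1,4,5,2,0]
  | 3 => ![5,0,1,4,3]
  | 4 => ![4,2,3,5,1]
  | 5 => ![3,5,4,0,2]
  | _ => ![0,2,4,1,3]

def colL8 : ℕ → Fin 5 → Fin 6
  | 0 => ![0,1,2,3,4]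
  | 1 => ![2,3,0,1,5]
  | 2 => ![1,4,5,2,0]
  | 3 => ![5,0,1,3,4]
  | 4 => ![2,3,4,0,1]
  | 5 => ![0,1,5,2,3]
  | 6 => ![4,2,3,1,5]
  | 7 => ![3,5,4,0,2]
  | _ => ![0,2,4,1,3]

def colL9 : ℕ → Fin 5 → Fin 6
  | 0 => ![0,1,2,3,4]
  | 1 => ![2,3,0,5,1]
  | 2 => ![4,5,1,2,3]
  | 3 => ![0,2,3,4,5]
  | 4 => ![3,1,5,0,2]
  | 5 => ![5,0,4,3,1]
  | 6 => ![4,3,1,2,0]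
  | 7 => ![1,2,0,4,5]
  | 8 => ![3,4,5,1,2]
  | _ => ![0,2,4,1,3]

def colL12 : ℕ → Fin 5 → Fin 6
  | 0 => ![0,1,2,3,4]
  | 1 => ![2,3,0,1,5]
  | 2 => ![1,4,5,2,0]
  | 3 => ![5,0,1,3,4]
  | 4 => ![2,3,4,0,1]
  | 5 => ![4,1,2,5,3]
  | 6 => ![0,5,3,4,2]
  | 7 => ![3,2,0,1,5]
  | 8 => ![1,4,5,2,0]
  | 9 => ![5,0,1,4,3]
  | 10 => ![4,2,3,5,1]
  | 11 => ![3,5,4,0,2]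
  | _ => ![0,2,4,1,3]

def colL17 : ℕ → Fin 5 → Fin 6
  | 0 => ![0,1,2,3,4]
  | 1 => ![2,3,0,1,5]
  | 2 => ![1,4,5,2,0]
  | 3 => ![5,0,1,3,4]
  | 4 => ![2,3,4,0,1]
  | 5 => ![0,1,2,5,3]
  | 6 => ![4,5,0,1,2]
  | 7 => ![1,2,3,4,0]
  | 8 => ![3,0,1,2,5]
  | 9 => ![2,4,5,3,1]
  | 10 => ![5,1,2,0,4]
  | 11 => ![3,0,4,5,2]
  | 12 => ![4,2,1,3,0]
  | 13 => ![5,3,0,2,1]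
  | 14 => ![0,1,5,4,3]
  | 15 => ![4,2,3,1,5]
  | 16 => ![3,5,4,0,2]
  | _ => ![0,2,4,1,3]

def col7 : ℕ → Fin 5 → Fin 7 := fun j i => ⟨(j % 7 + 4 * i.val) % 7, by omega⟩

lemma colorable_seven : (toroidalGrid 5 7).square.Colorable 7 := by
  apply colorable_of_valid (by norm_num) col7
  decide

lemma colorable_small {n : ℕ} (hn : n = 6 ∨ n = 8 ∨ n = 9 ∨ n = 12 ∨ n = 17) :
    (toroidalGrid 5 n).square.Colorable 6 := by
  rcases hn with rfl | rfl | rfl | rfl | rfl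
  · exact colorable_of_valid (by norm_num) colL6 (by decide)
  · exact colorable_of_valid (by norm_num) colL8 (by decide)
  · exact colorable_of_valid (by norm_num) colL9 (by decide)
  · exact colorable_of_valid (by norm_num) colL12 (by decide)
  · exact colorable_of_valid (by norm_num) colL17 (by decide)

lemma colorable_six {n : ℕ} (hn : 5 ≤ n) (h5 : n % 5 ≠ 0) (h7 : n ≠ 7) :
    (toroidalGrid 5 n).square.Colorable 6 := by
  rcases (show n % 5 = 1 ∨ n % 5 = 2 ∨ n % 5 = 3 ∨ n % 5 = 4 by omega) with h | h | h | h
  · by_cases h6 : n = 6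
    · exact colorable_small (Or.inl h6)
    · exact seam_colorable n 6 (by norm_num) seamA hn (by omega) (by omega)
        (by decide) (by decide)
        (fun t ht => (by decide : ∀ t' < 4, validT (seamA t') (seamA (t'+1)) (seamA (t'+2))) t (by omega))
        (by decide) (by decide)
  · by_cases h12 : n = 12
    · exact colorable_small (by tauto)
    · by_cases h17 : n = 17
      · exact colorable_small (by tauto)
      · exact seam_colorable n 17 (by norm_num) seamB hn (by omega) (by omega)
          (by decide) (by decide)
          (fun t ht => (by decide : ∀ t' < 15, validT (seamB t') (seamB (t'+1)) (seamB (t'+2))) t (by omega))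
          (by decide) (by decide)
  · by_cases h8 : n = 8
    · exact colorable_small (by tauto)
    · exact seam_colorable n 8 (by norm_num) seamC hn (by omega) (by omega)
        (by decide) (by decide)
        (fun t ht => (by decide : ∀ t' < 6, validT (seamC t') (seamC (t'+1)) (seamC (t'+2))) t (by omega))
        (by decide) (by decide)
  · by_cases h9 : n = 9
    · exact colorable_small (by tauto)
    · exact seam_colorable n 9 (by norm_num) seamD hn (by omega) (by omega)
        (by decide) (by decide)
        (fun t ht => (by decide : ∀ t' < 7, validT (seamD t') (seamD (t'+1)) (seamD (t'+2))) t (by omega))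
        (by decide) (by decide)

lemma adj_two_apart {n : ℕ} (hn : 5 ≤ n) [NeZero n] (a : Fin 5) (b : Fin n) :
    (toroidalGrid 5 n).square.Adj (a, b) (a, b + 2) := by
  refine adj_col_skip hn (cyc_adj_succ hn b) ?_ (fin_add_two_ne hn b) a
  have e : b + 1 + 1 = b + 2 := by ring
  rw [← e]
  exact cyc_adj_succ hn (b + 1)

lemma step_of_not_adj {n : ℕ} (hn : 5 ≤ n) [NeZero n] {a a' : Fin 5} {b : Fin n}
    (hna : ¬ (toroidalGrid 5 n).square.Adj (a, b) (a', b + 1)) :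
    a' - a = 2 ∨ a' - a = 3 := by
  by_contra hcon
  push_neg at hcon
  have hnear : near a a' := by
    revert hcon
    have : ∀ x y : Fin 5, y - x ≠ 2 → y - x ≠ 3 → near x y := by decide
    exact fun h => this a a' h.1 h.2
  exact hna (adj_col_step hn (cyc_adj_succ hn b) hnear)

lemma clique_col {n : ℕ} (hn : 5 ≤ n) [NeZero n] :
    (toroidalGrid 5 n).square.IsNClique 5
      (Finset.univ.map ⟨fun i : Fin 5 => (i, (0 : Fin n)), fun x y e => (Prod.ext_iff.mp e).1⟩) := by
  constructor
  · rintro x hx y hy hxy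
    simp only [Finset.coe_map, Set.mem_image, Finset.coe_univ, Set.image_univ, Set.mem_range,
      Function.Embedding.coeFn_mk] at hx hy
    obtain ⟨i, rfl⟩ := hx
    obtain ⟨j, rfl⟩ := hy
    exact adj_same_col hn (fun e => hxy (by rw [e])) 0
  · simp

lemma not_colorable_four {n : ℕ} (hn : 5 ≤ n) :
    ¬ (toroidalGrid 5 n).square.Colorable 4 := by
  haveI : NeZero n := ⟨by omega⟩
  intro hc
  exact hc.cliqueFree (by omega) _ (clique_col hn)

lemma col_inj {n : ℕ} (hn : 5 ≤ n) {m : ℕ} (c : (toroidalGrid 5 n).square.Coloring (Fin m))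
    (b : Fin n) : Function.Injective fun i : Fin 5 => c (i, b) := by
  intro i i' e
  by_contra hne
  exact c.valid (adj_same_col hn hne b) e

lemma not_colorable_five {n : ℕ} (hn : 5 ≤ n) (h5 : n % 5 ≠ 0) :
    ¬ (toroidalGrid 5 n).square.Colorable 5 := by
  rintro ⟨c⟩
  haveI : NeZero n := ⟨by omega⟩
  have hsurj : ∀ b : Fin n, Function.Surjective fun i : Fin 5 => c (i, b) :=
    fun b => Finite.surjective_of_injective (col_inj hn c b)
  choose r hr using fun b => hsurj b 0
  have hr0 : ∀ b : Fin n, c (r b, b) = 0 := hr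
  have hstep : ∀ b : Fin n, r (b + 1) - r b = 2 ∨ r (b + 1) - r b = 3 := by
    intro b
    refine step_of_not_adj (b := b) hn (fun hadj => ?_)
    exact c.valid hadj ((hr0 b).trans (hr0 (b + 1)).symm)
  have hskip : ∀ b : Fin n, r (b + 2) ≠ r b := by
    intro b e
    have hadj := adj_two_apart hn (r b) b
    refine c.valid hadj ?_
    rw [hr0 b, ← e, hr0 (b + 2)]
  set d : Fin n → Fin 5 := fun b => r (b + 1) - r b with hd
  have hdd : ∀ b, d (b + 1) = d b := by
    intro b
    have key : ∀ x y : Fin 5, (x = 2 ∨ x = 3) → (y = 2 ∨ y = 3) → y + x ≠ 0 → y = x := by decide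
    have e12 : d (b + 1) = r (b + 2) - r (b + 1) := by
      show r (b + 1 + 1) - r (b + 1) = _
      rw [show b + 1 + 1 = b + 2 by ring]
    have hs2 := hstep (b + 1)
    rw [show b + 1 + 1 = b + 2 by ring, ← e12] at hs2
    refine key (d b) (d (b + 1)) (hstep b) hs2 ?_
    rw [e12]
    show r (b + 2) - r (b + 1) + (r (b + 1) - r b) ≠ 0
    rw [sub_add_sub_cancel]
    exact sub_ne_zero.mpr (hskip b)
  have hd01 : ∀ m : ℕ, d ((m : ℕ) : Fin n) = d 0 := by
    intro m
    induction m with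
    | zero => norm_num
    | succ k ih =>
      have e : (((k + 1 : ℕ)) : Fin n) = ((k : ℕ) : Fin n) + 1 := by push_cast; ring
      rw [e, hdd, ih]
  have hconst : ∀ b : Fin n, d b = d 0 := by
    intro b
    conv_lhs => rw [← Fin.cast_val_eq_self b]
    exact hd01 b.val
  have hsum : ∑ b : Fin n, d b = 0 := by
    rw [hd]
    dsimp only
    rw [Finset.sum_sub_distrib]
    rw [Fintype.sum_bijective (fun b : Fin n => b + 1) (Equiv.addRight (1 : Fin n)).bijective
      (fun b => r (b + 1)) r (fun b => rfl)]
    exact sub_self _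
  have hn5 : (n : Fin 5) * d 0 = 0 := by
    rw [← nsmul_eq_mul]
    rw [← hsum]
    rw [Finset.sum_congr rfl (fun b _ => hconst b), Finset.sum_const, Finset.card_univ,
      Fintype.card_fin]
  have hzero : (n : Fin 5) = 0 := by
    rcases hstep 0 with h | h
    · have e2 : d 0 = 2 := h
      rw [e2] at hn5
      have := congrArg (· * (3 : Fin 5)) hn5
      simpa [mul_assoc, show (2 : Fin 5) * 3 = 1 by decide] using this
    · have e2 : d 0 = 3 := h
      rw [e2] at hn5
      have := congrArg (· * (2 : Fin 5)) hn5
      simpa [mul_assoc, show (3 : Fin 5) * 2 = 1 by decide] using this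
  apply h5
  have := congrArg Fin.val hzero
  rwa [Fin.val_natCast] at this

lemma not_colorable_six : ¬ (toroidalGrid 5 7).square.Colorable 6 := by
  rintro ⟨c⟩
  have h57 : (5 : ℕ) ≤ 7 := by norm_num
  obtain ⟨k, hk⟩ := Fintype.exists_lt_card_fiber_of_mul_lt_card (f := fun v : Fin 5 × Fin 7 => c v)
    (n := 5) (by simp)
  set S := Finset.filter (fun x : Fin 5 × Fin 7 => c x = k) Finset.univ with hS
  have hk' : 5 < S.card := by
    rw [hS]
    simpa using hk
  have hmem : ∀ x : Fin 5 × Fin 7, x ∈ S → c x = k := by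
    intro x hx
    rw [hS] at hx
    simpa using hx
  have hcol : ∀ (a a' : Fin 5) (b : Fin 7), (a, b) ∈ S → (a', b) ∈ S → a = a' := by
    intro a a' b ha ha'
    by_contra hne
    exact c.valid (adj_same_col h57 hne b) ((hmem _ ha).trans (hmem _ ha').symm)
  have hinj : Set.InjOn Prod.snd (S : Set (Fin 5 × Fin 7)) := by
    rintro ⟨a, b⟩ hx ⟨a', b'⟩ hy ee
    dsimp only at ee
    subst ee
    rw [hcol a a' b (by simpa using hx) (by simpa using hy)]
  have hoc : 5 < (S.image Prod.snd).card := by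
    rw [Finset.card_image_of_injOn hinj]
    exact hk'
  obtain ⟨e, He⟩ : ∃ e : Fin 7, ∀ d' : Fin 7, d' ≠ e → d' ∈ S.image Prod.snd := by
    by_cases hall : ∀ d' : Fin 7, d' ∈ S.image Prod.snd
    · exact ⟨0, fun d' _ => hall d'⟩
    · obtain ⟨e, he⟩ := not_forall.mp hall
      refine ⟨e, fun d' hd' => ?_⟩
      by_contra hd2
      have hsub : S.image Prod.snd ⊆ (Finset.univ.erase e).erase d' := by
        intro x hx
        rw [Finset.mem_erase, Finset.mem_erase]
        exact ⟨fun ee => hd2 (ee ▸ hx), fun ee => he (ee ▸ hx), Finset.mem_univ x⟩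
      have hle := Finset.card_le_card hsub
      have he1 : (Finset.univ.erase e).card = 6 := by
        rw [Finset.card_erase_of_mem (Finset.mem_univ e)]
        simp
      have he2 : ((Finset.univ.erase e).erase d').card = 5 := by
        rw [Finset.card_erase_of_mem (Finset.mem_erase.mpr ⟨hd', Finset.mem_univ d'⟩), he1]
      omega
  have hocc : ∀ d' : Fin 7, d' ≠ e → ∃ a : Fin 5, (a, d') ∈ S := by
    intro d' hd'
    obtain ⟨x, hx, hxe⟩ := Finset.mem_image.mp (He d' hd')
    exact ⟨x.1, by rwa [← hxe, Prod.mk.eta]⟩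
  have hne0 : ∀ i : Fin 7, i ≠ 0 → e + i ≠ e := by
    intro i hi hcontra
    exact hi (add_left_cancel (hcontra.trans (add_zero e).symm))
  obtain ⟨a1, h1⟩ := hocc (e + 1) (hne0 1 (by decide))
  obtain ⟨a2, h2⟩ := hocc (e + 2) (hne0 2 (by decide))
  obtain ⟨a3, h3⟩ := hocc (e + 3) (hne0 3 (by decide))
  obtain ⟨a4, h4⟩ := hocc (e + 4) (hne0 4 (by decide))
  obtain ⟨a5, h5⟩ := hocc (e + 5) (hne0 5 (by decide))
  obtain ⟨a6, h6⟩ := hocc (e + 6) (hne0 6 (by decide))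
  have key : ∀ x y : Fin 5, (x = 2 ∨ x = 3) → (y = 2 ∨ y = 3) → y + x ≠ 0 → y = x := by decide
  have hstep : ∀ (x y : Fin 5) (b : Fin 7), (x, b) ∈ S → (y, b + 1) ∈ S →
      y - x = 2 ∨ y - x = 3 := by
    intro x y b hx hy
    refine step_of_not_adj (b := b) (by norm_num) (fun hadj => ?_)
    exact c.valid hadj ((hmem _ hx).trans (hmem _ hy).symm)
  have hskip : ∀ (x y : Fin 5) (b : Fin 7), (x, b) ∈ S → (y, b + 2) ∈ S → y ≠ x := by
    intro x y b hx hy ee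
    subst ee
    exact c.valid (adj_two_apart (by norm_num) y b) ((hmem _ hx).trans (hmem _ hy).symm)
  have hs1 := hstep a1 a2 (e + 1) h1 (by rwa [show e + 1 + 1 = e + 2 by ring])
  have hs2 := hstep a2 a3 (e + 2) h2 (by rwa [show e + 2 + 1 = e + 3 by ring])
  have hs3 := hstep a3 a4 (e + 3) h3 (by rwa [show e + 3 + 1 = e + 4 by ring])
  have hs4 := hstep a4 a5 (e + 4) h4 (by rwa [show e + 4 + 1 = e + 5 by ring])
  have hs5 := hstep a5 a6 (e + 5) h5 (by rwa [show e + 5 + 1 = e + 6 by ring])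
  have hk1 := hskip a1 a3 (e + 1) h1 (by rwa [show e + 1 + 2 = e + 3 by ring])
  have hk2 := hskip a2 a4 (e + 2) h2 (by rwa [show e + 2 + 2 = e + 4 by ring])
  have hk3 := hskip a3 a5 (e + 3) h3 (by rwa [show e + 3 + 2 = e + 5 by ring])
  have hk4 := hskip a4 a6 (e + 4) h4 (by rwa [show e + 4 + 2 = e + 6 by ring])
  have ew : e + 6 + 2 = e + 1 := by
    rw [add_assoc, show (6 + 2 : Fin 7) = 1 by decide]
  have hkw := hskip a6 a1 (e + 6) h6 (by rwa [ew])
  have e21 : a3 - a2 = a2 - a1 :=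
    key _ _ hs1 hs2 (by rw [sub_add_sub_cancel]; exact sub_ne_zero.mpr hk1)
  have e32 : a4 - a3 = a3 - a2 :=
    key _ _ hs2 hs3 (by rw [sub_add_sub_cancel]; exact sub_ne_zero.mpr hk2)
  have e43 : a5 - a4 = a4 - a3 :=
    key _ _ hs3 hs4 (by rw [sub_add_sub_cancel]; exact sub_ne_zero.mpr hk3)
  have e54 : a6 - a5 = a5 - a4 :=
    key _ _ hs4 hs5 (by rw [sub_add_sub_cancel]; exact sub_ne_zero.mpr hk4)
  have h5s : ∀ x : Fin 5, (x = 2 ∨ x = 3) → x + (x + (x + (x + x))) = 0 := by decide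
  have htel : a6 - a1 = (a6 - a5) + ((a5 - a4) + ((a4 - a3) + ((a3 - a2) + (a2 - a1)))) := by
    ring
  rw [e54, e43, e32, e21] at htel
  rw [h5s (a2 - a1) hs1] at htel
  exact hkw (sub_eq_zero.mp htel).symm

lemma chrom_eq {V : Type*} (G : SimpleGraph V) (v : ℕ) (h1 : G.Colorable v)
    (h2 : ¬ G.Colorable (v - 1)) : G.chromaticNumber = v := by
  have hle := h1.chromaticNumber_le
  refine le_antisymm hle ?_
  by_contra hlt'
  push_neg at hlt'
  have htop : G.chromaticNumber ≠ ⊤ := (lt_of_lt_of_le hlt' le_top).ne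
  have hco := SimpleGraph.colorable_chromaticNumber h1
  have hcast : (ENat.toNat G.chromaticNumber : ℕ∞) = G.chromaticNumber := ENat.coe_toNat htop
  have hlt2 : ENat.toNat G.chromaticNumber < v := by
    rw [← hcast] at hlt'
    exact_mod_cast hlt'
  exact h2 (hco.mono (by omega))

end TGAux

theorem stmt6 (n : ℕ) (hn : 5 ≤ n) :
    (toroidalGrid 5 n).square.chromaticNumber =
      if n % 5 = 0 then 5 else if n = 7 then 7 else 6 := by
  split_ifs with hA hB
  · have := TGAux.chrom_eq _ 5 (TGAux.colorable_div5 hn hA) (TGAux.not_colorable_four hn)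
    rw [this]
    norm_num
  · subst hB
    have := TGAux.chrom_eq _ 7 TGAux.colorable_seven TGAux.not_colorable_six
    rw [this]
    norm_num
  · have := TGAux.chrom_eq _ 6 (TGAux.colorable_six hn hA hB)
      (TGAux.not_colorable_five hn hA)
    rw [this]
    norm_num
end

section
/- For all integers k ≥ 1 and n ≥ 5, the chromatic number of the square of T_{5k,n} = C_{5k} □ C_n satisfies: χ(T_{5k,n}²) ≤ 5 if n ≡ 0 (mod 5); χ(T_{5k,n}²) ≤ 7 if n = 7; and χ(T_{5k,n}²) ≤ 6 otherwise. -/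
open SimpleGraph


open SimpleGraph

lemma fin_cycle_adj {m : ℕ} {u v : Fin (m+2)} (h : (cycleGraph (m+2)).Adj u v) :
    u = v + 1 ∨ v = u + 1 := by
  rw [cycleGraph_adj] at h
  rcases h with h | h
  · left; have := sub_eq_iff_eq_add.mp h; rw [this]; exact add_comm _ _
  · right; have := sub_eq_iff_eq_add.mp h; rw [this]; exact add_comm _ _

lemma val_step {m : ℕ} (v : Fin (m+2)) : (v + 1).val = (v.val + 1) % (m+2) := by
  rw [Fin.add_def, Fin.val_one]

lemma mod5_step {m a : ℕ} (hm5 : 5 ∣ m) (ha : a < m) : (a + 1) % m % 5 = (a + 1) % 5 := by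
  obtain ⟨k, rfl⟩ := hm5
  rcases Nat.lt_or_ge (a+1) (5*k) with h | h
  · rw [Nat.mod_eq_of_lt h]
  · have h1 : a + 1 = 5*k := by omega
    rw [h1]
    simp [Nat.mul_mod_right]

lemma row_step_val {m : ℕ} (hm5 : 5 ∣ (m+2)) {u v : Fin (m+2)} (h : u = v + 1) :
    u.val % 5 = (v.val + 1) % 5 := by
  subst h; rw [val_step, mod5_step hm5 v.isLt]

lemma row_step2_val {m : ℕ} (hm5 : 5 ∣ (m+2)) {u v : Fin (m+2)} (h : u = v + 1 + 1) :
    u.val % 5 = (v.val + 2) % 5 := by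
  subst h
  have h1 : (v + 1 + 1).val % 5 = ((v+1).val + 1) % 5 := row_step_val hm5 rfl
  have h2 : (v + 1).val % 5 = (v.val + 1) % 5 := row_step_val hm5 rfl
  omega

lemma col_step_val {n : ℕ} {u v : Fin (n+2)} (h : u = v + 1) : u.val = (v.val + 1) % (n+2) := by
  subst h; exact val_step v

lemma col_step2_val {n : ℕ} {u v : Fin (n+2)} (h : u = v + 1 + 1) :
    u.val = (v.val + 2) % (n+2) := by
  subst h
  rw [val_step, val_step, Nat.mod_add_mod]

lemma square_adj_cases {m n : ℕ} (hm5 : 5 ∣ m) (hm : 5 ≤ m) (hn : 5 ≤ n) {u v : Fin m × Fin n}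
    (h : (toroidalGrid m n).square.Adj u v) :
    (u.2 = v.2 ∧ (u.1.val % 5 = (v.1.val + 1) % 5 ∨ v.1.val % 5 = (u.1.val + 1) % 5 ∨
                  u.1.val % 5 = (v.1.val + 2) % 5 ∨ v.1.val % 5 = (u.1.val + 2) % 5)) ∨
    (u.1 = v.1 ∧ (u.2.val = (v.2.val + 1) % n ∨ v.2.val = (u.2.val + 1) % n ∨
                  u.2.val = (v.2.val + 2) % n ∨ v.2.val = (u.2.val + 2) % n)) ∨
    ((u.1.val % 5 = (v.1.val + 1) % 5 ∨ v.1.val % 5 = (u.1.val + 1) % 5) ∧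
     (u.2.val = (v.2.val + 1) % n ∨ v.2.val = (u.2.val + 1) % n)) := by
  obtain ⟨m, rfl⟩ : ∃ m', m = m' + 2 := ⟨m - 2, by omega⟩
  obtain ⟨n, rfl⟩ : ∃ n', n = n' + 2 := ⟨n - 2, by omega⟩
  obtain ⟨hne, hd | ⟨w, hw1, hw2⟩⟩ := h
  · rcases hd with ⟨hr, he⟩ | ⟨hc, he⟩
    · rcases fin_cycle_adj hr with h1 | h1
      · exact Or.inl ⟨he, Or.inl (row_step_val hm5 h1)⟩
      · exact Or.inl ⟨he, Or.inr (Or.inl (row_step_val hm5 h1))⟩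
    · rcases fin_cycle_adj hc with h1 | h1
      · exact Or.inr (Or.inl ⟨he, Or.inl (col_step_val h1)⟩)
      · exact Or.inr (Or.inl ⟨he, Or.inr (Or.inl (col_step_val h1))⟩)
  · rcases hw1 with ⟨hr1, he1⟩ | ⟨hc1, he1⟩ <;> rcases hw2 with ⟨hr2, he2⟩ | ⟨hc2, he2⟩
    · -- row then row
      have hee : u.2 = v.2 := he1.trans he2
      rcases fin_cycle_adj hr1 with h1 | h1 <;> rcases fin_cycle_adj hr2 with h2 | h2
      · exact Or.inl ⟨hee, Or.inr (Or.inr (Or.inl (row_step2_val hm5 (by rw [h1, h2]))))⟩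
      · exact absurd (Prod.ext (h1.trans h2.symm) hee) hne
      · exact absurd (Prod.ext (add_right_cancel (h1.symm.trans h2)) hee) hne
      · exact Or.inl ⟨hee, Or.inr (Or.inr (Or.inr (row_step2_val hm5 (by rw [h2, h1]))))⟩
    · -- row then col : Adj u.1 w.1, u.2 = w.2 ; Adj w.2 v.2, w.1 = v.1
      refine Or.inr (Or.inr ⟨?_, ?_⟩)
      · rcases fin_cycle_adj hr1 with h1 | h1
        · exact Or.inl (row_step_val hm5 (by rw [h1, he2]))
        · exact Or.inr (row_step_val hm5 (by rw [← he2, h1]))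
      · rcases fin_cycle_adj hc2 with h1 | h1
        · exact Or.inl (col_step_val (by rw [he1, h1]))
        · exact Or.inr (col_step_val (by rw [h1, he1]))
    · -- col then row : Adj u.2 w.2, u.1 = w.1 ; Adj w.1 v.1, w.2 = v.2
      refine Or.inr (Or.inr ⟨?_, ?_⟩)
      · rcases fin_cycle_adj hr2 with h1 | h1
        · exact Or.inl (row_step_val hm5 (by rw [he1, h1]))
        · exact Or.inr (row_step_val hm5 (by rw [h1, he1]))
      · rcases fin_cycle_adj hc1 with h1 | h1
        · exact Or.inl (col_step_val (by rw [h1, he2]))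
        · exact Or.inr (col_step_val (by rw [← he2, h1]))
    · -- col then col
      have hee : u.1 = v.1 := he1.trans he2
      rcases fin_cycle_adj hc1 with h1 | h1 <;> rcases fin_cycle_adj hc2 with h2 | h2
      · exact Or.inr (Or.inl ⟨hee, Or.inr (Or.inr (Or.inl (col_step2_val (by rw [h1, h2]))))⟩)
      · exact absurd (Prod.ext hee (h1.trans h2.symm)) hne
      · exact absurd (Prod.ext hee (add_right_cancel (h1.symm.trans h2))) hne
      · exact Or.inr (Or.inl ⟨hee, Or.inr (Or.inr (Or.inr (col_step2_val (by rw [h2, h1]))))⟩)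

lemma colorable_of_pattern {m n c : ℕ} (hm5 : 5 ∣ m) (hm : 5 ≤ m) (hn : 5 ≤ n)
    (F : ℕ → ℕ → ℕ) (hFc : ∀ x < 5, ∀ j < n, F x j < c)
    (A1 : ∀ x < 5, ∀ j < n, F x j ≠ F ((x+1)%5) j)
    (A2 : ∀ x < 5, ∀ j < n, F x j ≠ F ((x+2)%5) j)
    (B1 : ∀ x < 5, ∀ j < n, F x j ≠ F x ((j+1)%n))
    (B2 : ∀ x < 5, ∀ j < n, F x j ≠ F x ((j+2)%n))
    (D1 : ∀ x < 5, ∀ j < n, F x j ≠ F ((x+1)%5) ((j+1)%n))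
    (D2 : ∀ x < 5, ∀ j < n, F ((x+1)%5) j ≠ F x ((j+1)%n)) :
    (toroidalGrid m n).square.Colorable c := by
  refine ⟨Coloring.mk
    (fun p => ⟨F (p.1.val % 5) p.2.val, hFc _ (Nat.mod_lt _ (by omega)) _ p.2.isLt⟩) ?_⟩
  intro u v hadj
  simp only [ne_eq, Fin.mk.injEq]
  have hx5u : u.1.val % 5 < 5 := Nat.mod_lt _ (by omega)
  have hx5v : v.1.val % 5 < 5 := Nat.mod_lt _ (by omega)
  rcases square_adj_cases hm5 hm hn hadj with ⟨h2, hc⟩ | ⟨h1, hc⟩ | ⟨hr, hc⟩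
  · rw [h2]
    rcases hc with h | h | h | h <;> rw [h]
    · have e : (v.1.val + 1) % 5 = (v.1.val % 5 + 1) % 5 := by omega
      rw [e]; exact (A1 _ hx5v _ v.2.isLt).symm
    · have e : (u.1.val + 1) % 5 = (u.1.val % 5 + 1) % 5 := by omega
      rw [e]; exact A1 _ hx5u _ v.2.isLt
    · have e : (v.1.val + 2) % 5 = (v.1.val % 5 + 2) % 5 := by omega
      rw [e]; exact (A2 _ hx5v _ v.2.isLt).symm
    · have e : (u.1.val + 2) % 5 = (u.1.val % 5 + 2) % 5 := by omega
      rw [e]; exact A2 _ hx5u _ v.2.isLt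
  · rw [h1]
    rcases hc with h | h | h | h <;> rw [h]
    · exact (B1 _ hx5v _ v.2.isLt).symm
    · exact B1 _ hx5v _ u.2.isLt
    · exact (B2 _ hx5v _ v.2.isLt).symm
    · exact B2 _ hx5v _ u.2.isLt
  · rcases hr with h | h <;> rw [h] <;> rcases hc with h' | h' <;> rw [h']
    · -- u = v + (1,1)
      have e : (v.1.val + 1) % 5 = (v.1.val % 5 + 1) % 5 := by omega
      rw [e]; exact (D1 _ hx5v _ v.2.isLt).symm
    · -- u.1 = v.1 + 1, v.2 = u.2 + 1
      have e : (v.1.val + 1) % 5 = (v.1.val % 5 + 1) % 5 := by omega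
      rw [e]; exact D2 _ hx5v _ u.2.isLt
    · -- v.1 = u.1 + 1, u.2 = v.2 + 1
      have e : (u.1.val + 1) % 5 = (u.1.val % 5 + 1) % 5 := by omega
      rw [e]; exact (D2 _ hx5u _ v.2.isLt).symm
    · -- v = u + (1,1)
      have e : (u.1.val + 1) % 5 = (u.1.val % 5 + 1) % 5 := by omega
      rw [e]; exact D1 _ hx5u _ u.2.isLt

def gv (g : List (List ℕ)) (t x : ℕ) : ℕ := (g.getD t []).getD x 0

def patF (n : ℕ) (g : List (List ℕ)) (x j : ℕ) : ℕ :=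
  if j < n - g.length then (x + 2*j) % 5 else gv g (j - (n - g.length)) x

lemma gadget_colorable {m n : ℕ} (hm5 : 5 ∣ m) (hm : 5 ≤ m) (g : List (List ℕ))
    (hL : 4 ≤ g.length) (hn : g.length + 2 ≤ n) (hh5 : (n - g.length) % 5 = 2)
    (Hcol : ∀ t < g.length, ∀ x < 5,
      gv g t x < 6 ∧ gv g t x ≠ gv g t ((x+1)%5) ∧ gv g t x ≠ gv g t ((x+2)%5))
    (HR : ∀ t < g.length, ∀ x < 5, t+1 < g.length →
      gv g t x ≠ gv g (t+1) x ∧ gv g t x ≠ gv g (t+1) ((x+1)%5) ∧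
      gv g t ((x+1)%5) ≠ gv g (t+1) x)
    (HS : ∀ t < g.length, ∀ x < 5, t+2 < g.length → gv g t x ≠ gv g (t+2) x)
    (Hb : ∀ x < 5,
      (x+2)%5 ≠ gv g 0 x ∧ (x+2)%5 ≠ gv g 0 ((x+1)%5) ∧ (x+3)%5 ≠ gv g 0 x ∧
      x ≠ gv g 0 x ∧ (x+2)%5 ≠ gv g 1 x ∧
      gv g (g.length-1) x ≠ x ∧ gv g (g.length-1) x ≠ (x+2)%5 ∧ gv g (g.length-2) x ≠ x ∧
      gv g (g.length-1) x ≠ (x+1)%5 ∧ gv g (g.length-1) ((x+1)%5) ≠ x) :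
    (toroidalGrid m n).square.Colorable 6 := by
  apply colorable_of_pattern hm5 hm (by omega) (patF n g)
  · -- bound
    intro x hx j hj; simp only [patF]; by_cases hc : j < n - g.length
    · rw [if_pos hc]; omega
    · rw [if_neg hc]; exact (Hcol _ (by omega) _ hx).1
  · -- A1
    intro x hx j hj; simp only [patF]; by_cases hc : j < n - g.length
    · rw [if_pos hc, if_pos hc]; omega
    · rw [if_neg hc, if_neg hc]; exact (Hcol _ (by omega) _ hx).2.1
  · -- A2
    intro x hx j hj; simp only [patF]; by_cases hc : j < n - g.length
    · rw [if_pos hc, if_pos hc]; omega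
    · rw [if_neg hc, if_neg hc]; exact (Hcol _ (by omega) _ hx).2.2
  · -- B1
    intro x hx j hj; simp only [patF]
    rcases (by omega : j + 1 < n - g.length ∨ j + 1 = n - g.length ∨
        (¬ (j < n - g.length) ∧ j + 1 < n) ∨ j + 1 = n) with hk | hk | ⟨hk, hk2⟩ | hk
    · rw [Nat.mod_eq_of_lt (by omega : j+1 < n), if_pos (by omega), if_pos hk]; omega
    · rw [Nat.mod_eq_of_lt (by omega : j+1 < n), if_pos (by omega), if_neg (by omega)]
      rw [(by omega : j + 1 - (n - g.length) = 0),
        (by omega : (x + 2*j) % 5 = (x+2) % 5)]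
      exact (Hb x hx).1
    · rw [Nat.mod_eq_of_lt hk2, if_neg hk, if_neg (by omega),
        (by omega : j + 1 - (n - g.length) = (j - (n - g.length)) + 1)]
      exact (HR _ (by omega) _ hx (by omega)).1
    · rw [(by rw [hk]; exact Nat.mod_self n : (j+1) % n = 0), if_neg (by omega),
        if_pos (by omega), (by omega : j - (n - g.length) = g.length - 1)]
      rw [(by omega : (x + 2*0) % 5 = x)]
      exact (Hb x hx).2.2.2.2.2.1
  · -- B2
    intro x hx j hj; simp only [patF]
    rcases (by omega : j + 2 < n - g.length ∨ j + 2 = n - g.length ∨ j + 1 = n - g.length ∨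
        (¬ (j < n - g.length) ∧ j + 2 < n) ∨ j + 2 = n ∨ j + 1 = n)
      with hk | hk | hk | ⟨hk, hk2⟩ | hk | hk
    · rw [Nat.mod_eq_of_lt (by omega : j+2 < n), if_pos (by omega), if_pos hk]; omega
    · rw [Nat.mod_eq_of_lt (by omega : j+2 < n), if_pos (by omega), if_neg (by omega),
        (by omega : j + 2 - (n - g.length) = 0), (by omega : (x + 2*j) % 5 = x)]
      exact (Hb x hx).2.2.2.1
    · rw [Nat.mod_eq_of_lt (by omega : j+2 < n), if_pos (by omega), if_neg (by omega),
        (by omega : j + 2 - (n - g.length) = 1), (by omega : (x + 2*j) % 5 = (x+2) % 5)]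
      exact (Hb x hx).2.2.2.2.1
    · rw [Nat.mod_eq_of_lt hk2, if_neg hk, if_neg (by omega),
        (by omega : j + 2 - (n - g.length) = (j - (n - g.length)) + 2)]
      exact HS _ (by omega) _ hx (by omega)
    · rw [(by rw [hk]; exact Nat.mod_self n : (j+2) % n = 0), if_neg (by omega),
        if_pos (by omega), (by omega : j - (n - g.length) = g.length - 2),
        (by omega : (x + 2*0) % 5 = x)]
      exact (Hb x hx).2.2.2.2.2.2.2.1
    · have e1 : (j+2) % n = 1 := by
        rw [(by omega : j + 2 = n + 1), Nat.add_mod_left, Nat.mod_eq_of_lt (by omega)]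
      rw [e1, if_neg (by omega), if_pos (by omega),
        (by omega : j - (n - g.length) = g.length - 1), (by omega : (x + 2*1) % 5 = (x+2) % 5)]
      exact (Hb x hx).2.2.2.2.2.2.1
  · -- D1
    intro x hx j hj; simp only [patF]
    rcases (by omega : j + 1 < n - g.length ∨ j + 1 = n - g.length ∨
        (¬ (j < n - g.length) ∧ j + 1 < n) ∨ j + 1 = n) with hk | hk | ⟨hk, hk2⟩ | hk
    · rw [Nat.mod_eq_of_lt (by omega : j+1 < n), if_pos (by omega), if_pos hk]; omega
    · rw [Nat.mod_eq_of_lt (by omega : j+1 < n), if_pos (by omega), if_neg (by omega)]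
      rw [(by omega : j + 1 - (n - g.length) = 0), (by omega : (x + 2*j) % 5 = (x+2) % 5)]
      exact (Hb x hx).2.1
    · rw [Nat.mod_eq_of_lt hk2, if_neg hk, if_neg (by omega),
        (by omega : j + 1 - (n - g.length) = (j - (n - g.length)) + 1)]
      exact (HR _ (by omega) _ hx (by omega)).2.1
    · rw [(by rw [hk]; exact Nat.mod_self n : (j+1) % n = 0), if_neg (by omega),
        if_pos (by omega), (by omega : j - (n - g.length) = g.length - 1)]
      rw [(by omega : ((x+1)%5 + 2*0) % 5 = (x+1) % 5)]
      exact (Hb x hx).2.2.2.2.2.2.2.2.1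
  · -- D2
    intro x hx j hj; simp only [patF]
    rcases (by omega : j + 1 < n - g.length ∨ j + 1 = n - g.length ∨
        (¬ (j < n - g.length) ∧ j + 1 < n) ∨ j + 1 = n) with hk | hk | ⟨hk, hk2⟩ | hk
    · rw [Nat.mod_eq_of_lt (by omega : j+1 < n), if_pos (by omega), if_pos hk]; omega
    · rw [Nat.mod_eq_of_lt (by omega : j+1 < n), if_pos (by omega), if_neg (by omega)]
      rw [(by omega : j + 1 - (n - g.length) = 0),
        (by omega : ((x+1)%5 + 2*j) % 5 = (x+3) % 5)]
      exact (Hb x hx).2.2.1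
    · rw [Nat.mod_eq_of_lt hk2, if_neg hk, if_neg (by omega),
        (by omega : j + 1 - (n - g.length) = (j - (n - g.length)) + 1)]
      exact (HR _ (by omega) _ hx (by omega)).2.2
    · rw [(by rw [hk]; exact Nat.mod_self n : (j+1) % n = 0), if_neg (by omega),
        if_pos (by omega), (by omega : j - (n - g.length) = g.length - 1)]
      rw [(by omega : (x + 2*0) % 5 = x)]
      exact (Hb x hx).2.2.2.2.2.2.2.2.2

lemma mod1 {n j : ℕ} (hn : 5 ≤ n) (hj : j < n) :
    (j+1) % n = j+1 ∨ ((j+1) % n = 0 ∧ j+1 = n) := by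
  rcases Nat.lt_or_ge (j+1) n with h | h
  · exact Or.inl (Nat.mod_eq_of_lt h)
  · have e : j + 1 = n := by omega
    rw [e]; exact Or.inr ⟨Nat.mod_self n, rfl⟩

lemma mod2 {n j : ℕ} (hn : 5 ≤ n) (hj : j < n) :
    (j+2) % n = j+2 ∨ ((j+2) % n = 0 ∧ j+2 = n) ∨ ((j+2) % n = 1 ∧ j+2 = n+1) := by
  rcases Nat.lt_or_ge (j+2) n with h | h
  · exact Or.inl (Nat.mod_eq_of_lt h)
  · rcases Nat.lt_or_ge n (j+2) with h2 | h2
    · have e : j + 2 = n + 1 := by omega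
      rw [e, Nat.add_mod_left, Nat.mod_eq_of_lt (by omega)]
      exact Or.inr (Or.inr ⟨rfl, rfl⟩)
    · have e : j + 2 = n := by omega
      rw [e]; exact Or.inr (Or.inl ⟨Nat.mod_self n, rfl⟩)

lemma div5_colorable {m n : ℕ} (hm5 : 5 ∣ m) (hm : 5 ≤ m) (hn : 5 ≤ n) (hn5 : n % 5 = 0) :
    (toroidalGrid m n).square.Colorable 5 := by
  apply colorable_of_pattern hm5 hm hn (fun x j => (x + 2*j) % 5) <;> intro x hx j hj
  · omega
  · omega
  · omega
  · rcases mod1 hn hj with h | ⟨h1, h2⟩ <;> omega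
  · rcases mod2 hn hj with h | ⟨h1, h2⟩ | ⟨h1, h2⟩ <;> omega
  · rcases mod1 hn hj with h | ⟨h1, h2⟩ <;> omega
  · rcases mod1 hn hj with h | ⟨h1, h2⟩ <;> omega

def tab6 : List (List ℕ) :=
  [[0,1,2,3,4],[2,3,0,1,5],[1,4,5,2,0],[5,0,1,4,3],[4,2,3,5,1],[3,5,4,0,2]]

def tab7 : List (List ℕ) :=
  [[0,1,2,3,4],[2,3,4,0,1],[5,0,1,2,6],[1,6,5,3,0],[4,2,0,6,5],[6,5,3,4,1],[3,4,6,5,2]]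

def gad1 : List (List ℕ) :=
  [[4,0,1,2,3],[1,2,5,4,0],[3,4,0,1,2],[0,1,2,3,4],[2,3,5,0,1],[5,0,4,2,3],[4,2,1,5,0],
   [1,5,3,4,2],[3,4,0,1,5]]

def gad2 : List (List ℕ) :=
  [[4,5,1,2,3],[1,2,3,5,0],[5,0,4,1,2],[3,1,5,0,4],[0,4,3,2,5],[2,5,0,4,3],[4,3,2,5,1],
   [5,0,1,3,2],[1,2,5,4,0],[3,4,0,1,5]]

def gad3 : List (List ℕ) :=
  [[4,0,1,2,3],[1,2,3,5,0],[3,5,4,1,2],[4,0,2,3,5],[1,3,5,4,0],[5,4,0,1,2]]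

def gad4 : List (List ℕ) :=
  [[4,0,1,2,3],[1,2,3,4,0],[3,5,0,1,2],[0,1,4,3,5],[4,3,5,2,1],[5,2,1,4,0],[3,4,0,5,2]]

lemma table6_colorable {m : ℕ} (hm5 : 5 ∣ m) (hm : 5 ≤ m) :
    (toroidalGrid m 6).square.Colorable 6 := by
  apply colorable_of_pattern hm5 hm (by norm_num) (fun x j => gv tab6 j x) <;> decide

lemma table7_colorable {m : ℕ} (hm5 : 5 ∣ m) (hm : 5 ≤ m) :
    (toroidalGrid m 7).square.Colorable 7 := by
  apply colorable_of_pattern hm5 hm (by norm_num) (fun x j => gv tab7 j x) <;> decide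

theorem stmt7 (k n : ℕ) (hk : 1 ≤ k) (hn : 5 ≤ n) :
    (n % 5 = 0 → (toroidalGrid (5 * k) n).square.chromaticNumber ≤ 5) ∧
    (n = 7 → (toroidalGrid (5 * k) n).square.chromaticNumber ≤ 7) ∧
    (n % 5 ≠ 0 → n ≠ 7 → (toroidalGrid (5 * k) n).square.chromaticNumber ≤ 6) := by
  have hm5 : 5 ∣ 5 * k := ⟨k, rfl⟩
  have hm : 5 ≤ 5 * k := by omega
  refine ⟨fun h5 => ?_, fun h7 => ?_, fun h0 h7 => ?_⟩
  · exact_mod_cast (div5_colorable hm5 hm hn h5).chromaticNumber_le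
  · subst h7
    exact_mod_cast (table7_colorable hm5 hm).chromaticNumber_le
  · by_cases h6 : n = 6
    · subst h6
      exact_mod_cast (table6_colorable hm5 hm).chromaticNumber_le
    · have hcol : (toroidalGrid (5 * k) n).square.Colorable 6 := by
        rcases (by omega : n % 5 = 1 ∨ n % 5 = 2 ∨ n % 5 = 3 ∨ n % 5 = 4) with hr | hr | hr | hr
        · exact gadget_colorable hm5 hm gad1 (by decide) (by show 9 + 2 ≤ n; omega)
            (by show (n - 9) % 5 = 2; omega) (by decide) (by decide) (by decide) (by decide)
        · exact gadget_colorable hm5 hm gad2 (by decide) (by show 10 + 2 ≤ n; omega)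
            (by show (n - 10) % 5 = 2; omega) (by decide) (by decide) (by decide) (by decide)
        · exact gadget_colorable hm5 hm gad3 (by decide) (by show 6 + 2 ≤ n; omega)
            (by show (n - 6) % 5 = 2; omega) (by decide) (by decide) (by decide) (by decide)
        · exact gadget_colorable hm5 hm gad4 (by decide) (by show 7 + 2 ≤ n; omega)
            (by show (n - 7) % 5 = 2; omega) (by decide) (by decide) (by decide) (by decide)
      exact_mod_cast hcol.chromaticNumber_le
end

section
/- For every integer n ≥ 6, the chromatic number of the square of T_{6,n} = C_6 □ C_n equals 6. -/
open SimpleGraph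

namespace Stmt8Aux

def corr (r a : ℕ) : ℕ :=
  if r = 1 then (if a = 0 then 0 else if a = 1 then 1 else if a = 2 then 3 else 4)
  else if r = 2 then (if a = 0 then 0 else if a = 1 then 1 else if a = 2 then 1 else 2)
  else 0

def FF (r a : ℕ) : ℕ := 2 * a + corr r a

lemma keyStep {N : ℕ} (hN : 6 ≤ N) (a e e' : ℕ) (ha : a < N) (he : e < 6) (he' : e' < 6)
    (hrow : e = e' ∨ (e + 1) % 6 = e' ∨ (e' + 1) % 6 = e) :
    (e + FF (N % 3) ((a+1) % N)) % 6 ≠ (e' + FF (N % 3) a) % 6 := by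
  rcases Nat.lt_or_ge (a+1) N with h1 | h1
  · rw [Nat.mod_eq_of_lt h1]; simp only [FF, corr]
    rcases hrow with h | h | h <;> split_ifs <;> (try contradiction) <;> omega
  · have h2 : a + 1 = N := by omega
    rw [h2, Nat.mod_self]; simp only [FF, corr]
    rcases hrow with h | h | h <;> split_ifs <;> (try contradiction) <;> omega

lemma keyStep2 {N : ℕ} (hN : 6 ≤ N) (a : ℕ) (ha : a < N) :
    FF (N % 3) ((a+2) % N) % 6 ≠ FF (N % 3) a % 6 := by
  rcases Nat.lt_or_ge (a+2) N with h1 | h1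
  · rw [Nat.mod_eq_of_lt h1]; simp only [FF, corr]
    split_ifs <;> (try contradiction) <;> omega
  · rcases Nat.lt_or_ge a (N-1) with h2 | h2
    · have h3 : a + 2 = N := by omega
      rw [h3, Nat.mod_self]; simp only [FF, corr]
      split_ifs <;> (try contradiction) <;> omega
    · have h3 : a + 2 = N + 1 := by omega
      have h4 : (a + 2) % N = 1 := by rw [h3, Nat.add_mod_left, Nat.mod_eq_of_lt (by omega)]
      rw [h4]; simp only [FF, corr]
      split_ifs <;> (try contradiction) <;> omega

lemma square_adj {V : Type*} {G : SimpleGraph V} {u v : V} :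
    G.square.Adj u v ↔ u ≠ v ∧ (G.Adj u v ∨ ∃ w, G.Adj u w ∧ G.Adj w v) := Iff.rfl

lemma torus_adj {m : ℕ} {u v : Fin 6 × Fin (m+6)} :
    (toroidalGrid 6 (m+6)).Adj u v ↔
      (cycleGraph 6).Adj u.1 v.1 ∧ u.2 = v.2 ∨ (cycleGraph (m+6)).Adj u.2 v.2 ∧ u.1 = v.1 :=
  Iff.rfl

lemma row_adj {i i' : Fin 6} (h : (cycleGraph 6).Adj i i') :
    (i.val + 1) % 6 = i'.val ∨ (i'.val + 1) % 6 = i.val := by revert i i' h; decide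

lemma col_adj {m : ℕ} {j j' : Fin (m+6)} (h : (cycleGraph (m+6)).Adj j j') :
    j' = j + 1 ∨ j = j' + 1 := by
  rw [cycleGraph_adj] at h
  rcases h with h | h
  · right; rw [← h]; abel
  · left; rw [← h]; abel

lemma val_add_one {m : ℕ} (j : Fin (m+6)) : (j + 1).val = (j.val + 1) % (m+6) := by
  rw [Fin.add_def, Fin.val_one]

lemma fin_ne_of_add_one {m : ℕ} (j : Fin (m+6)) : j + 1 ≠ j := by
  intro h
  have h1 : (1 : Fin (m+6)) = 0 := by
    have := add_left_cancel (a := j) (b := 1) (c := 0) (by simp [h])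
    simpa using this
  have : ((1 : Fin (m+6)) : ℕ) = 0 := by rw [h1]; rfl
  simp at this

/-- diagonal case: rows adjacent, columns adjacent -/
lemma diag_case {m : ℕ} {i i' : Fin 6} {j j' : Fin (m+6)}
    (hrow : (cycleGraph 6).Adj i i') (hcol : (cycleGraph (m+6)).Adj j j') :
    (i.val + FF ((m+6) % 3) j.val) % 6 ≠ (i'.val + FF ((m+6) % 3) j'.val) % 6 := by
  have hr := row_adj hrow
  have hi6 := i.isLt; have hi'6 := i'.isLt
  rcases col_adj hcol with rfl | h
  · have := keyStep (N := m+6) (by omega) j.val i'.val i.val j.isLt (by omega) (by omega)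
      (Or.elim hr (fun h => Or.inr (Or.inr h)) (fun h => Or.inr (Or.inl h)))
    rw [val_add_one]
    intro hx; exact this (by omega)
  · subst h
    have := keyStep (N := m+6) (by omega) j'.val i.val i'.val j'.isLt (by omega) (by omega)
      (Or.elim hr (fun h => Or.inr (Or.inl h)) (fun h => Or.inr (Or.inr h)))
    rw [val_add_one]
    exact this

/-- same row, columns adjacent -/
lemma colstep_case {m : ℕ} (e : ℕ) (he : e < 6) {j j' : Fin (m+6)}
    (hcol : (cycleGraph (m+6)).Adj j j') :
    (e + FF ((m+6) % 3) j.val) % 6 ≠ (e + FF ((m+6) % 3) j'.val) % 6 := by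
  rcases col_adj hcol with rfl | h
  · have := keyStep (N := m+6) (by omega) j.val e e j.isLt he he (Or.inl rfl)
    rw [val_add_one]
    intro hx; exact this (by omega)
  · subst h
    have := keyStep (N := m+6) (by omega) j'.val e e j'.isLt he he (Or.inl rfl)
    rw [val_add_one]
    exact this

/-- same row, columns at distance two -/
lemma coldist2_case {m : ℕ} (e : ℕ) {j j' w : Fin (m+6)} (hne : j ≠ j')
    (h1 : (cycleGraph (m+6)).Adj j w) (h2 : (cycleGraph (m+6)).Adj w j') :
    (e + FF ((m+6) % 3) j.val) % 6 ≠ (e + FF ((m+6) % 3) j'.val) % 6 := by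
  rcases col_adj h1 with rfl | hA <;> rcases col_adj h2 with hB | hB
  · -- j' = (j+1)+1
    subst hB
    have := keyStep2 (N := m+6) (by omega) j.val j.isLt
    rw [val_add_one, val_add_one, Nat.mod_add_mod]
    have h112 : j.val + 1 + 1 = j.val + 2 := rfl
    rw [h112]
    intro hx; exact this (by omega)
  · -- j + 1 = j' + 1 → j = j'
    exact absurd (add_right_cancel hB) hne
  · -- j = w + 1, j' = w + 1
    exact absurd (hA.trans hB.symm) hne
  · -- j = w + 1, w = j' + 1
    subst hA; subst hB
    have := keyStep2 (N := m+6) (by omega) j'.val j'.isLt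
    rw [val_add_one, val_add_one, Nat.mod_add_mod]
    have h112 : j'.val + 1 + 1 = j'.val + 2 := rfl
    rw [h112]
    intro hx; exact this (by omega)

lemma colorable_six (m : ℕ) : (toroidalGrid 6 (m+6)).square.Colorable 6 := by
  have C : (toroidalGrid 6 (m+6)).square.Coloring (ZMod 6) := by
    apply Coloring.mk (fun p => ((p.1.val + FF ((m+6) % 3) p.2.val : ℕ) : ZMod 6))
    rintro ⟨i, j⟩ ⟨i', j'⟩ hadj
    rw [square_adj] at hadj
    obtain ⟨hne, hc⟩ := hadj
    rw [Ne, ZMod.natCast_eq_natCast_iff, Nat.ModEq]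
    dsimp only at hne hc ⊢
    have hi6 := i.isLt; have hi'6 := i'.isLt
    rcases hc with hdir | ⟨⟨wi, wj⟩, hw1, hw2⟩
    · rw [torus_adj] at hdir
      dsimp only at hdir
      rcases hdir with ⟨hr, hcol⟩ | ⟨hcol, hr⟩
      · obtain rfl : j = j' := hcol
        have hii : i ≠ i' := fun h => hne (by rw [h])
        have : i.val ≠ i'.val := Fin.val_injective.ne hii
        omega
      · obtain rfl : i = i' := hr
        exact colstep_case i.val (by omega) hcol
    · rw [torus_adj] at hw1 hw2
      dsimp only at hw1 hw2
      rcases hw1 with ⟨h1r, h1c⟩ | ⟨h1c, h1r⟩ <;> rcases hw2 with ⟨h2r, h2c⟩ | ⟨h2c, h2r⟩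
      · -- both row steps
        obtain rfl : j = j' := h1c.trans h2c
        have hii : i ≠ i' := fun h => hne (by rw [h])
        have : i.val ≠ i'.val := Fin.val_injective.ne hii
        omega
      · -- row step then col step
        have hrow2 : (cycleGraph 6).Adj i i' := by rw [← h2r]; exact h1r
        have hcol2 : (cycleGraph (m+6)).Adj j j' := by rw [h1c]; exact h2c
        exact diag_case hrow2 hcol2
      · -- col step then row step
        have hrow2 : (cycleGraph 6).Adj i i' := by rw [h1r]; exact h2r
        have hcol2 : (cycleGraph (m+6)).Adj j j' := by rw [← h2c]; exact h1c
        exact diag_case hrow2 hcol2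
      · -- both col steps
        obtain rfl : i = i' := h1r.trans h2r
        have hjj' : j ≠ j' := fun h => hne (by rw [h])
        exact coldist2_case i.val hjj' h1c h2c
  have := C.colorable
  simpa using this


-- lower bound part (appended to t8 context for testing)

lemma col_adj_succ {m : ℕ} (j : Fin (m+6)) : (cycleGraph (m+6)).Adj j (j+1) := by
  rw [cycleGraph_adj]; right; exact add_sub_cancel_left j 1

lemma R1 : ∀ i i' : Fin 6, i ≠ i' → i' ≠ i + 3 →
    ((cycleGraph 6).Adj i i' ∨ ∃ w, (cycleGraph 6).Adj i w ∧ (cycleGraph 6).Adj w i') := by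
  decide

lemma R2 : ∀ i r : Fin 6, (r = i ∨ (cycleGraph 6).Adj r i) ∨
    (r = i + 3 ∨ (cycleGraph 6).Adj r (i + 3)) := by decide

lemma R3 : ∀ i i' : Fin 6, i' = i + 3 → i.val < 3 → 3 ≤ i'.val := by decide

lemma R4 : ∀ i i' : Fin 6, i' = i + 3 → 3 ≤ i.val → 3 ≤ i'.val → False := by decide

section Lower

variable {m : ℕ} {S : Finset (Fin 6 × Fin (m+6))}
  (hS : ∀ a ∈ S, ∀ b ∈ S, a ≠ b → ¬ (toroidalGrid 6 (m+6)).square.Adj a b)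

include hS

lemma same_col {i i' : Fin 6} {j : Fin (m+6)} (ha : (i,j) ∈ S) (hb : (i',j) ∈ S)
    (hne : i ≠ i') : i' = i + 3 := by
  by_contra hni
  have hpairne : (i,j) ≠ (i',j) := fun h => hne (congrArg Prod.fst h)
  apply hS _ ha _ hb hpairne
  rw [square_adj]
  refine ⟨hpairne, ?_⟩
  rcases R1 i i' hne hni with h | ⟨w, h1, h2⟩
  · exact Or.inl (torus_adj.mpr (Or.inl ⟨h, rfl⟩))
  · exact Or.inr ⟨(w, j), torus_adj.mpr (Or.inl ⟨h1, rfl⟩), torus_adj.mpr (Or.inl ⟨h2, rfl⟩)⟩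

lemma col_pair_blocks {i : Fin 6} {j : Fin (m+6)} (h1 : (i,j) ∈ S) (h2 : (i+3,j) ∈ S)
    (r : Fin 6) : (r, j+1) ∉ S := by
  intro hr
  have hadjcol : (cycleGraph (m+6)).Adj (j+1) j := (col_adj_succ j).symm
  have hsne : ∀ x : Fin 6, (r, j+1) ≠ (x, j) := fun x h => fin_ne_of_add_one j (congrArg Prod.snd h)
  rcases R2 i r with (heq | hadj) | (heq | hadj)
  · exact hS _ hr _ h1 (hsne i) (square_adj.mpr ⟨hsne i, Or.inl (torus_adj.mpr (Or.inr ⟨hadjcol, heq⟩))⟩)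
  · exact hS _ hr _ h1 (hsne i) (square_adj.mpr ⟨hsne i, Or.inr ⟨(i, j+1),
      torus_adj.mpr (Or.inl ⟨hadj, rfl⟩), torus_adj.mpr (Or.inr ⟨hadjcol, rfl⟩)⟩⟩)
  · exact hS _ hr _ h2 (hsne _) (square_adj.mpr ⟨hsne _, Or.inl (torus_adj.mpr (Or.inr ⟨hadjcol, heq⟩))⟩)
  · exact hS _ hr _ h2 (hsne _) (square_adj.mpr ⟨hsne _, Or.inr ⟨(i+3, j+1),
      torus_adj.mpr (Or.inl ⟨hadj, rfl⟩), torus_adj.mpr (Or.inr ⟨hadjcol, rfl⟩)⟩⟩)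

lemma indep_card_le : S.card ≤ m + 6 := by
  classical
  have hinj : Set.InjOn
      (fun p : Fin 6 × Fin (m+6) => if 3 ≤ p.1.val ∧ (p.1 + 3, p.2) ∈ S then p.2 + 1 else p.2)
      ↑S := by
    rintro ⟨i, j⟩ hp ⟨i', j'⟩ hq hfq
    simp only [Finset.mem_coe] at hp hq
    dsimp only at hfq
    split_ifs at hfq with h1 h2 h2
    · -- both pairs, j + 1 = j' + 1
      obtain rfl : j = j' := add_right_cancel hfq
      by_cases hii : i = i'
      · rw [hii]
      · exact absurd (R4 i i' (same_col hS hp hq hii) h1.1 h2.1) not_false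
    · -- h1 true, h2 false : j + 1 = j'
      exfalso
      have hblock := col_pair_blocks hS hp h1.2 i'
      rw [hfq] at hblock
      exact hblock hq
    · -- h1 false, h2 true : j = j' + 1
      exfalso
      have hblock := col_pair_blocks hS hq h2.2 i
      rw [← hfq] at hblock
      exact hblock hp
    · -- both false : j = j'
      obtain rfl : j = j' := hfq
      by_cases hii : i = i'
      · rw [hii]
      · exfalso
        have e1 : i' = i + 3 := same_col hS hp hq hii
        have e2 : i = i' + 3 := same_col hS hq hp (Ne.symm hii)
        have m1 : (i + 3, j) ∈ S := by rw [← e1]; exact hq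
        have m2 : (i' + 3, j) ∈ S := by rw [← e2]; exact hp
        have hi1 : i.val < 3 := by
          by_contra hcon
          exact h1 ⟨by omega, m1⟩
        have hi2 : i'.val < 3 := by
          by_contra hcon
          exact h2 ⟨by omega, m2⟩
        have := R3 i i' e1 hi1
        omega
  have h := Finset.card_le_card_of_injOn (s := S) (t := (Finset.univ : Finset (Fin (m+6))))
    (fun p : Fin 6 × Fin (m+6) => if 3 ≤ p.1.val ∧ (p.1 + 3, p.2) ∈ S then p.2 + 1 else p.2)
    (fun a _ => Finset.mem_univ _) hinj
  simpa using h

end Lower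

lemma not_col5 (m : ℕ) : ¬ (toroidalGrid 6 (m+6)).square.Colorable 5 := by
  rintro ⟨C⟩
  classical
  have key := Finset.card_eq_sum_card_fiberwise
    (s := (Finset.univ : Finset (Fin 6 × Fin (m+6)))) (t := (Finset.univ : Finset (Fin 5)))
    (f := fun v => C v) (fun x _ => Finset.mem_univ _)
  have hbound : ∀ c : Fin 5, (Finset.univ.filter (fun v => C v = c)).card ≤ m + 6 := by
    intro c
    apply indep_card_le
    intro a ha b hb hne hadj
    rw [Finset.mem_filter] at ha hb
    exact C.valid hadj (ha.2.trans hb.2.symm)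
  have hsum : ∑ c : Fin 5, (Finset.univ.filter (fun v => C v = c)).card ≤ 5 * (m+6) :=
    le_trans (Finset.sum_le_sum (fun c _ => hbound c)) (by simp [Finset.sum_const, mul_comm])
  have hcard : (Finset.univ : Finset (Fin 6 × Fin (m+6))).card = 6 * (m+6) := by simp
  rw [hcard] at key
  have hfin : 6 * (m+6) ≤ 5 * (m+6) := key.trans_le hsum
  omega

end Stmt8Aux

theorem stmt8 (n : ℕ) (hn : 6 ≤ n) :
    (toroidalGrid 6 n).square.chromaticNumber = 6 := by
  obtain ⟨m, rfl⟩ : ∃ m, n = m + 6 := ⟨n - 6, by omega⟩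
  have hub := (Stmt8Aux.colorable_six m).chromaticNumber_le
  refine le_antisymm (by exact_mod_cast hub) ?_
  by_contra hlt
  push_neg at hlt
  have h5 : (toroidalGrid 6 (m+6)).square.chromaticNumber ≤ (5 : ℕ) := by
    have h6 : ((6 : ℕ∞)) = (5 : ℕ) + 1 := by norm_num
    exact Order.le_of_lt_add_one (h6 ▸ hlt)
  exact Stmt8Aux.not_col5 m (SimpleGraph.chromaticNumber_le_iff_colorable.mp h5)
end
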